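/- arXiv:2509.05418 — 11 statements merged into one kernel-verified Lean document; each statement's English description precedes it below -/
import Mathlib

section
/- Decay of the residual operator under a mixed logarithmic source condition (Theorem 3.1, abstract semigroup form): There exists a constant C' > 0, depending only on p, p₁, ν, λ, ω, C and E, such that for every w ∈ X the Bochner integral v = (1/(ν−1)!) ∫₀^∞ q^{ν−1} e^{−λq} T_q w dq converges in X, and with u = T_p v one has ‖S_α u‖ ≤ C' ‖w‖ α^p (log(1/α))^{−ν} for all 0 < α < 1. -/
open MeasureTheory

lemma aux_integrable (n : ℕ) {b : ℝ} (hb : 0 < b) :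
    IntegrableOn (fun q : ℝ => q ^ n * Real.exp (-b * q)) (Set.Ioi 0) := by
  have h := integrableOn_rpow_mul_exp_neg_mul_rpow
    (s := (n:ℝ)) (p := 1) (b := b)
    (neg_one_lt_zero.trans_le (Nat.cast_nonneg n)) one_pos hb
  simpa [Real.rpow_natCast, Real.rpow_one] using h

lemma aux_integral (n : ℕ) {b : ℝ} (hb : 0 < b) :
    ∫ q in Set.Ioi (0:ℝ), q ^ n * Real.exp (-b * q)
      = (Nat.factorial n : ℝ) / b ^ (n + 1) := by
  have h := Real.integral_rpow_mul_exp_neg_mul_Ioi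
    (a := (n:ℝ) + 1) (r := b) (by positivity) hb
  rw [show ((n:ℝ) + 1 - 1) = (n:ℝ) by ring] at h
  simp only [Real.rpow_natCast, neg_mul] at h ⊢
  calc ∫ q in Set.Ioi (0:ℝ), q ^ n * Real.exp (-(b * q))
      = (1 / b) ^ ((n:ℝ) + 1) * Real.Gamma ((n:ℝ) + 1) := h
    _ = (Nat.factorial n : ℝ) / b ^ (n + 1) := by
        rw [Real.Gamma_nat_eq_factorial,
          show ((n:ℝ) + 1) = ((n + 1 : ℕ) : ℝ) by push_cast; ring,
          Real.rpow_natCast]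
        rw [div_pow, one_pow]
        ring

lemma aux_pow_le (n : ℕ) {x : ℝ} (hx : 0 ≤ x) :
    x ^ n ≤ (Nat.factorial n : ℝ) * Real.exp x := by
  have h := Real.pow_div_factorial_le_exp x hx n
  have hf : (0:ℝ) < (Nat.factorial n : ℝ) := by positivity
  calc x ^ n = x ^ n / (Nat.factorial n) * (Nat.factorial n) := by field_simp
    _ ≤ Real.exp x * (Nat.factorial n) := mul_le_mul_of_nonneg_right h hf.le
    _ = (Nat.factorial n : ℝ) * Real.exp x := by ring

/-- Decay of the residual operator under a mixed logarithmic source condition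
(Theorem 3.1, abstract semigroup form). -/
theorem stmt0 (p p₁ : ℝ) (ν : ℕ) (lam ω C E : ℝ)
    (hp : 0 ≤ p) (hpp : p < p₁) (hν : 1 ≤ ν) (hC : 0 < C) (hE : 0 < E)
    (hlam : ω < lam) :
    ∃ C' > (0:ℝ),
      ∀ (X : Type) [NormedAddCommGroup X] [NormedSpace ℝ X] [CompleteSpace X],
      ∀ (T : ℝ → X →L[ℝ] X) (S : ℝ → X →L[ℝ] X),
      T 0 = 1 →
      (∀ q ≥ (0:ℝ), ∀ q' ≥ (0:ℝ), T (q + q') = (T q).comp (T q')) →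
      (∀ w : X, ContinuousOn (fun q => T q w) (Set.Ici 0)) →
      (∀ q ≥ (0:ℝ), ‖T q‖ ≤ C * Real.exp (ω * q)) →
      (∀ α > (0:ℝ), ∀ q : ℝ, 0 ≤ q → q ≤ p₁ → ‖(S α).comp (T q)‖ ≤ E * α ^ q) →
      ∀ w : X,
        IntegrableOn (fun q : ℝ => (q ^ (ν - 1) * Real.exp (-lam * q)) • T q w)
          (Set.Ioi 0) ∧
        ∀ α ∈ Set.Ioo (0:ℝ) 1,
          ‖S α (T p (((Nat.factorial (ν - 1) : ℝ))⁻¹ •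
              ∫ q in Set.Ioi (0:ℝ), (q ^ (ν - 1) * Real.exp (-lam * q)) • T q w))‖
            ≤ C' * ‖w‖ * α ^ p / (Real.log (1 / α)) ^ ν := by
  obtain ⟨n, hn⟩ : ∃ n : ℕ, n = ν - 1 := ⟨_, rfl⟩
  have hν' : n + 1 = ν := by rw [hn]; exact Nat.succ_pred_eq_of_pos hν
  obtain ⟨δ, hδdef⟩ : ∃ x : ℝ, x = p₁ - p := ⟨_, rfl⟩
  have hδ : 0 < δ := by rw [hδdef]; linarith
  have hp₁ : 0 ≤ p₁ := le_of_lt (lt_of_le_of_lt hp hpp)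
  have hlo : 0 < lam - ω := by linarith
  refine ⟨E * Real.exp (|lam| * δ)
      + E * C * Real.exp (|ω| * δ) * (Nat.factorial ν) / (δ ^ ν * (lam - ω) ^ ν),
    by positivity, ?_⟩
  intro X _ _ _ T S hT0 hsemi hcont hTnorm hS w
  rw [← hn]
  obtain ⟨f, hf⟩ : ∃ f : ℝ → X,
      f = fun q : ℝ => (q ^ n * Real.exp (-lam * q)) • T q w := ⟨_, rfl⟩
  rw [show (fun q : ℝ => (q ^ n * Real.exp (-lam * q)) • T q w) = f from hf.symm]
  have haesm : AEStronglyMeasurable f (volume.restrict (Set.Ioi 0)) := by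
    rw [hf]
    refine ContinuousOn.aestronglyMeasurable ?_ measurableSet_Ioi
    exact (((continuous_pow n).mul (Real.continuous_exp.comp
      (continuous_const.mul continuous_id))).continuousOn).smul
      ((hcont w).mono Set.Ioi_subset_Ici_self)
  have hbound : ∀ q ∈ Set.Ioi (0:ℝ),
      ‖f q‖ ≤ (C * ‖w‖) * (q ^ n * Real.exp (-(lam - ω) * q)) := by
    intro q hq
    have hq0 : (0:ℝ) ≤ q := le_of_lt hq
    rw [hf]
    rw [norm_smul, Real.norm_eq_abs, abs_of_nonneg (by positivity)]
    have h1 : ‖T q w‖ ≤ C * Real.exp (ω * q) * ‖w‖ :=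
      ((T q).le_opNorm w).trans (mul_le_mul_of_nonneg_right (hTnorm q hq0) (norm_nonneg w))
    have hexp : Real.exp (-lam * q) * Real.exp (ω * q) = Real.exp (-(lam - ω) * q) := by
      rw [← Real.exp_add]; congr 1; ring
    calc q ^ n * Real.exp (-lam * q) * ‖T q w‖
        ≤ q ^ n * Real.exp (-lam * q) * (C * Real.exp (ω * q) * ‖w‖) :=
          mul_le_mul_of_nonneg_left h1 (by positivity)
      _ = (C * ‖w‖) * (q ^ n * (Real.exp (-lam * q) * Real.exp (ω * q))) := by ring
      _ = (C * ‖w‖) * (q ^ n * Real.exp (-(lam - ω) * q)) := by rw [hexp]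
  have hInt : IntegrableOn f (Set.Ioi 0) :=
    Integrable.mono' ((aux_integrable n hlo).const_mul (C * ‖w‖)) haesm
      ((ae_restrict_iff' measurableSet_Ioi).2 (ae_of_all _ hbound))
  refine ⟨hInt, ?_⟩
  intro α hα
  obtain ⟨hα0, hα1⟩ := hα
  obtain ⟨L, hLdef⟩ : ∃ x : ℝ, x = Real.log (1 / α) := ⟨_, rfl⟩
  rw [← hLdef]
  have hL : 0 < L := by
    rw [hLdef]
    exact Real.log_pos (by rw [lt_div_iff₀ hα0]; linarith)
  have hrp : ∀ x : ℝ, α ^ x = Real.exp (-L * x) := by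
    intro x
    rw [Real.rpow_def_of_pos hα0, hLdef, one_div, Real.log_inv]
    congr 1; ring
  obtain ⟨A, hA⟩ : ∃ x : ℝ, x = E * Real.exp (|lam| * δ) * α ^ p := ⟨_, rfl⟩
  obtain ⟨B, hB⟩ : ∃ x : ℝ, x = E * C * Real.exp (|ω| * δ) * α ^ (p + δ) := ⟨_, rfl⟩
  have hαp : (0:ℝ) < α ^ p := Real.rpow_pos_of_pos hα0 p
  have hαpδ : (0:ℝ) < α ^ (p + δ) := Real.rpow_pos_of_pos hα0 _
  have hA0 : 0 < A := by rw [hA]; positivity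
  have hB0 : 0 < B := by rw [hB]; positivity
  -- key operator bound
  have key : ∀ q : ℝ, 0 < q →
      Real.exp (-lam * q) * ‖(S α).comp (T (p + q))‖
        ≤ A * Real.exp (-L * q) + B * Real.exp (-(lam - ω) * q) := by
    intro q hq
    have hq0 : (0:ℝ) ≤ q := hq.le
    rcases le_or_gt q δ with hqδ | hqδ
    · have h1 : ‖(S α).comp (T (p + q))‖ ≤ E * α ^ (p + q) :=
        hS α hα0 (p + q) (by linarith) (by linarith)
      have h2 : Real.exp (-lam * q) ≤ Real.exp (|lam| * δ) := by
        apply Real.exp_le_exp.2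
        calc -lam * q ≤ |lam| * q := mul_le_mul_of_nonneg_right (neg_le_abs lam) hq0
          _ ≤ |lam| * δ := mul_le_mul_of_nonneg_left hqδ (abs_nonneg lam)
      calc Real.exp (-lam * q) * ‖(S α).comp (T (p + q))‖
          ≤ Real.exp (|lam| * δ) * (E * α ^ (p + q)) :=
            mul_le_mul h2 h1 (norm_nonneg _) (Real.exp_pos _).le
        _ = A * Real.exp (-L * q) := by
            rw [Real.rpow_add hα0, hrp q, hA]; ring
        _ ≤ A * Real.exp (-L * q) + B * Real.exp (-(lam - ω) * q) :=
            le_add_of_nonneg_right (by positivity)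
    · have hsplit : p + q = p₁ + (q - δ) := by rw [hδdef]; ring
      have hcompT : T (p + q) = (T p₁).comp (T (q - δ)) := by
        rw [hsplit]; exact hsemi p₁ hp₁ (q - δ) (by linarith)
      have h1 : ‖(S α).comp (T (p + q))‖
          ≤ (E * α ^ p₁) * (C * Real.exp (ω * (q - δ))) := by
        rw [hcompT, ← ContinuousLinearMap.comp_assoc]
        calc ‖((S α).comp (T p₁)).comp (T (q - δ))‖
            ≤ ‖(S α).comp (T p₁)‖ * ‖T (q - δ)‖ := ContinuousLinearMap.opNorm_comp_le _ _
          _ ≤ (E * α ^ p₁) * (C * Real.exp (ω * (q - δ))) :=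
              mul_le_mul (hS α hα0 p₁ hp₁ le_rfl) (hTnorm (q - δ) (by linarith))
                (norm_nonneg _) (by positivity)
      have h2 : Real.exp (-ω * δ) ≤ Real.exp (|ω| * δ) :=
        Real.exp_le_exp.2 (mul_le_mul_of_nonneg_right (neg_le_abs ω) hδ.le)
      have hp₁pδ : α ^ p₁ = α ^ (p + δ) := by rw [show p₁ = p + δ by rw [hδdef]; ring]
      have hexp : Real.exp (-lam * q) * Real.exp (ω * (q - δ))
          = Real.exp (-ω * δ) * Real.exp (-(lam - ω) * q) := by
        rw [← Real.exp_add, ← Real.exp_add]; congr 1; ring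
      calc Real.exp (-lam * q) * ‖(S α).comp (T (p + q))‖
          ≤ Real.exp (-lam * q) * ((E * α ^ p₁) * (C * Real.exp (ω * (q - δ)))) :=
            mul_le_mul_of_nonneg_left h1 (Real.exp_pos _).le
        _ = (E * C * α ^ (p + δ)) * (Real.exp (-lam * q) * Real.exp (ω * (q - δ))) := by
            rw [hp₁pδ]; ring
        _ = (E * C * α ^ (p + δ)) * (Real.exp (-ω * δ) * Real.exp (-(lam - ω) * q)) := by
            rw [hexp]
        _ ≤ (E * C * α ^ (p + δ)) * (Real.exp (|ω| * δ) * Real.exp (-(lam - ω) * q)) :=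
            mul_le_mul_of_nonneg_left
              (mul_le_mul_of_nonneg_right h2 (Real.exp_pos _).le) (by positivity)
        _ = B * Real.exp (-(lam - ω) * q) := by rw [hB]; ring
        _ ≤ A * Real.exp (-L * q) + B * Real.exp (-(lam - ω) * q) :=
            le_add_of_nonneg_left (by positivity)
  -- the dominating function
  obtain ⟨g, hg⟩ : ∃ g : ℝ → ℝ, g = fun q => ‖w‖ * (A * (q ^ n * Real.exp (-L * q))
      + B * (q ^ n * Real.exp (-(lam - ω) * q))) := ⟨_, rfl⟩
  have hg1 : IntegrableOn (fun q : ℝ => A * (q ^ n * Real.exp (-L * q))) (Set.Ioi 0) :=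
    (aux_integrable n hL).const_mul A
  have hg2 : IntegrableOn
      (fun q : ℝ => B * (q ^ n * Real.exp (-(lam - ω) * q))) (Set.Ioi 0) :=
    (aux_integrable n hlo).const_mul B
  have hgInt : IntegrableOn g (Set.Ioi 0) := by
    rw [hg]; exact (hg1.add hg2).const_mul ‖w‖
  -- pointwise bound on the composed integrand
  have hGbound : ∀ q ∈ Set.Ioi (0:ℝ), ‖((S α).comp (T p)) (f q)‖ ≤ g q := by
    intro q hq
    have hq0 : (0:ℝ) ≤ q := (le_of_lt hq)
    have hTpq : T p ((T q) w) = (T (p + q)) w := by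
      rw [hsemi p hp q hq0]; rfl
    have heq : ((S α).comp (T p)) (f q)
        = (q ^ n * Real.exp (-lam * q)) • ((S α).comp (T (p + q))) w := by
      rw [hf]
      simp only [ContinuousLinearMap.comp_apply, _root_.map_smul, hTpq]
    rw [heq, norm_smul, Real.norm_eq_abs, abs_of_nonneg (by positivity)]
    have hkey := key q hq
    have hqn : (0:ℝ) ≤ q ^ n := by positivity
    calc q ^ n * Real.exp (-lam * q) * ‖((S α).comp (T (p + q))) w‖
        ≤ q ^ n * Real.exp (-lam * q) * (‖(S α).comp (T (p + q))‖ * ‖w‖) :=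
          mul_le_mul_of_nonneg_left (ContinuousLinearMap.le_opNorm _ w) (by positivity)
      _ = q ^ n * (Real.exp (-lam * q) * ‖(S α).comp (T (p + q))‖) * ‖w‖ := by ring
      _ ≤ q ^ n * (A * Real.exp (-L * q) + B * Real.exp (-(lam - ω) * q)) * ‖w‖ :=
          mul_le_mul_of_nonneg_right
            (mul_le_mul_of_nonneg_left hkey hqn) (norm_nonneg w)
      _ = g q := by rw [hg]; ring
  -- commute the operator with the integral
  have hcomm : S α (T p ((((Nat.factorial n : ℝ))⁻¹) • ∫ q in Set.Ioi (0:ℝ), f q))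
      = ((Nat.factorial n : ℝ))⁻¹ • ∫ q in Set.Ioi (0:ℝ), ((S α).comp (T p)) (f q) := by
    rw [ContinuousLinearMap.integral_comp_comm _ hInt]
    simp only [ContinuousLinearMap.comp_apply, _root_.map_smul]
  have hfact : (0:ℝ) < (Nat.factorial n : ℝ) := by positivity
  have hLne : L ≠ 0 := hL.ne'
  have hlone : lam - ω ≠ 0 := hlo.ne'
  -- integral of the dominating function
  have hgval : ∫ q in Set.Ioi (0:ℝ), g q
      = ‖w‖ * (A * ((Nat.factorial n : ℝ) / L ^ ν)
        + B * ((Nat.factorial n : ℝ) / (lam - ω) ^ ν)) := by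
    simp only [hg]
    rw [integral_const_mul, integral_add hg1 hg2, integral_const_mul, integral_const_mul,
      aux_integral n hL, aux_integral n hlo, hν']
  -- estimate for α ^ δ
  have hαδ : α ^ δ ≤ (Nat.factorial ν : ℝ) / (δ ^ ν * L ^ ν) := by
    rw [hrp δ, le_div_iff₀ (by positivity : (0:ℝ) < δ ^ ν * L ^ ν)]
    have h1 : (δ * L) ^ ν ≤ (Nat.factorial ν : ℝ) * Real.exp (δ * L) :=
      aux_pow_le ν (by positivity)
    have h2 : Real.exp (-L * δ) * Real.exp (δ * L) = 1 := by
      rw [← Real.exp_add, show -L * δ + δ * L = 0 by ring, Real.exp_zero]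
    calc Real.exp (-L * δ) * (δ ^ ν * L ^ ν)
        = Real.exp (-L * δ) * (δ * L) ^ ν := by rw [mul_pow]
      _ ≤ Real.exp (-L * δ) * ((Nat.factorial ν : ℝ) * Real.exp (δ * L)) :=
          mul_le_mul_of_nonneg_left h1 (Real.exp_pos _).le
      _ = (Real.exp (-L * δ) * Real.exp (δ * L)) * (Nat.factorial ν : ℝ) := by ring
      _ = (Nat.factorial ν : ℝ) := by rw [h2, one_mul]
  -- final computation
  rw [hcomm, norm_smul, Real.norm_eq_abs, abs_of_nonneg (by positivity)]
  have hnormint : ‖∫ q in Set.Ioi (0:ℝ), ((S α).comp (T p)) (f q)‖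
      ≤ ∫ q in Set.Ioi (0:ℝ), g q :=
    norm_integral_le_of_norm_le hgInt
      ((ae_restrict_iff' measurableSet_Ioi).2 (ae_of_all _ hGbound))
  calc ((Nat.factorial n : ℝ))⁻¹ * ‖∫ q in Set.Ioi (0:ℝ), ((S α).comp (T p)) (f q)‖
      ≤ ((Nat.factorial n : ℝ))⁻¹ * ∫ q in Set.Ioi (0:ℝ), g q :=
        mul_le_mul_of_nonneg_left hnormint (by positivity)
    _ = ‖w‖ * (A / L ^ ν + B / (lam - ω) ^ ν) := by
        rw [hgval]
        field_simp
    _ ≤ ‖w‖ * ((E * Real.exp (|lam| * δ)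
          + E * C * Real.exp (|ω| * δ) * (Nat.factorial ν) / (δ ^ ν * (lam - ω) ^ ν))
          * α ^ p / L ^ ν) := by
        apply mul_le_mul_of_nonneg_left _ (norm_nonneg w)
        have hterm2 : B / (lam - ω) ^ ν
            ≤ E * C * Real.exp (|ω| * δ) * (Nat.factorial ν)
              / (δ ^ ν * (lam - ω) ^ ν) * α ^ p / L ^ ν := by
          rw [hB, Real.rpow_add hα0]
          have h4 : E * C * Real.exp (|ω| * δ) * (α ^ p * α ^ δ)
              ≤ E * C * Real.exp (|ω| * δ)
                * (α ^ p * ((Nat.factorial ν : ℝ) / (δ ^ ν * L ^ ν))) :=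
            mul_le_mul_of_nonneg_left
              (mul_le_mul_of_nonneg_left hαδ hαp.le) (by positivity)
          calc E * C * Real.exp (|ω| * δ) * (α ^ p * α ^ δ) / (lam - ω) ^ ν
              ≤ E * C * Real.exp (|ω| * δ)
                * (α ^ p * ((Nat.factorial ν : ℝ) / (δ ^ ν * L ^ ν))) / (lam - ω) ^ ν := by
                gcongr
            _ = E * C * Real.exp (|ω| * δ) * (Nat.factorial ν)
                / (δ ^ ν * (lam - ω) ^ ν) * α ^ p / L ^ ν := by
                field_simp
        calc A / L ^ ν + B / (lam - ω) ^ ν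
            ≤ E * Real.exp (|lam| * δ) * α ^ p / L ^ ν
              + E * C * Real.exp (|ω| * δ) * (Nat.factorial ν)
                / (δ ^ ν * (lam - ω) ^ ν) * α ^ p / L ^ ν := by
              rw [hA]
              exact add_le_add_right hterm2 _
          _ = (E * Real.exp (|lam| * δ)
              + E * C * Real.exp (|ω| * δ) * (Nat.factorial ν) / (δ ^ ν * (lam - ω) ^ ν))
              * α ^ p / L ^ ν := by ring
    _ = (E * Real.exp (|lam| * δ)
          + E * C * Real.exp (|ω| * δ) * (Nat.factorial ν) / (δ ^ ν * (lam - ω) ^ ν))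
          * ‖w‖ * α ^ p / L ^ ν := by ring
end

section
/- A priori parameter choice rate (Theorem 4.1, abstract form): There exists a constant C > 0, depending only on p, ν, c₁, c₂, c*, e₀ and δ₀, such that for every δ ∈ (0, δ₀], every ρ ≥ 0, every u†, ū ∈ X with ‖ū − u†‖ ≤ ρ and ‖S_α(ū − u†)‖ ≤ c₁ ρ α^p (log(1/α))^{−ν} for all α ∈ (0,1), and every f^δ ∈ X with ‖A u† − f^δ‖ ≤ δ, the regularized element u^δ = ū − R_{α(δ)}(A ū − f^δ) with the a priori choice α(δ) = c₂ δ^{1/(p+1)} (log(1/δ))^{ν/(p+1)} satisfies ‖u^δ − u†‖ ≤ C max(ρ,1) δ^{p/(p+1)} (log(1/δ))^{−ν/(p+1)}. -/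
open MeasureTheory

lemma aux_half (ν : ℕ) (b L : ℝ) (hν : 1 ≤ ν)
    (hM : max ((8*(ν:ℝ))^2) (4 * max b 0) ≤ L) :
    b + (ν:ℝ) * Real.log L ≤ L / 2 := by
  have hν1 : (1:ℝ) ≤ ν := by exact_mod_cast hν
  have h64 : (64:ℝ) ≤ L := by
    have h : (64:ℝ) ≤ (8*(ν:ℝ))^2 := by nlinarith
    exact le_trans h (le_trans (le_max_left _ _) hM)
  have hLpos : (0:ℝ) < L := by linarith
  set s := Real.sqrt L with hs
  have hss : s * s = L := Real.mul_self_sqrt hLpos.le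
  have hs8 : 8*(ν:ℝ) ≤ s := by
    have h := Real.sqrt_le_sqrt (le_trans (le_max_left _ _) hM)
    rwa [Real.sqrt_sq (by positivity)] at h
  have hspos : 0 < s := by nlinarith
  have hlog : Real.log L ≤ 2 * s := by
    have h1 : Real.log s ≤ s - 1 := Real.log_le_sub_one_of_pos hspos
    have h2 : Real.log s = Real.log L / 2 := Real.log_sqrt hLpos.le
    linarith
  have hb : b ≤ L / 4 := by
    have h1 : 4 * max b 0 ≤ L := le_trans (le_max_right _ _) hM
    have h2 := le_max_left b (0:ℝ)
    linarith
  have hνlog : (ν:ℝ) * Real.log L ≤ L / 4 := by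
    have hlogpos : 0 ≤ Real.log L := Real.log_nonneg (by linarith)
    have h3 : (ν:ℝ) * Real.log L ≤ (ν:ℝ) * (2*s) :=
      mul_le_mul_of_nonneg_left hlog (by positivity)
    nlinarith
  linarith

set_option maxHeartbeats 1000000 in
/-- A priori parameter choice rate (Theorem 4.1, abstract form). -/
theorem stmt1 (p : ℝ) (ν : ℕ) (c₁ c₂ cst e₀ δ₀ : ℝ)
    (hp : 0 ≤ p) (hν : 1 ≤ ν) (hc₁ : 0 < c₁) (hc₂ : 0 < c₂) (hcst : 0 < cst)
    (he₀ : 0 < e₀) (hδ₀ : δ₀ ∈ Set.Ioo (0:ℝ) 1) :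
    ∃ C > (0:ℝ),
      ∀ (X : Type) [NormedAddCommGroup X] [NormedSpace ℝ X] [CompleteSpace X],
      ∀ (A : X →L[ℝ] X) (R : ℝ → X →L[ℝ] X),
      (∀ α > (0:ℝ), ‖R α‖ ≤ cst / α) →
      (∀ α > (0:ℝ), ‖(1 : X →L[ℝ] X) - (R α).comp A‖ ≤ e₀) →
      ∀ δ ∈ Set.Ioc (0:ℝ) δ₀, ∀ ρ ≥ (0:ℝ), ∀ ust ubar fd : X,
        ‖ubar - ust‖ ≤ ρ →
        (∀ α ∈ Set.Ioo (0:ℝ) 1,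
          ‖((1 : X →L[ℝ] X) - (R α).comp A) (ubar - ust)‖
            ≤ c₁ * ρ * α ^ p / (Real.log (1 / α)) ^ ν) →
        ‖A ust - fd‖ ≤ δ →
        ‖(ubar - R (c₂ * δ ^ (1 / (p + 1)) * (Real.log (1 / δ)) ^ ((ν : ℝ) / (p + 1)))
            (A ubar - fd)) - ust‖
          ≤ C * max ρ 1 * δ ^ (p / (p + 1)) / (Real.log (1 / δ)) ^ ((ν : ℝ) / (p + 1)) := by
  have hp1 : (0:ℝ) < p + 1 := by linarith
  set bA := (p+1) * (Real.log 2 + Real.log c₂) with hbA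
  set T := max (max ((8*(ν:ℝ))^2) (4 * max bA 0)) 1 with hT
  have hT1 : (1:ℝ) ≤ T := le_max_right _ _
  have hTpos : (0:ℝ) < T := lt_of_lt_of_le one_pos hT1
  set bB := (p+1) * Real.log c₂ with hbB
  set M := max ((8*(ν:ℝ))^2) (4 * max bB 0) with hM
  set K := max (M / Real.log 2) (2*(p+1)) with hK
  have hKpos : (0:ℝ) < K := lt_of_lt_of_le (by linarith) (le_max_right _ _)
  set m := Real.exp (-T) / T ^ (ν:ℝ) with hm
  clear_value bA T bB M K
  have hmpos : (0:ℝ) < m := div_pos (Real.exp_pos _) (Real.rpow_pos_of_pos hTpos _)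
  clear_value m
  have hE1 : (0:ℝ) < cst / c₂ := div_pos hcst hc₂
  have hE2 : (0:ℝ) < e₀ / m := div_pos he₀ hmpos
  have hE3 : (0:ℝ) < c₁ * c₂ ^ p * K ^ ν :=
    mul_pos (mul_pos hc₁ (Real.rpow_pos_of_pos hc₂ p)) (pow_pos hKpos ν)
  refine ⟨cst / c₂ + (e₀ / m + c₁ * c₂ ^ p * K ^ ν), by linarith, ?_⟩
  intro X _ _ _ A R hR hS δ hδ ρ hρ ust ubar fd hub hSb hdata
  obtain ⟨hδpos, hδle⟩ := hδ
  have hδ1 : δ < 1 := lt_of_le_of_lt hδle hδ₀.2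
  set L := Real.log (1/δ) with hLdef
  have hLpos : 0 < L := Real.log_pos ((one_lt_div hδpos).mpr hδ1)
  have hlogδ : Real.log δ = -L := by rw [hLdef, one_div, Real.log_inv, neg_neg]
  set q := (ν:ℝ)/(p+1) with hq
  have hqnn : 0 ≤ q := by rw [hq]; positivity
  set α := c₂ * δ ^ (1/(p+1)) * L ^ q with hα
  have hδp : (0:ℝ) < δ ^ (1/(p+1)) := Real.rpow_pos_of_pos hδpos _
  have hLq : (0:ℝ) < L ^ q := Real.rpow_pos_of_pos hLpos _
  have hδpp : (0:ℝ) < δ ^ (p/(p+1)) := Real.rpow_pos_of_pos hδpos _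
  have hαpos : 0 < α := by rw [hα]; positivity
  clear_value L q α
  have hmax1 : (1:ℝ) ≤ max ρ 1 := le_max_right _ _
  have hρmax : ρ ≤ max ρ 1 := le_max_left _ _
  -- key decomposition
  have key : (ubar - (R α) (A ubar - fd)) - ust
      = ((1 : X →L[ℝ] X) - (R α).comp A) (ubar - ust) - (R α) (A ust - fd) := by
    simp only [ContinuousLinearMap.sub_apply, ContinuousLinearMap.coe_comp',
      Function.comp_apply, ContinuousLinearMap.one_apply, map_sub]
    abel
  have hnorm : ‖(ubar - (R α) (A ubar - fd)) - ust‖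
      ≤ ‖((1 : X →L[ℝ] X) - (R α).comp A) (ubar - ust)‖ + ‖(R α) (A ust - fd)‖ := by
    rw [key]; exact norm_sub_le _ _
  -- the data-error term
  have hδsplit : δ ^ (p/(p+1)) * δ ^ (1/(p+1)) = δ := by
    rw [← Real.rpow_add hδpos, show p/(p+1) + 1/(p+1) = 1 by field_simp, Real.rpow_one]
  have hRterm : ‖(R α) (A ust - fd)‖ ≤ cst / c₂ * (δ ^ (p/(p+1)) / L ^ q) := by
    have h1 : ‖(R α) (A ust - fd)‖ ≤ (cst/α) * δ :=
      le_trans ((R α).le_opNorm _)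
        (mul_le_mul (hR α hαpos) hdata (norm_nonneg _) (by positivity))
    have h2 : cst/α * δ = cst / c₂ * (δ ^ (p/(p+1)) / L ^ q) := by
      rw [hα]
      calc cst / (c₂ * δ ^ (1/(p+1)) * L ^ q) * δ
          = cst / (c₂ * δ ^ (1/(p+1)) * L ^ q) * (δ ^ (p/(p+1)) * δ ^ (1/(p+1))) := by
            rw [hδsplit]
        _ = cst / c₂ * (δ ^ (p/(p+1)) / L ^ q) := by
            field_simp
    linarith [h1, h2.le, h2.ge]
  -- the approximation term
  have hSterm : ‖((1 : X →L[ℝ] X) - (R α).comp A) (ubar - ust)‖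
      ≤ (e₀ / m + c₁ * c₂ ^ p * K ^ ν) * max ρ 1 * (δ ^ (p/(p+1)) / L ^ q) := by
    have hother2 : 0 ≤ c₁ * c₂ ^ p * K ^ ν * max ρ 1 * (δ ^ (p/(p+1)) / L ^ q) := by
      have : (0:ℝ) < δ ^ (p/(p+1)) / L ^ q := div_pos hδpp hLq
      positivity
    have hother1 : 0 ≤ e₀ / m * max ρ 1 * (δ ^ (p/(p+1)) / L ^ q) := by
      have : (0:ℝ) < δ ^ (p/(p+1)) / L ^ q := div_pos hδpp hLq
      positivity
    by_cases hcase : α < 1/2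
    · -- small α: use the source condition
      have hαI : α ∈ Set.Ioo (0:ℝ) 1 := ⟨hαpos, by linarith⟩
      have hbound := hSb α hαI
      set ℓ := Real.log (1/α) with hℓdef
      have hℓ2 : Real.log 2 ≤ ℓ := by
        apply Real.log_le_log (by norm_num)
        rw [le_div_iff₀ hαpos]; linarith
      have hℓpos : 0 < ℓ := lt_of_lt_of_le (Real.log_pos one_lt_two) hℓ2
      have hlogα : Real.log α = Real.log c₂ - L/(p+1) + q * Real.log L := by
        rw [hα, Real.log_mul (by positivity) (ne_of_gt hLq),
          Real.log_mul hc₂.ne' (ne_of_gt hδp), Real.log_rpow hδpos, Real.log_rpow hLpos,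
          hlogδ]
        ring
      have hℓeq : (p+1) * ℓ = L - (bB + (ν:ℝ) * Real.log L) := by
        rw [hℓdef, one_div, Real.log_inv, hlogα, hbB, hq]
        field_simp
        ring
      have hLK : L ≤ K * ℓ := by
        rcases le_or_gt L M with hLM | hLM
        · calc L ≤ M := hLM
            _ = M / Real.log 2 * Real.log 2 := by
                field_simp
            _ ≤ K * ℓ := by
                have hKK : M / Real.log 2 ≤ K := by rw [hK]; exact le_max_left _ _
                exact mul_le_mul hKK hℓ2 (Real.log_pos one_lt_two).le hKpos.le
        · have haux := aux_half ν bB L hν (by rw [← hM]; exact hLM.le)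
          have h4 : L ≤ 2*(p+1) * ℓ := by linarith [haux, hℓeq]
          have hKK : 2*(p+1) ≤ K := by rw [hK]; exact le_max_right _ _
          calc L ≤ 2*(p+1)*ℓ := h4
            _ ≤ K * ℓ := mul_le_mul_of_nonneg_right hKK hℓpos.le
      have hαp : α ^ p = c₂ ^ p * δ ^ (p/(p+1)) * L ^ (q*p) := by
        rw [hα, Real.mul_rpow (by positivity) hLq.le, Real.mul_rpow hc₂.le hδp.le,
          ← Real.rpow_mul hδpos.le, ← Real.rpow_mul hLpos.le,
          show 1/(p+1) * p = p/(p+1) by ring]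
      have hLν : L ^ (q*p) * L ^ q = L ^ (ν:ℕ) := by
        rw [← Real.rpow_natCast L ν, ← Real.rpow_add hLpos]
        congr 1
        rw [hq]; field_simp
      have hKℓ : L ^ (ν:ℕ) ≤ K ^ ν * ℓ ^ ν := by
        calc L ^ (ν:ℕ) ≤ (K*ℓ) ^ ν := pow_le_pow_left₀ hLpos.le hLK ν
          _ = K ^ ν * ℓ ^ ν := mul_pow _ _ _
      have h6 : L ^ (q*p) / ℓ ^ ν ≤ K ^ ν / L ^ q := by
        rw [div_le_div_iff₀ (by positivity) hLq]
        calc L ^ (q*p) * L ^ q = L ^ (ν:ℕ) := hLν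
          _ ≤ K ^ ν * ℓ ^ ν := hKℓ
      have h7 : c₁ * ρ * α ^ p / ℓ ^ ν
          = (c₁ * ρ * c₂ ^ p * δ ^ (p/(p+1))) * (L ^ (q*p) / ℓ ^ ν) := by
        rw [hαp]; ring
      have h8 : (c₁ * ρ * c₂ ^ p * δ ^ (p/(p+1))) * (L ^ (q*p) / ℓ ^ ν)
          ≤ (c₁ * ρ * c₂ ^ p * δ ^ (p/(p+1))) * (K ^ ν / L ^ q) :=
        mul_le_mul_of_nonneg_left h6 (by positivity)
      have h9 : (c₁ * ρ * c₂ ^ p * δ ^ (p/(p+1))) * (K ^ ν / L ^ q)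
          ≤ c₁ * c₂ ^ p * K ^ ν * max ρ 1 * (δ ^ (p/(p+1)) / L ^ q) := by
        rw [show c₁ * c₂ ^ p * K ^ ν * max ρ 1 * (δ ^ (p/(p+1)) / L ^ q)
            = (c₁ * max ρ 1 * c₂ ^ p * δ ^ (p/(p+1))) * (K ^ ν / L ^ q) by ring]
        have hKLq : 0 ≤ K ^ ν / L ^ q := by positivity
        gcongr
      have expand : (e₀ / m + c₁ * c₂ ^ p * K ^ ν) * max ρ 1 * (δ ^ (p/(p+1)) / L ^ q)
          = e₀ / m * max ρ 1 * (δ ^ (p/(p+1)) / L ^ q)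
            + c₁ * c₂ ^ p * K ^ ν * max ρ 1 * (δ ^ (p/(p+1)) / L ^ q) := by ring
      calc ‖((1 : X →L[ℝ] X) - (R α).comp A) (ubar - ust)‖
          ≤ c₁ * ρ * α ^ p / ℓ ^ ν := hbound
        _ ≤ c₁ * c₂ ^ p * K ^ ν * max ρ 1 * (δ ^ (p/(p+1)) / L ^ q) := by
            rw [h7]; exact le_trans h8 h9
        _ ≤ (e₀ / m + c₁ * c₂ ^ p * K ^ ν) * max ρ 1 * (δ ^ (p/(p+1)) / L ^ q) := by
            rw [expand]; linarith
    · -- large α: use the uniform bound on S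
      push_neg at hcase
      have hSop : ‖((1 : X →L[ℝ] X) - (R α).comp A) (ubar - ust)‖ ≤ e₀ * ρ :=
        le_trans (ContinuousLinearMap.le_opNorm _ _)
          (mul_le_mul (hS α hαpos) hub (norm_nonneg _) he₀.le)
      have hαp1 : ((1:ℝ)/2) ^ (p+1) ≤ c₂ ^ (p+1) * δ * L ^ ((ν:ℝ)) := by
        have h1 : ((1:ℝ)/2) ^ (p+1) ≤ α ^ (p+1) :=
          Real.rpow_le_rpow (by norm_num) hcase (by linarith)
        have h2 : α ^ (p+1) = c₂ ^ (p+1) * δ * L ^ ((ν:ℝ)) := by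
          rw [hα, Real.mul_rpow (by positivity) hLq.le, Real.mul_rpow hc₂.le hδp.le,
            ← Real.rpow_mul hδpos.le, ← Real.rpow_mul hLpos.le,
            show 1/(p+1) * (p+1) = 1 by field_simp, Real.rpow_one,
            show q * (p+1) = (ν:ℝ) by rw [hq]; field_simp]
        linarith [h2.le, h2.ge]
      have h3 : L ≤ bA + (ν:ℝ) * Real.log L := by
        have h2 := Real.log_le_log (by positivity) hαp1
        rw [Real.log_mul (by positivity) (Real.rpow_pos_of_pos hLpos _).ne',
          Real.log_mul (Real.rpow_pos_of_pos hc₂ _).ne' hδpos.ne',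
          Real.log_rpow hc₂, Real.log_rpow hLpos,
          Real.log_rpow (by norm_num : (0:ℝ) < 1/2), hlogδ,
          one_div, Real.log_inv] at h2
        rw [hbA]
        linarith [h2]
      have hLT : L ≤ T := by
        rcases le_or_gt L (max ((8*(ν:ℝ))^2) (4 * max bA 0)) with h | h
        · rw [hT]; exact le_trans h (le_max_left _ _)
        · exfalso
          have haux := aux_half ν bA L hν h.le
          have hν1 : (1:ℝ) ≤ ν := by exact_mod_cast hν
          have h64 : (64:ℝ) ≤ (8*(ν:ℝ))^2 := by nlinarith
          have : (64:ℝ) ≤ L := le_trans h64 (le_trans (le_max_left _ _) h.le)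
          linarith
      have hδT : Real.exp (-T) ≤ δ ^ (p/(p+1)) := by
        have h1 : Real.exp (-T) ≤ δ := by
          calc Real.exp (-T) ≤ Real.exp (-L) := Real.exp_le_exp.mpr (by linarith)
            _ = δ := by rw [← hlogδ, Real.exp_log hδpos]
        calc Real.exp (-T) ≤ δ := h1
          _ = δ ^ (1:ℝ) := (Real.rpow_one δ).symm
          _ ≤ δ ^ (p/(p+1)) := by
              apply Real.rpow_le_rpow_of_exponent_ge hδpos hδ1.le
              rw [div_le_one hp1]; linarith
      have hLqT : L ^ q ≤ T ^ ((ν:ℝ)) := by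
        calc L ^ q ≤ T ^ q := Real.rpow_le_rpow hLpos.le hLT hqnn
          _ ≤ T ^ ((ν:ℝ)) := by
              apply Real.rpow_le_rpow_of_exponent_le hT1
              rw [hq]
              exact div_le_self (by positivity) (by linarith)
      have hmD : m ≤ δ ^ (p/(p+1)) / L ^ q := by
        rw [hm]
        exact div_le_div₀ hδpp.le hδT hLq hLqT
      have h11 : e₀ * ρ ≤ e₀ / m * max ρ 1 * (δ ^ (p/(p+1)) / L ^ q) := by
        calc e₀ * ρ ≤ e₀ * max ρ 1 := mul_le_mul_of_nonneg_left hρmax he₀.le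
          _ = e₀ / m * max ρ 1 * m := by field_simp
          _ ≤ e₀ / m * max ρ 1 * (δ ^ (p/(p+1)) / L ^ q) := by
              apply mul_le_mul_of_nonneg_left hmD
              positivity
      have expand : (e₀ / m + c₁ * c₂ ^ p * K ^ ν) * max ρ 1 * (δ ^ (p/(p+1)) / L ^ q)
          = e₀ / m * max ρ 1 * (δ ^ (p/(p+1)) / L ^ q)
            + c₁ * c₂ ^ p * K ^ ν * max ρ 1 * (δ ^ (p/(p+1)) / L ^ q) := by ring
      rw [expand]
      linarith
  -- combine
  have hfin1 : cst / c₂ * (δ ^ (p/(p+1)) / L ^ q)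
      ≤ cst / c₂ * max ρ 1 * (δ ^ (p/(p+1)) / L ^ q) := by
    have hD : (0:ℝ) ≤ δ ^ (p/(p+1)) / L ^ q := (div_pos hδpp hLq).le
    have h1 : δ ^ (p/(p+1)) / L ^ q ≤ max ρ 1 * (δ ^ (p/(p+1)) / L ^ q) :=
      le_mul_of_one_le_left hD hmax1
    calc cst / c₂ * (δ ^ (p/(p+1)) / L ^ q)
        ≤ cst / c₂ * (max ρ 1 * (δ ^ (p/(p+1)) / L ^ q)) :=
          mul_le_mul_of_nonneg_left h1 hE1.le
      _ = cst / c₂ * max ρ 1 * (δ ^ (p/(p+1)) / L ^ q) := by ring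
  have expand2 : (cst / c₂ + (e₀ / m + c₁ * c₂ ^ p * K ^ ν)) * max ρ 1 * δ ^ (p/(p+1)) / L ^ q
      = cst / c₂ * max ρ 1 * (δ ^ (p/(p+1)) / L ^ q)
        + (e₀ / m + c₁ * c₂ ^ p * K ^ ν) * max ρ 1 * (δ ^ (p/(p+1)) / L ^ q) := by
    field_simp
  rw [expand2]
  linarith
end

section
/- Interpolation inequality for mixed smoothness (Theorem 4.2, abstract form): There exists a constant C > 0, depending only on p, ν, c₁, c* and δ₀, such that for every u ∈ X and ρ ≥ 0 satisfying ‖S_α u‖ ≤ c₁ ρ α^p (log(1/α))^{−ν} for all α ∈ (0,1), if 0 < ‖Au‖ ≤ δ₀ then ‖u‖ ≤ C max(ρ,1) ‖Au‖^{p/(p+1)} (log(1/‖Au‖))^{−ν/(p+1)}. -/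
open MeasureTheory

set_option maxHeartbeats 1000000 in
/-- Interpolation inequality for mixed smoothness (Theorem 4.2, abstract form). -/
theorem stmt2 (p : ℝ) (ν : ℕ) (c₁ cst δ₀ : ℝ)
    (hp : 0 ≤ p) (hν : 1 ≤ ν) (hc₁ : 0 < c₁) (hcst : 0 < cst)
    (hδ₀ : δ₀ ∈ Set.Ioo (0:ℝ) 1) :
    ∃ C > (0:ℝ),
      ∀ (X : Type) [NormedAddCommGroup X] [NormedSpace ℝ X] [CompleteSpace X],
      ∀ (A : X →L[ℝ] X) (R : ℝ → X →L[ℝ] X),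
      (∀ α > (0:ℝ), ‖R α‖ ≤ cst / α) →
      ∀ (u : X) (ρ : ℝ), 0 ≤ ρ →
        (∀ α ∈ Set.Ioo (0:ℝ) 1,
          ‖((1 : X →L[ℝ] X) - (R α).comp A) u‖
            ≤ c₁ * ρ * α ^ p / (Real.log (1 / α)) ^ ν) →
        0 < ‖A u‖ → ‖A u‖ ≤ δ₀ →
        ‖u‖ ≤ C * max ρ 1 * ‖A u‖ ^ (p / (p + 1))
              / (Real.log (1 / ‖A u‖)) ^ ((ν : ℝ) / (p + 1)) := by
  obtain ⟨hδ₀0, hδ₀1⟩ := hδ₀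
  have hν0 : (0:ℝ) < ν := by exact_mod_cast Nat.lt_of_lt_of_le Nat.zero_lt_one hν
  have hp1 : (0:ℝ) < p + 1 := by linarith
  set Bc : ℝ := (2*(ν:ℝ))^ν with hBcdef
  have hBc0 : (0:ℝ) < Bc := by positivity
  set K : ℝ := Bc ^ ((1:ℝ)/(p+1)) + 1 with hKdef
  have hK1 : 1 ≤ K := by
    rw [hKdef]
    exact le_add_of_nonneg_left (Real.rpow_nonneg hBc0.le _)
  have hK0 : (0:ℝ) < K := lt_of_lt_of_le one_pos hK1
  have hBK : Bc ^ ((1:ℝ)/(p+1)) ≤ K := by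
    simp [hKdef]
  refine ⟨c₁ * (2*(p+1))^ν + cst * K + 1, by positivity, ?_⟩
  intro X _ _ _ A R hR u ρ hρ hS hδpos hδle
  set δ := ‖A u‖ with hδdef
  have hδ0 : 0 < δ := hδpos
  have hδ1 : δ < 1 := lt_of_le_of_lt hδle hδ₀1
  set L := Real.log (1/δ) with hLdef
  have hL : 0 < L := Real.log_pos (by rw [one_div]; exact (one_lt_inv₀ hδ0).mpr hδ1)
  -- bound L^ν ≤ Bc * δ^(-1/2)
  have hLν : L ^ ν ≤ Bc * δ ^ (-(1/2:ℝ)) := by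
    have hε : (0:ℝ) < 1/(2*(ν:ℝ)) := by positivity
    have h1 : L ≤ (2*(ν:ℝ)) * δ ^ (-(1/(2*(ν:ℝ)))) := by
      have h := Real.log_le_rpow_div (le_of_lt (show (0:ℝ) < 1/δ by positivity)) hε
      have e1 : ((1:ℝ)/δ) ^ ((1:ℝ)/(2*(ν:ℝ))) = δ ^ (-(1/(2*(ν:ℝ)))) := by
        rw [one_div, Real.inv_rpow hδ0.le, ← Real.rpow_neg hδ0.le]
      rw [e1] at h
      have hνne : (ν:ℝ) ≠ 0 := ne_of_gt hν0
      calc L ≤ δ ^ (-(1/(2*(ν:ℝ)))) / (1/(2*(ν:ℝ))) := h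
        _ = 2*(ν:ℝ) * δ ^ (-(1/(2*(ν:ℝ)))) := by
            rw [div_eq_mul_inv, one_div, inv_inv]
            ring
    have h2 : L ^ ν ≤ (2*(ν:ℝ) * δ ^ (-(1/(2*(ν:ℝ)))))^ν :=
      pow_le_pow_left₀ hL.le h1 ν
    have e2 : (2*(ν:ℝ) * δ ^ (-(1/(2*(ν:ℝ)))))^ν = Bc * δ ^ (-(1/2:ℝ)) := by
      rw [mul_pow, hBcdef]
      congr 1
      rw [← Real.rpow_natCast (δ ^ (-(1/(2*(ν:ℝ))))) ν, ← Real.rpow_mul hδ0.le]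
      congr 1
      have hνne : (ν:ℝ) ≠ 0 := ne_of_gt hν0
      field_simp
    linarith [e2 ▸ h2]
  have htB : δ * L ^ ν ≤ Bc * δ ^ ((1/2:ℝ)) := by
    have h1 : δ * L ^ ν ≤ δ * (Bc * δ ^ (-(1/2:ℝ))) :=
      mul_le_mul_of_nonneg_left hLν hδ0.le
    have h2 : δ * (Bc * δ ^ (-(1/2:ℝ))) = Bc * δ ^ ((1/2:ℝ)) := by
      have h3 : δ * δ ^ (-(1/2:ℝ)) = δ ^ ((1/2:ℝ)) := by
        nth_rewrite 1 [← Real.rpow_one δ]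
        rw [← Real.rpow_add hδ0]
        norm_num
      rw [mul_comm δ, mul_assoc, mul_comm (δ ^ (-(1/2:ℝ))) δ, h3]
    linarith
  set a : ℝ := 1/(p+1) with hadef
  set b : ℝ := (ν:ℝ)/(p+1) with hbdef
  set α : ℝ := δ ^ a * L ^ b / K with hαdef
  have hα0 : 0 < α := by positivity
  have hcomb : δ ^ a * L ^ b = (δ * L ^ ν) ^ a := by
    rw [Real.mul_rpow hδ0.le (by positivity), ← Real.rpow_natCast L ν,
      ← Real.rpow_mul hL.le, hbdef, hadef]
    congr 1
    ring
  have hαδ : α ≤ δ ^ ((1:ℝ)/(2*(p+1))) := by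
    have h1 : (δ * L ^ ν) ^ a ≤ (Bc * δ ^ ((1/2:ℝ))) ^ a :=
      Real.rpow_le_rpow (by positivity) htB (by positivity)
    have h2 : (Bc * δ ^ ((1/2:ℝ))) ^ a = Bc ^ a * δ ^ ((1:ℝ)/(2*(p+1))) := by
      rw [Real.mul_rpow hBc0.le (by positivity), ← Real.rpow_mul hδ0.le]
      congr 1
      rw [hadef]
      field_simp
    have h3 : Bc ^ a * δ ^ ((1:ℝ)/(2*(p+1))) ≤ K * δ ^ ((1:ℝ)/(2*(p+1))) :=
      mul_le_mul_of_nonneg_right hBK (by positivity)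
    rw [hαdef, div_le_iff₀ hK0, hcomb]
    calc (δ * L ^ ν) ^ a ≤ K * δ ^ ((1:ℝ)/(2*(p+1))) := by linarith
      _ = δ ^ ((1:ℝ)/(2*(p+1))) * K := by ring
  have hα1 : α < 1 :=
    lt_of_le_of_lt hαδ (Real.rpow_lt_one hδ0.le hδ1 (by positivity))
  have hLδ : L = - Real.log δ := by rw [hLdef, one_div, Real.log_inv]
  have hlogα : L / (2*(p+1)) ≤ Real.log (1/α) := by
    have h1 : Real.log α ≤ Real.log (δ ^ ((1:ℝ)/(2*(p+1)))) :=
      Real.log_le_log hα0 hαδ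
    rw [Real.log_rpow hδ0] at h1
    rw [one_div, Real.log_inv]
    rw [hLδ]
    have : (1:ℝ)/(2*(p+1)) * Real.log δ = -(-Real.log δ / (2*(p+1))) := by ring
    linarith [this ▸ h1]
  have hlogα0 : 0 < Real.log (1/α) :=
    lt_of_lt_of_le (by positivity) hlogα
  -- basic splitting
  have key : ‖u‖ ≤ c₁ * ρ * α ^ p / (Real.log (1/α)) ^ ν + cst / α * δ := by
    have hu : u = ((1 : X →L[ℝ] X) - (R α).comp A) u + (R α) (A u) := by
      simp
    have h2 : ‖(R α) (A u)‖ ≤ cst / α * δ := by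
      calc ‖(R α) (A u)‖ ≤ ‖R α‖ * ‖A u‖ := (R α).le_opNorm (A u)
        _ ≤ cst / α * δ := mul_le_mul_of_nonneg_right (hR α hα0) (norm_nonneg _)
    calc ‖u‖ = ‖((1 : X →L[ℝ] X) - (R α).comp A) u + (R α) (A u)‖ := by rw [← hu]
      _ ≤ ‖((1 : X →L[ℝ] X) - (R α).comp A) u‖ + ‖(R α) (A u)‖ := norm_add_le _ _
      _ ≤ c₁ * ρ * α ^ p / (Real.log (1/α)) ^ ν + cst / α * δ :=
          add_le_add (hS α ⟨hα0, hα1⟩) h2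
  set E : ℝ := δ ^ (p/(p+1)) / L ^ b with hEdef
  have hE0 : 0 < E := by positivity
  -- term 2
  have hδsplit : δ ^ (p/(p+1)) * δ ^ a = δ := by
    rw [← Real.rpow_add hδ0, hadef]
    rw [show p/(p+1) + 1/(p+1) = 1 by field_simp]
    exact Real.rpow_one δ
  have hδa0 : (0:ℝ) < δ ^ a := by positivity
  have hLb0 : (0:ℝ) < L ^ b := by positivity
  have hfrac : δ / (δ ^ a * L ^ b) = δ ^ (p/(p+1)) / L ^ b := by
    rw [div_eq_div_iff (by positivity) (ne_of_gt hLb0)]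
    calc δ * L ^ b = (δ ^ (p/(p+1)) * δ ^ a) * L ^ b := by rw [hδsplit]
      _ = δ ^ (p/(p+1)) * (δ ^ a * L ^ b) := by ring
  have hT2 : cst / α * δ = cst * K * E := by
    rw [hαdef, hEdef]
    calc cst / (δ ^ a * L ^ b / K) * δ = cst * K * (δ / (δ ^ a * L ^ b)) := by
          rw [div_div_eq_mul_div]
          ring
      _ = cst * K * (δ ^ (p/(p+1)) / L ^ b) := by rw [hfrac]
  -- term 1
  have hLsplit : L ^ ((ν:ℝ)*p/(p+1)) = L ^ ν / L ^ b := by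
    rw [eq_div_iff (by positivity), ← Real.rpow_natCast L ν, ← Real.rpow_add hL, hbdef]
    congr 1
    field_simp
  have hαle : α ≤ δ ^ a * L ^ b := by
    rw [hαdef]
    exact div_le_self (by positivity) hK1
  have hαp : α ^ p ≤ δ ^ (p/(p+1)) * L ^ ((ν:ℝ)*p/(p+1)) := by
    calc α ^ p ≤ (δ ^ a * L ^ b) ^ p := Real.rpow_le_rpow hα0.le hαle hp
      _ = δ ^ (p/(p+1)) * L ^ ((ν:ℝ)*p/(p+1)) := by
          rw [Real.mul_rpow (by positivity) (by positivity),
            ← Real.rpow_mul hδ0.le, ← Real.rpow_mul hL.le]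
          congr 1
          · rw [hadef]; congr 1; ring
          · rw [hbdef]; congr 1; ring
  have hT1 : c₁ * ρ * α ^ p / (Real.log (1/α)) ^ ν
      ≤ c₁ * (2*(p+1))^ν * ρ * E := by
    have hden : (L / (2*(p+1))) ^ ν ≤ (Real.log (1/α)) ^ ν :=
      pow_le_pow_left₀ (by positivity) hlogα ν
    have step : c₁ * ρ * α ^ p / (Real.log (1/α)) ^ ν
        ≤ c₁ * ρ * (δ ^ (p/(p+1)) * L ^ ((ν:ℝ)*p/(p+1))) / (L / (2*(p+1))) ^ ν := by
      apply div_le_div₀ (by positivity)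
        (mul_le_mul_of_nonneg_left hαp (by positivity)) (by positivity) hden
    refine le_trans step (le_of_eq ?_)
    rw [hLsplit, hEdef, div_pow]
    have hLν0 : (L:ℝ) ^ ν ≠ 0 := by positivity
    have hLb : L ^ b ≠ 0 := by positivity
    have h2p : ((2*(p+1)):ℝ) ^ ν ≠ 0 := by positivity
    field_simp
  -- combine
  have hρmax : ρ ≤ max ρ 1 := le_max_left _ _
  have h1max : (1:ℝ) ≤ max ρ 1 := le_max_right _ _
  have hmax0 : (0:ℝ) < max ρ 1 := lt_of_lt_of_le one_pos h1max
  have final : ‖u‖ ≤ (c₁ * (2*(p+1))^ν + cst * K + 1) * max ρ 1 * E := by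
    have m1 : 0 ≤ c₁ * (2*(p+1))^ν * (max ρ 1 - ρ) :=
      mul_nonneg (by positivity) (by linarith)
    have m2 : 0 ≤ cst * K * (max ρ 1 - 1) :=
      mul_nonneg (by positivity) (by linarith)
    have inner : c₁ * (2*(p+1))^ν * ρ + cst * K
        ≤ (c₁ * (2*(p+1))^ν + cst * K + 1) * max ρ 1 := by nlinarith
    calc ‖u‖ ≤ c₁ * ρ * α ^ p / (Real.log (1/α)) ^ ν + cst / α * δ := key
      _ ≤ c₁ * (2*(p+1))^ν * ρ * E + cst * K * E := by rw [hT2]; linarith [hT1]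
      _ = (c₁ * (2*(p+1))^ν * ρ + cst * K) * E := by ring
      _ ≤ ((c₁ * (2*(p+1))^ν + cst * K + 1) * max ρ 1) * E :=
          mul_le_mul_of_nonneg_right inner hE0.le
      _ = (c₁ * (2*(p+1))^ν + cst * K + 1) * max ρ 1 * E := by ring
  calc ‖u‖ ≤ (c₁ * (2*(p+1))^ν + cst * K + 1) * max ρ 1 * E := final
    _ = (c₁ * (2*(p+1))^ν + cst * K + 1) * max ρ 1 * δ ^ (p/(p+1))
        / L ^ ((ν:ℝ)/(p+1)) := by rw [hEdef, hbdef]; ring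
end

section
/- Membership criterion for the generator of a C₀-semigroup (Proposition 5.1): Let u ∈ X be such that the map t ↦ T(t)u is differentiable at t = 1, with derivative y ∈ X, and suppose that the operator T(1) is injective. Then the limit lim_{h→0⁺} (T(h)u − u)/h exists in X (i.e., u belongs to the domain of the infinitesimal generator) if and only if y belongs to the range of T(1). -/
open Filter Set MeasureTheory intervalIntegral Topology

/-- Membership criterion for the generator of a C₀-semigroup (Proposition 5.1). -/
theorem stmt5 {X : Type*} [NormedAddCommGroup X] [NormedSpace ℝ X] [CompleteSpace X]
    (T : ℝ → X →L[ℝ] X)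
    (hT0 : T 0 = 1)
    (hTadd : ∀ s ≥ (0:ℝ), ∀ t ≥ (0:ℝ), T (s + t) = (T s).comp (T t))
    (hTcont : ∀ w : X, ContinuousOn (fun t => T t w) (Set.Ici 0))
    (u y : X)
    (hdiff : HasDerivWithinAt (fun t => T t u) y (Set.Ici 0) 1)
    (hinj : Function.Injective (T 1)) :
    (∃ L : X, Filter.Tendsto (fun h : ℝ => h⁻¹ • (T h u - u))
        (nhdsWithin 0 (Set.Ioi 0)) (nhds L))
      ↔ y ∈ Set.range (T 1) := by
  have hg1 : HasDerivAt (fun t => T t u) y 1 := hdiff.hasDerivAt (Ici_mem_nhds one_pos)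
  constructor
  · rintro ⟨L, hL⟩
    refine ⟨L, ?_⟩
    have hmap : Tendsto (fun t : ℝ => t - 1) (𝓝[Set.Ioi 1] 1) (𝓝[Set.Ioi 0] 0) := by
      rw [tendsto_nhdsWithin_iff]
      constructor
      · have : Tendsto (fun t : ℝ => t - 1) (𝓝 1) (𝓝 (1 - 1)) :=
          (continuous_id.sub continuous_const).tendsto 1
        simpa using this.mono_left nhdsWithin_le_nhds
      · filter_upwards [self_mem_nhdsWithin] with t ht
        exact sub_pos.2 (Set.mem_Ioi.mp ht)
    have h1 : Tendsto (slope (fun t => T t u) 1) (𝓝[Set.Ioi 1] 1) (𝓝 (T 1 L)) := by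
      have h2 : Tendsto (fun t : ℝ => (T 1) ((t - 1)⁻¹ • (T (t - 1) u - u)))
          (𝓝[Set.Ioi 1] 1) (𝓝 (T 1 L)) :=
        ((T 1).continuous.tendsto L).comp (hL.comp hmap)
      refine h2.congr' ?_
      filter_upwards [self_mem_nhdsWithin] with t ht
      have htu : T t u = T 1 (T (t - 1) u) := by
        have h3 := hTadd 1 zero_le_one (t - 1) (by simp only [mem_Ioi] at ht; linarith)
        have h4 : (1 : ℝ) + (t - 1) = t := by ring
        rw [h4] at h3
        simp [h3]
      rw [slope_def_module, htu, ← map_sub, ← _root_.map_smul]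
    have h2 : Tendsto (slope (fun t => T t u) 1) (𝓝[Set.Ioi 1] 1) (𝓝 y) := by
      have := hasDerivWithinAt_iff_tendsto_slope.1 hdiff
      exact this.mono_left (nhdsWithin_mono _ (fun t ht => ⟨Set.mem_Ici.mpr (le_of_lt (le_of_lt (Set.mem_Ioi.mp ht) |>.trans_lt' zero_lt_one)), ne_of_gt (Set.mem_Ioi.mp ht)⟩))
    exact tendsto_nhds_unique h1 h2
  · rintro ⟨w, hw⟩
    -- derivative of t ↦ T t u on [1, 2]
    have hder : ∀ t ∈ Set.Icc (1:ℝ) 2, HasDerivAt (fun τ => T τ u) (T (t - 1) y) t := by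
      intro t ht
      have hc0 : (0:ℝ) ≤ t - 1 := by linarith [ht.1]
      have hs : HasDerivAt (fun τ : ℝ => T (τ - (t - 1)) u) y t := by
        refine HasDerivAt.comp_sub_const (f := fun s : ℝ => T s u) t (t - 1) ?_
        have : t - (t - 1) = 1 := by ring
        rw [this]; exact hg1
      have hcd : HasDerivAt (fun τ : ℝ => T (t - 1) (T (τ - (t - 1)) u)) (T (t - 1) y) t :=
        (T (t - 1)).hasFDerivAt.comp_hasDerivAt t hs
      refine hcd.congr_of_eventuallyEq ?_
      filter_upwards [Ioi_mem_nhds (show t - 1 < t by linarith)] with τ hτ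
      have h3 := hTadd (t - 1) hc0 (τ - (t - 1)) (by simp only [mem_Ioi] at hτ; linarith)
      have h4 : (t - 1) + (τ - (t - 1)) = τ := by ring
      rw [h4] at h3
      simp [h3]
    have key : ∀ h ∈ Set.Ioc (0:ℝ) 1, T h u - u = ∫ r in (0:ℝ)..h, T r w := by
      intro h hh
      obtain ⟨hh0, hh1⟩ := hh
      have hb1 : (1:ℝ) ≤ 1 + h := by linarith
      have huIcc : Set.uIcc (1:ℝ) (1 + h) = Set.Icc 1 (1 + h) := uIcc_of_le hb1
      have hint : IntervalIntegrable (fun s => T (s - 1) y) volume 1 (1 + h) := by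
        apply ContinuousOn.intervalIntegrable
        rw [huIcc]
        refine (hTcont y).comp (continuousOn_id.sub continuousOn_const) ?_
        intro s hs
        exact sub_nonneg.2 (by linarith [hs.1, hs.2] : (1:ℝ) ≤ s)
      have hftc := intervalIntegral.integral_eq_sub_of_hasDerivAt
        (f := fun τ => T τ u) (f' := fun s => T (s - 1) y)
        (fun s hs => by
          rw [huIcc] at hs
          exact hder s ⟨hs.1, by linarith [hs.2]⟩) hint
      -- rewrite integrand
      have hiw : ∀ s ∈ Set.uIcc (1:ℝ) (1 + h), T (s - 1) y = T 1 (T (s - 1) w) := by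
        intro s hs
        rw [huIcc] at hs
        have hs1 : (0:ℝ) ≤ s - 1 := by linarith [hs.1]
        have e1 := hTadd (s - 1) hs1 1 zero_le_one
        have e2 := hTadd 1 zero_le_one (s - 1) hs1
        have e3 : (s - 1) + 1 = 1 + (s - 1) := by ring
        rw [e3] at e1
        rw [← hw]
        have ecomm : (T (s - 1)).comp (T 1) = (T 1).comp (T (s - 1)) := by
          rw [← e1, e2]
        calc T (s - 1) (T 1 w) = ((T (s - 1)).comp (T 1)) w := by
              rw [ContinuousLinearMap.comp_apply]
          _ = ((T 1).comp (T (s - 1))) w := by rw [ecomm]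
          _ = T 1 (T (s - 1) w) := by rw [ContinuousLinearMap.comp_apply]
      rw [intervalIntegral.integral_congr hiw] at hftc
      have hsub : (∫ s in (1:ℝ)..(1 + h), T 1 (T (s - 1) w))
          = ∫ r in (0:ℝ)..h, T 1 (T r w) := by
        have := intervalIntegral.integral_comp_sub_right (a := (1:ℝ)) (b := 1 + h)
          (fun r => T 1 (T r w)) 1
        simpa using this
      rw [hsub] at hftc
      have hintw : IntervalIntegrable (fun r => T r w) volume 0 h := by
        apply ContinuousOn.intervalIntegrable
        rw [uIcc_of_le hh0.le]
        exact (hTcont w).mono (fun r hr => hr.1)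
      rw [ContinuousLinearMap.intervalIntegral_comp_comm _ hintw] at hftc
      -- LHS: T (1+h) u - T 1 u = T 1 (T h u - u)
      have hlhs : T (1 + h) u - T 1 u = T 1 (T h u - u) := by
        have e := hTadd 1 zero_le_one h hh0.le
        rw [map_sub, e, ContinuousLinearMap.comp_apply]
      rw [hlhs] at hftc
      exact hinj hftc.symm
    -- the limit
    refine ⟨w, ?_⟩
    have hcontw : ContinuousOn (fun r => T r w) (Set.Ici 0) := hTcont w
    have hF : HasDerivWithinAt (fun h : ℝ => ∫ r in (0:ℝ)..h, T r w)
        ((fun r => T r w) 0) (Set.Ici 0) 0 := by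
      refine intervalIntegral.integral_hasDerivWithinAt_right ?_ ?_ ?_
      · simp
      · exact (hcontw.mono Ioi_subset_Ici_self).stronglyMeasurableAtFilter_nhdsWithin
          measurableSet_Ioi 0
      · exact (hcontw 0 self_mem_Ici).mono Ioi_subset_Ici_self
    rw [hasDerivWithinAt_iff_tendsto_slope] at hF
    rw [Set.Ici_sdiff_left] at hF
    have hT0w : (fun r => T r w) 0 = w := by show T 0 w = w; rw [hT0]; rfl
    rw [hT0w] at hF
    refine hF.congr' ?_
    filter_upwards [Ioc_mem_nhdsGT_of_mem ⟨le_refl 0, zero_lt_one⟩] with h hh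
    rw [slope_def_module]
    simp only [intervalIntegral.integral_same, sub_zero]
    rw [← key h hh]
end

section
/- Optimization core lemma for logarithmic rates: Let p ≥ 0 be real, ν ≥ 1 an integer, and δ₀ ∈ (0,1). There exists a constant C > 0, depending only on p, ν and δ₀, such that for all M ≥ 0, c ≥ 0, δ ∈ (0, δ₀] and N ≥ 0: if N ≤ M α^p (log(1/α))^{−ν} + c δ/α for every α ∈ (0,1), then N ≤ C max(M, c) δ^{p/(p+1)} (log(1/δ))^{−ν/(p+1)}. -/
set_option maxHeartbeats 1000000 in
/-- Optimization core lemma for logarithmic rates. -/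
theorem stmt6 (p : ℝ) (ν : ℕ) (δ₀ : ℝ) (hp : 0 ≤ p) (hν : 1 ≤ ν)
    (hδ₀ : δ₀ ∈ Set.Ioo (0:ℝ) 1) :
    ∃ C > (0:ℝ), ∀ M c δ N : ℝ, 0 ≤ M → 0 ≤ c → δ ∈ Set.Ioc 0 δ₀ → 0 ≤ N →
      (∀ α ∈ Set.Ioo (0:ℝ) 1,
        N ≤ M * α ^ p / (Real.log (1 / α)) ^ ν + c * δ / α) →
      N ≤ C * max M c * δ ^ (p / (p + 1)) / (Real.log (1 / δ)) ^ ((ν : ℝ) / (p + 1)) := by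
  obtain ⟨hδ₀0, hδ₀1⟩ := hδ₀
  set q : ℝ := p + 1 with hq
  have hq1 : 1 ≤ q := by rw [hq]; linarith
  have hq0 : 0 < q := by linarith
  have hν1 : (1:ℝ) ≤ (ν:ℝ) := by exact_mod_cast hν
  set B : ℝ := 16 * (ν:ℝ)^2 with hB
  have hB16 : (16:ℝ) ≤ B := by nlinarith [hν1, sq_nonneg ((ν:ℝ) - 1)]
  have hB1 : (1:ℝ) ≤ B := by linarith
  have hlog2 : 0 < Real.log 2 := Real.log_pos (by norm_num)
  set K : ℝ := ((Real.log 2)⁻¹)^ν + 2 with hK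
  have hK0 : 0 < K := by positivity
  set C1 : ℝ := (2*q)^ν + 1 with hC1
  have hC10 : 0 < C1 := by positivity
  set C2 : ℝ := K * Real.exp B * B ^ (ν:ℝ) with hC2
  have hC20 : 0 < C2 := by positivity
  refine ⟨max C1 C2, lt_of_lt_of_le hC10 (le_max_left _ _), ?_⟩
  intro M c δ N hM hc hδ hN h
  obtain ⟨hδpos, hδle⟩ := hδ
  have hδ1 : δ < 1 := lt_of_le_of_lt hδle hδ₀1
  set L : ℝ := Real.log (1/δ) with hLdef
  have hLinv : L = -Real.log δ := by rw [hLdef, one_div, Real.log_inv]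
  have hL0 : 0 < L := by
    rw [hLinv]
    simpa using Real.log_neg hδpos hδ1
  set mx := max M c with hmx
  have hmx0 : 0 ≤ mx := le_trans hM (le_max_left _ _)
  have hM_le : M ≤ mx := le_max_left _ _
  have hc_le : c ≤ mx := le_max_right _ _
  have hXpos : 0 < δ ^ (p/q) / L ^ ((ν:ℝ)/q) := by positivity
  by_cases hcase : B ≤ L
  · -- small δ case: α = δ^(1/q) * L^(ν/q)
    have hsqpos : 0 < Real.sqrt L := Real.sqrt_pos.mpr hL0
    have hsq : 4 * (ν:ℝ) ≤ Real.sqrt L := by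
      refine (Real.le_sqrt (by positivity) hL0.le).mpr ?_
      calc (4*(ν:ℝ))^2 = B := by rw [hB]; ring
        _ ≤ L := hcase
    have hsqL : Real.sqrt L ^ 2 = L := Real.sq_sqrt hL0.le
    have hlogL : Real.log L ≤ 2 * Real.sqrt L := by
      have h1 := Real.log_le_sub_one_of_pos hsqpos
      have h2 : Real.log (Real.sqrt L) = Real.log L / 2 := Real.log_sqrt hL0.le
      linarith
    have hνlog : (ν:ℝ) * Real.log L ≤ L / 2 := by
      have h1 : (ν:ℝ) * Real.log L ≤ (ν:ℝ) * (2 * Real.sqrt L) :=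
        mul_le_mul_of_nonneg_left hlogL (by positivity)
      have hsqL' : Real.sqrt L * Real.sqrt L = L := Real.mul_self_sqrt hL0.le
      have h2 := mul_le_mul_of_nonneg_right hsq hsqpos.le
      linarith
    set α : ℝ := δ ^ (1/q) * L ^ ((ν:ℝ)/q) with hα
    have hα0 : 0 < α := by positivity
    have hlogα : Real.log α = (Real.log δ + (ν:ℝ) * Real.log L) / q := by
      rw [hα, Real.log_mul (by positivity) (by positivity), Real.log_rpow hδpos,
        Real.log_rpow hL0]
      ring
    have hlogα_neg : Real.log α < 0 := by
      rw [hlogα]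
      apply div_neg_of_neg_of_pos _ hq0
      have hld : Real.log δ = -L := by rw [hLinv]; ring
      rw [hld]; linarith
    have hα1 : α < 1 := (Real.log_neg_iff hα0).mp hlogα_neg
    have hNα := h α ⟨hα0, hα1⟩
    set T := Real.log (1/α) with hT
    have hTval : T = (L - (ν:ℝ) * Real.log L) / q := by
      rw [hT, one_div, Real.log_inv, hlogα, hLinv]; ring
    have hT2 : L / (2*q) ≤ T := by
      rw [hTval, ← div_div]
      exact (div_le_div_iff_of_pos_right hq0).mpr (by linarith)
    have hT0 : 0 < T := lt_of_lt_of_le (by positivity) hT2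
    set X : ℝ := δ ^ (p/q) * L ^ (-((ν:ℝ)/q)) with hX
    have hX0 : 0 ≤ X := by positivity
    have hαp : α ^ p = δ ^ (p/q) * L ^ ((ν:ℝ)*p/q) := by
      rw [hα, Real.mul_rpow (by positivity) (by positivity),
        ← Real.rpow_mul hδpos.le, ← Real.rpow_mul hL0.le]
      rw [show 1/q*p = p/q from by ring, show (ν:ℝ)/q*p = (ν:ℝ)*p/q from by ring]
    have hcδα : c * δ / α = c * X := by
      have hprod : X * α = δ := by
        rw [hX, hα, show δ ^ (p/q) * L ^ (-((ν:ℝ)/q)) * (δ ^ (1/q) * L ^ ((ν:ℝ)/q))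
              = (δ ^ (p/q) * δ ^ (1/q)) * (L ^ (-((ν:ℝ)/q)) * L ^ ((ν:ℝ)/q)) from by ring,
          ← Real.rpow_add hδpos, ← Real.rpow_add hL0, ← add_div, ← hq,
          div_self hq0.ne']
        norm_num
      have hαne : α ≠ 0 := hα0.ne'
      rw [← hprod]
      field_simp
    have hMterm : M * α ^ p / T ^ ν ≤ (2*q)^ν * (M * X) := by
      have h1 : M * α ^ p / T ^ ν ≤ M * α ^ p / (L/(2*q)) ^ ν := by
        gcongr
      have h2 : M * α ^ p / (L/(2*q)) ^ ν = (2*q)^ν * (M * X) := by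
        rw [hαp, div_pow, hX,
          show -((ν:ℝ)/q) = (ν:ℝ)*p/q - (ν:ℝ) from by rw [hq]; field_simp; ring,
          Real.rpow_sub hL0, Real.rpow_natCast]
        have hLν : (0:ℝ) < L ^ ν := by positivity
        have h2q : (0:ℝ) < (2*q)^ν := by positivity
        field_simp
      linarith [h1, h2 ▸ h1]
    have hsum : N ≤ ((2*q)^ν * M + c) * X := by
      calc N ≤ M * α ^ p / T ^ ν + c * δ / α := hNα
        _ ≤ (2*q)^ν * (M * X) + c * X := by rw [hcδα]; exact add_le_add hMterm le_rfl
        _ = ((2*q)^ν * M + c) * X := by ring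
    have hfin : ((2*q)^ν * M + c) * X ≤ max C1 C2 * mx * X := by
      apply mul_le_mul_of_nonneg_right _ hX0
      have h2q : (0:ℝ) ≤ (2*q)^ν := by positivity
      have hC1max : C1 ≤ max C1 C2 := le_max_left _ _
      have h3 : (2*q)^ν * M + c ≤ C1 * mx := by
        rw [hC1]
        have h4 := mul_le_mul_of_nonneg_left hM_le h2q
        have : ((2*q)^ν + 1) * mx = (2*q)^ν * mx + mx := by ring
        linarith
      have h5 := mul_le_mul_of_nonneg_right hC1max hmx0
      linarith
    have hgoal : max C1 C2 * mx * δ ^ (p/q) / L ^ ((ν:ℝ)/q) = max C1 C2 * mx * X := by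
      rw [hX, Real.rpow_neg hL0.le, div_eq_mul_inv]; ring
    rw [hgoal]
    exact le_trans hsum hfin
  · -- large δ case: α = 1/2
    push_neg at hcase
    have hhalf := h (1/2) ⟨by norm_num, by norm_num⟩
    have hlog12 : Real.log (1/(1/2):ℝ) = Real.log 2 := by norm_num
    rw [hlog12] at hhalf
    have hb1 : M * (1/2:ℝ) ^ p / (Real.log 2) ^ ν ≤ mx * ((Real.log 2)⁻¹)^ν := by
      have h12 : ((1:ℝ)/2) ^ p ≤ 1 := Real.rpow_le_one (by norm_num) (by norm_num) hp
      rw [div_eq_mul_inv, ← inv_pow]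
      have hip : (0:ℝ) ≤ ((Real.log 2)⁻¹)^ν := by positivity
      calc M * (1/2:ℝ) ^ p * ((Real.log 2)⁻¹)^ν
          ≤ M * ((Real.log 2)⁻¹)^ν :=
            mul_le_mul_of_nonneg_right (mul_le_of_le_one_right hM h12) hip
        _ ≤ mx * ((Real.log 2)⁻¹)^ν := mul_le_mul_of_nonneg_right hM_le hip
    have hb2 : c * δ / (1/2:ℝ) ≤ 2 * mx := by
      have he : c * δ / (1/2:ℝ) = 2*(c*δ) := by ring
      rw [he]
      have h2 := mul_le_mul_of_nonneg_left hδ1.le hc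
      have h3 : c * δ ≤ c := by linarith [h2]
      linarith
    have hNK : N ≤ K * mx := by
      rw [hK]
      calc N ≤ M * (1/2:ℝ) ^ p / (Real.log 2) ^ ν + c * δ / (1/2:ℝ) := hhalf
        _ ≤ mx * ((Real.log 2)⁻¹)^ν + 2 * mx := add_le_add hb1 hb2
        _ = (((Real.log 2)⁻¹)^ν + 2) * mx := by ring
    have hδB : Real.exp (-B) ≤ δ := by
      have : -B ≤ Real.log δ := by rw [hLinv] at hcase; linarith
      calc Real.exp (-B) ≤ Real.exp (Real.log δ) := Real.exp_le_exp.mpr this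
        _ = δ := Real.exp_log hδpos
    have hδpq : Real.exp (-B) ≤ δ ^ (p/q) := by
      calc Real.exp (-B) ≤ δ := hδB
        _ = δ ^ (1:ℝ) := (Real.rpow_one δ).symm
        _ ≤ δ ^ (p/q) := Real.rpow_le_rpow_of_exponent_ge hδpos hδ1.le
            (by rw [div_le_one hq0]; linarith)
    have hLB : L ^ ((ν:ℝ)/q) ≤ B ^ (ν:ℝ) := by
      rcases le_or_gt 1 L with h1 | h1
      · calc L ^ ((ν:ℝ)/q) ≤ L ^ ((ν:ℝ)) :=
              Real.rpow_le_rpow_of_exponent_le h1 (by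
                rw [div_le_iff₀ hq0]; nlinarith)
          _ ≤ B ^ (ν:ℝ) := Real.rpow_le_rpow hL0.le hcase.le (by positivity)
      · calc L ^ ((ν:ℝ)/q) ≤ 1 := Real.rpow_le_one hL0.le h1.le (by positivity)
          _ = B ^ (0:ℝ) := (Real.rpow_zero B).symm
          _ ≤ B ^ (ν:ℝ) := Real.rpow_le_rpow_of_exponent_le hB1 (by positivity)
    have hBν : (0:ℝ) < B ^ (ν:ℝ) := by positivity
    have hLν : (0:ℝ) < L ^ ((ν:ℝ)/q) := by positivity
    have hdiv : Real.exp (-B) / B ^ (ν:ℝ) ≤ δ ^ (p/q) / L ^ ((ν:ℝ)/q) := by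
      apply div_le_div₀ (by positivity) hδpq hLν hLB
    have hmain : K ≤ max C1 C2 * (δ ^ (p/q) / L ^ ((ν:ℝ)/q)) := by
      have hKeq : K = C2 * (Real.exp (-B) / B ^ (ν:ℝ)) := by
        rw [hC2, Real.exp_neg]
        field_simp
      calc K = C2 * (Real.exp (-B) / B ^ (ν:ℝ)) := hKeq
        _ ≤ C2 * (δ ^ (p/q) / L ^ ((ν:ℝ)/q)) := mul_le_mul_of_nonneg_left hdiv hC20.le
        _ ≤ max C1 C2 * (δ ^ (p/q) / L ^ ((ν:ℝ)/q)) :=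
            mul_le_mul_of_nonneg_right (le_max_right _ _) hXpos.le
    calc N ≤ K * mx := hNK
      _ ≤ (max C1 C2 * (δ ^ (p/q) / L ^ ((ν:ℝ)/q))) * mx :=
          mul_le_mul_of_nonneg_right hmain hmx0
      _ = max C1 C2 * mx * δ ^ (p/q) / L ^ ((ν:ℝ)/q) := by ring
end

section
/- Asymptotics of the inverse index function (Appendix, item (b)): Let q > 0 and μ > 0, and let χ(t) = t^q (log(1/t))^{−μ} for t ∈ (0,1). If ψ : (0, s₀) → (0,1) is any function satisfying χ(ψ(s)) = s for all s ∈ (0, s₀) (for some s₀ > 0), then ψ(s) / (q^{−μ/q} s^{1/q} (log(1/s))^{μ/q}) → 1 as s → 0⁺. -/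
open Filter Real Set Topology

lemma glim (q μ : ℝ) (hq : 0 < q) (hμ : 0 < μ) :
    Tendsto (fun x : ℝ => (q*x/(q*x + μ*Real.log x))^(μ/q)) atTop (𝓝 1) := by
  have h1 : Tendsto (fun x : ℝ => Real.log x / x) atTop (𝓝 0) :=
    Real.isLittleO_log_id_atTop.tendsto_div_nhds_zero
  have h2 : Tendsto (fun x : ℝ => 1 + (μ/q) * (Real.log x / x)) atTop (𝓝 1) := by
    have := (h1.const_mul (μ/q)).const_add 1
    simpa using this
  have h3 : Tendsto (fun x : ℝ => (1 + (μ/q) * (Real.log x / x))⁻¹) atTop (𝓝 1) := by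
    simpa using h2.inv₀ one_ne_zero
  have h4 : Tendsto (fun y : ℝ => y ^ (μ/q)) (𝓝 1) (𝓝 1) := by
    have := (Real.continuousAt_rpow_const 1 (μ/q) (Or.inl one_ne_zero)).tendsto
    simpa using this
  refine (h4.comp h3).congr' ?_
  filter_upwards [eventually_ge_atTop 1] with x hx
  have hlog : 0 ≤ Real.log x := Real.log_nonneg hx
  have hx0 : 0 < x := lt_of_lt_of_le one_pos hx
  have hpos : 0 < q*x + μ*Real.log x := by positivity
  have : (1 + (μ/q) * (Real.log x / x))⁻¹ = q*x/(q*x + μ*Real.log x) := by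
    field_simp
  simp [Function.comp, this]

/-- Asymptotics of the inverse index function (Appendix, item (b)). -/
theorem stmt9 (q μ : ℝ) (hq : 0 < q) (hμ : 0 < μ) (s₀ : ℝ) (hs₀ : 0 < s₀)
    (ψ : ℝ → ℝ)
    (hψ : ∀ s ∈ Set.Ioo (0:ℝ) s₀, ψ s ∈ Set.Ioo (0:ℝ) 1 ∧
      (ψ s) ^ q * (Real.log (1 / ψ s)) ^ (-μ) = s) :
    Filter.Tendsto
      (fun s : ℝ => ψ s / (q ^ (-μ / q) * s ^ (1 / q) * (Real.log (1 / s)) ^ (μ / q)))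
      (nhdsWithin 0 (Set.Ioi 0)) (nhds 1) := by
  set L : ℝ → ℝ := fun s => Real.log (1 / ψ s) with hLdef
  have hmem : ∀ᶠ s in 𝓝[>] (0:ℝ), s ∈ Set.Ioo (0:ℝ) s₀ :=
    Ioo_mem_nhdsGT_of_mem ⟨le_refl 0, hs₀⟩
  -- Step 1 : ψ → 0
  have hψ0 : Tendsto ψ (𝓝[>] (0:ℝ)) (𝓝 0) := by
    rw [NormedAddCommGroup.tendsto_nhds_zero]
    intro ε hε
    set ε' := min ε (1/2) with hε'def
    have hε'0 : 0 < ε' := lt_min hε (by norm_num)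
    have hε'1 : ε' < 1 := lt_of_le_of_lt (min_le_right _ _) (by norm_num)
    have hlogε' : 0 < Real.log (1/ε') := by
      apply Real.log_pos
      rw [lt_div_iff₀ hε'0]; linarith
    set c := ε' ^ q * (Real.log (1/ε')) ^ (-μ) with hcdef
    have hc0 : 0 < c := by positivity
    filter_upwards [hmem, Ioo_mem_nhdsGT_of_mem ⟨le_refl 0, hc0⟩] with s hs hsc
    obtain ⟨⟨ht0, ht1⟩, heq⟩ := hψ s hs
    have hlt : ψ s < ε' := by
      by_contra hcon
      push_neg at hcon
      have h1 : ε' ^ q ≤ (ψ s) ^ q := Real.rpow_le_rpow hε'0.le hcon hq.le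
      have hlogt : 0 < Real.log (1 / ψ s) := by
        apply Real.log_pos
        rw [lt_div_iff₀ ht0]; linarith
      have h2 : Real.log (1 / ψ s) ≤ Real.log (1/ε') :=
        Real.log_le_log (by positivity) (one_div_le_one_div_of_le hε'0 hcon)
      have h3 : (Real.log (1/ε')) ^ (-μ) ≤ (Real.log (1 / ψ s)) ^ (-μ) :=
        Real.rpow_le_rpow_of_nonpos hlogt h2 (by linarith)
      have h4 : c ≤ (ψ s) ^ q * (Real.log (1 / ψ s)) ^ (-μ) := by
        apply mul_le_mul h1 h3 (by positivity) (by positivity)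
      rw [heq] at h4
      exact absurd hsc.2 (not_lt.mpr h4)
    have : ‖ψ s‖ = ψ s := Real.norm_of_nonneg ht0.le
    rw [this]
    exact lt_of_lt_of_le hlt (min_le_left _ _)
  -- Step 2 : L → ∞
  have hψpos : Tendsto ψ (𝓝[>] (0:ℝ)) (𝓝[>] (0:ℝ)) := by
    apply tendsto_nhdsWithin_of_tendsto_nhds_of_eventually_within _ hψ0
    filter_upwards [hmem] with s hs
    exact (hψ s hs).1.1
  have hLtop : Tendsto L (𝓝[>] (0:ℝ)) atTop := by
    have h1 : Tendsto (fun s => (ψ s)⁻¹) (𝓝[>] (0:ℝ)) atTop :=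
      tendsto_inv_nhdsGT_zero.comp hψpos
    have h2 := Real.tendsto_log_atTop.comp h1
    refine h2.congr fun s => ?_
    simp [hLdef, one_div, Function.comp]
  -- Step 3 : eventual equality and conclusion
  refine ((glim q μ hq hμ).comp hLtop).congr' ?_
  filter_upwards [hmem, hLtop.eventually (eventually_ge_atTop 2),
    self_mem_nhdsWithin] with s hs hL2 hs0
  obtain ⟨⟨ht0, ht1⟩, heq⟩ := hψ s hs
  have hs0' : (0:ℝ) < s := hs0
  have hLpos : 0 < L s := by linarith
  have hlogL : 0 ≤ Real.log (L s) := Real.log_nonneg (by linarith)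
  have hA : 0 < q * L s + μ * Real.log (L s) := by
    have := mul_pos hq hLpos
    nlinarith [mul_nonneg hμ.le hlogL]
  have hlt : Real.log (ψ s) = -(L s) := by
    rw [hLdef]; simp [one_div, Real.log_inv]
  have key1 : Real.log (1/s) = q * L s + μ * Real.log (L s) := by
    rw [one_div, Real.log_inv]
    nth_rewrite 1 [← heq]
    rw [Real.log_mul (by positivity) (by positivity),
      Real.log_rpow ht0, Real.log_rpow hLpos, hlt]
    ring
  have key2 : s ^ (1/q) = ψ s * (L s) ^ (-(μ/q)) := by
    nth_rewrite 1 [← heq]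
    rw [Real.mul_rpow (by positivity) (by positivity),
      ← Real.rpow_mul ht0.le, ← Real.rpow_mul hLpos.le,
      mul_one_div_cancel hq.ne', Real.rpow_one]
    congr 2
    ring
  show (q * L s / (q * L s + μ * Real.log (L s))) ^ (μ/q)
      = ψ s / (q ^ (-μ / q) * s ^ (1 / q) * (Real.log (1 / s)) ^ (μ / q))
  rw [key1, key2]
  have e1 : (-μ/q : ℝ) = -(μ/q) := by ring
  rw [e1, Real.rpow_neg hq.le, Real.rpow_neg hLpos.le,
    Real.div_rpow (by positivity) hA.le, Real.mul_rpow hq.le hLpos.le]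
  have hX : (0:ℝ) < q ^ (μ/q) := Real.rpow_pos_of_pos hq _
  have hY : (0:ℝ) < (L s) ^ (μ/q) := Real.rpow_pos_of_pos hLpos _
  have hZ : (0:ℝ) < (q * L s + μ * Real.log (L s)) ^ (μ/q) :=
    Real.rpow_pos_of_pos hA _
  field_simp
end

section
/- Qualification estimate for iterated Lavrentiev regularization (Example 2.2, decay estimate): Let A be of positive type with constant κ*, let m ≥ 1 be an integer, and for α > 0 set S_α := α^m B_α^m (the m-fold composition of αB_α). Then for every integer k with 0 ≤ k ≤ m and every α > 0, ‖S_α ∘ A^k‖ ≤ (κ* + 1)^m α^k. -/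
set_option maxHeartbeats 1000000
set_option synthInstance.maxHeartbeats 1000000

private lemma pow_norm_le {X : Type*} [NormedAddCommGroup X] [NormedSpace ℝ X]
    (f : X →L[ℝ] X) (c : ℝ) (hf : ‖f‖ ≤ c) : ∀ n : ℕ, ‖f ^ n‖ ≤ c ^ n := by
  intro n
  induction n with
  | zero => rw [pow_zero, pow_zero]; exact ContinuousLinearMap.norm_id_le
  | succ n ih =>
      calc ‖f ^ (n + 1)‖ = ‖f ^ n * f‖ := by rw [pow_succ]
        _ ≤ ‖f ^ n‖ * ‖f‖ := norm_mul_le _ _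
        _ ≤ c ^ n * c := by
            have h0 : (0:ℝ) ≤ ‖f‖ := norm_nonneg _
            exact mul_le_mul ih hf h0 (le_trans (by positivity) (pow_le_pow_left₀ h0 hf n))
        _ = c ^ (n + 1) := (pow_succ c n).symm

/-- Qualification estimate for iterated Lavrentiev regularization
(Example 2.2, decay estimate). -/
theorem stmt12 {X : Type*} [NormedAddCommGroup X] [NormedSpace ℝ X]
    (A : X →L[ℝ] X) (κst : ℝ) (hκ : 0 < κst) (B : ℝ → X →L[ℝ] X)
    (hB1 : ∀ α > (0:ℝ), (A + α • (1 : X →L[ℝ] X)).comp (B α) = 1)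
    (hB2 : ∀ α > (0:ℝ), (B α).comp (A + α • (1 : X →L[ℝ] X)) = 1)
    (hBnorm : ∀ α > (0:ℝ), ‖B α‖ ≤ κst / α)
    (m : ℕ) (hm : 1 ≤ m) :
    ∀ k : ℕ, k ≤ m → ∀ α > (0:ℝ),
      ‖((α • B α) ^ m).comp (A ^ k)‖ ≤ (κst + 1) ^ m * α ^ k := by
  intro k hk α hα
  set S : X →L[ℝ] X := α • B α with hS
  -- basic identities in the ring X →L[ℝ] X
  have h1 : A * B α + S = 1 := by
    have := hB1 α hα
    rw [ContinuousLinearMap.mul_def] at *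
    rw [← this, ContinuousLinearMap.add_comp, ContinuousLinearMap.smul_comp,
      ContinuousLinearMap.one_def, ContinuousLinearMap.id_comp]
  have h2 : B α * A + S = 1 := by
    have := hB2 α hα
    rw [ContinuousLinearMap.mul_def] at *
    rw [← this, ContinuousLinearMap.comp_add, ContinuousLinearMap.comp_smul,
      ContinuousLinearMap.one_def, ContinuousLinearMap.comp_id]
  have hAB : A * B α = 1 - S := eq_sub_of_add_eq h1
  have hBA : B α * A = 1 - S := eq_sub_of_add_eq h2
  have hcomm : Commute S A := by
    show S * A = A * S
    rw [hS, smul_mul_assoc, mul_smul_comm, hBA, hAB]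
  -- norms
  have hSnorm : ‖S‖ ≤ κst := by
    refine (norm_smul_le α (B α)).trans ?_
    rw [Real.norm_of_nonneg hα.le]
    calc α * ‖B α‖ ≤ α * (κst / α) := by
          exact mul_le_mul_of_nonneg_left (hBnorm α hα) hα.le
      _ = κst := by field_simp
  have hSAnorm : ‖S * A‖ ≤ (κst + 1) * α := by
    have : S * A = α • (1 - S) := by rw [hS, smul_mul_assoc, hBA]
    rw [this]
    refine (norm_smul_le α ((1 : X →L[ℝ] X) - S)).trans ?_
    rw [Real.norm_of_nonneg hα.le]
    have : ‖(1 : X →L[ℝ] X) - S‖ ≤ 1 + κst := by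
      calc ‖(1 : X →L[ℝ] X) - S‖ ≤ ‖(1 : X →L[ℝ] X)‖ + ‖S‖ := norm_sub_le _ _
        _ ≤ 1 + κst := add_le_add ContinuousLinearMap.norm_id_le hSnorm
    calc α * ‖(1 : X →L[ℝ] X) - S‖ ≤ α * (1 + κst) :=
          mul_le_mul_of_nonneg_left this hα.le
      _ = (κst + 1) * α := by ring
  -- factorization
  have hfact : S ^ m * A ^ k = S ^ (m - k) * (S * A) ^ k := by
    rw [hcomm.mul_pow, ← mul_assoc, ← pow_add, Nat.sub_add_cancel hk]
  have key : ‖S ^ m * A ^ k‖ ≤ (κst + 1) ^ m * α ^ k := by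
    rw [hfact]
    calc ‖S ^ (m - k) * (S * A) ^ k‖ ≤ ‖S ^ (m - k)‖ * ‖(S * A) ^ k‖ := norm_mul_le _ _
      _ ≤ κst ^ (m - k) * ((κst + 1) * α) ^ k := by
          refine mul_le_mul (pow_norm_le _ _ hSnorm _) (pow_norm_le _ _ hSAnorm _)
            (norm_nonneg _) (by positivity)
      _ ≤ (κst + 1) ^ (m - k) * ((κst + 1) * α) ^ k := by
          have : κst ^ (m - k) ≤ (κst + 1) ^ (m - k) :=
            pow_le_pow_left₀ hκ.le (by linarith) _
          exact mul_le_mul_of_nonneg_right this (by positivity)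
      _ = (κst + 1) ^ m * α ^ k := by
          rw [mul_pow, ← mul_assoc, ← pow_add, Nat.sub_add_cancel hk]
  exact key
end

section
/- Derivative of the Abel integral operator with respect to the order at α = 1 (identity (5.3), pointwise form): Let u : [0,1] → ℝ be continuous and let x ∈ (0,1]. Then the function α ↦ (1/Γ(α)) ∫₀^x (x−ξ)^{α−1} u(ξ) dξ, defined for α > 0, is differentiable at α = 1, and its derivative there equals ∫₀^x log(x−ξ) u(ξ) dξ − Γ'(1) ∫₀^x u(ξ) dξ, where Γ is Euler's gamma function and Γ'(1) its derivative at 1 (the negative of the Euler–Mascheroni constant). -/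
set_option maxHeartbeats 1000000


open MeasureTheory

lemma abs_log_le_aux {t : ℝ} (ht : 0 < t) (ht1 : t ≤ 1) :
    |Real.log t| ≤ 4 * t ^ (-(1/4) : ℝ) := by
  have h1 : Real.log t ≤ 0 := Real.log_nonpos ht.le ht1
  rw [abs_of_nonpos h1]
  have h2 : Real.log (t ^ (-(1/4) : ℝ)) = -(1/4) * Real.log t := Real.log_rpow ht _
  have h3 := Real.log_le_sub_one_of_pos (Real.rpow_pos_of_pos ht (-(1/4) : ℝ))
  nlinarith [Real.rpow_pos_of_pos ht (-(1/4) : ℝ)]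

lemma rpow_integrableOn_aux {x : ℝ} (hx : 0 < x) (r : ℝ) (hr : -1 < r) :
    IntegrableOn (fun ξ : ℝ => (x - ξ) ^ r) (Set.Ioc (0:ℝ) x) := by
  have h1 : IntervalIntegrable (fun t : ℝ => t ^ r) volume 0 x :=
    intervalIntegral.intervalIntegrable_rpow' hr
  have h2 := h1.comp_sub_left x
  simp only [sub_self, sub_zero] at h2
  exact h2.2

/-- Derivative of the Abel integral operator with respect to the order at α = 1
(identity (5.3), pointwise form). -/
theorem stmt14 (u : ℝ → ℝ) (hu : ContinuousOn u (Set.Icc 0 1))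
    (x : ℝ) (hx : x ∈ Set.Ioc (0:ℝ) 1) :
    HasDerivAt
      (fun α : ℝ =>
        (1 / Real.Gamma α) * ∫ ξ in Set.Ioc (0:ℝ) x, (x - ξ) ^ (α - 1) * u ξ)
      ((∫ ξ in Set.Ioc (0:ℝ) x, Real.log (x - ξ) * u ξ)
        - deriv Real.Gamma 1 * ∫ ξ in Set.Ioc (0:ℝ) x, u ξ) 1 := by
  obtain ⟨hx0, hx1⟩ := hx
  have hsub : Set.Ioc (0:ℝ) x ⊆ Set.Icc (0:ℝ) 1 := fun ξ hξ =>
    ⟨hξ.1.le, hξ.2.trans hx1⟩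
  -- bound on u
  obtain ⟨M, hM⟩ := isCompact_Icc.exists_bound_of_continuousOn hu
  have hM0 : 0 ≤ M := le_trans (norm_nonneg _) (hM 0 ⟨le_refl 0, zero_le_one⟩)
  -- integrability of u on Ioc 0 x
  have huint : IntegrableOn u (Set.Ioc (0:ℝ) x) :=
    (hu.integrableOn_Icc).mono_set hsub
  set μ := volume.restrict (Set.Ioc (0:ℝ) x) with hμ
  -- a.e. membership in the open interval
  have hae : ∀ᵐ ξ ∂μ, ξ ∈ Set.Ioo (0:ℝ) x := by
    rw [hμ, ← Measure.restrict_congr_set Ioo_ae_eq_Ioc]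
    exact ae_restrict_mem measurableSet_Ioo
  -- measurability helpers
  have hcong : volume.restrict (Set.Ioo (0:ℝ) x) = μ :=
    Measure.restrict_congr_set Ioo_ae_eq_Ioc
  have humeas : AEStronglyMeasurable u μ := huint.aestronglyMeasurable
  have hsub' : ∀ ξ ∈ Set.Ioo (0:ℝ) x, x - ξ ≠ 0 := fun ξ hξ => by
    have : 0 < x - ξ := by linarith [hξ.2]
    exact this.ne'
  have hrpowmeas : ∀ r : ℝ, AEStronglyMeasurable (fun ξ => (x - ξ) ^ r) μ := by
    intro r
    rw [← hcong]
    exact (ContinuousOn.rpow_const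
      ((continuous_const.sub continuous_id).continuousOn)
      (fun ξ hξ => Or.inl (hsub' ξ hξ))).aestronglyMeasurable measurableSet_Ioo
  have hlogmeas : AEStronglyMeasurable (fun ξ => Real.log (x - ξ)) μ := by
    rw [← hcong]
    exact (ContinuousOn.log
      ((continuous_const.sub continuous_id).continuousOn)
      (fun ξ hξ => hsub' ξ hξ)).aestronglyMeasurable measurableSet_Ioo
  have hFmeas : ∀ α : ℝ, AEStronglyMeasurable
      (fun ξ => (x - ξ) ^ (α - 1) * u ξ) μ := fun α =>
    (hrpowmeas (α - 1)).mul humeas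
  have hF'meas : AEStronglyMeasurable
      (fun ξ => Real.log (x - ξ) * ((x - ξ) ^ ((1:ℝ) - 1) * u ξ)) μ :=
    hlogmeas.mul (hFmeas 1)
  -- the derivative of the integral part
  have key : HasDerivAt
      (fun α : ℝ => ∫ ξ in Set.Ioc (0:ℝ) x, (x - ξ) ^ (α - 1) * u ξ)
      (∫ ξ in Set.Ioc (0:ℝ) x, Real.log (x - ξ) * ((x - ξ) ^ ((1:ℝ) - 1) * u ξ)) 1 := by
    refine (hasDerivAt_integral_of_dominated_loc_of_deriv_le (μ := μ) (x₀ := (1:ℝ))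
      (F := fun α ξ => (x - ξ) ^ (α - 1) * u ξ)
      (F' := fun α ξ => Real.log (x - ξ) * ((x - ξ) ^ (α - 1) * u ξ))
      (bound := fun ξ => 4 * M * (x - ξ) ^ (-(3/4) : ℝ))
      (s := Metric.ball 1 (1/2)) (Metric.ball_mem_nhds _ (by norm_num))
      (Filter.Eventually.of_forall hFmeas)
      ?_ hF'meas ?_ (Integrable.const_mul (rpow_integrableOn_aux hx0 (-(3/4)) (by norm_num)) (4*M))
      ?_).2
    · -- integrability of F 1
      apply huint.congr ?_
      filter_upwards [hae] with ξ hξ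
      simp
    · -- bound
      filter_upwards [hae] with ξ hξ α hα
      have ht0 : 0 < x - ξ := by linarith [hξ.2]
      have ht1 : x - ξ < 1 := by linarith [hξ.1, hx1]
      have hα' : -(1/2 : ℝ) ≤ α - 1 := by
        rw [Metric.mem_ball, Real.dist_eq] at hα
        have := abs_lt.1 hα
        linarith [this.1]
      have h1 : (x - ξ) ^ (α - 1) ≤ (x - ξ) ^ (-(1/2) : ℝ) :=
        Real.rpow_le_rpow_of_exponent_ge ht0 ht1.le hα'
      have h2 : |Real.log (x - ξ)| ≤ 4 * (x - ξ) ^ (-(1/4) : ℝ) :=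
        abs_log_le_aux ht0 ht1.le
      have h3 : |u ξ| ≤ M := hM ξ (hsub ⟨hξ.1, hξ.2.le⟩)
      have h4 : (0:ℝ) < (x - ξ) ^ (-(1/2) : ℝ) := Real.rpow_pos_of_pos ht0 _
      have h5 : (0:ℝ) < (x - ξ) ^ (-(1/4) : ℝ) := Real.rpow_pos_of_pos ht0 _
      have h6 : (0:ℝ) ≤ (x - ξ) ^ (α - 1) := (Real.rpow_pos_of_pos ht0 _).le
      calc ‖Real.log (x - ξ) * ((x - ξ) ^ (α - 1) * u ξ)‖
          = |Real.log (x - ξ)| * ((x - ξ) ^ (α - 1) * |u ξ|) := by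
            rw [Real.norm_eq_abs, abs_mul, abs_mul, abs_of_nonneg h6]
        _ ≤ (4 * (x - ξ) ^ (-(1/4) : ℝ)) * ((x - ξ) ^ (-(1/2) : ℝ) * M) := by
            apply mul_le_mul h2 ?_ (by positivity) (by positivity)
            exact mul_le_mul h1 h3 (abs_nonneg _) h4.le
        _ = 4 * M * ((x - ξ) ^ (-(1/4) : ℝ) * (x - ξ) ^ (-(1/2) : ℝ)) := by ring
        _ = 4 * M * (x - ξ) ^ (-(3/4) : ℝ) := by
            rw [← Real.rpow_add ht0]; norm_num
    · -- differentiability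
      filter_upwards [hae] with ξ hξ α hα
      have ht0 : 0 < x - ξ := by linarith [hξ.2]
      have h1 : HasDerivAt (fun β : ℝ => (x - ξ) ^ (β - 1))
          ((x - ξ) ^ (α - 1) * Real.log (x - ξ) * 1) α :=
        ((Real.hasStrictDerivAt_const_rpow ht0 (α - 1)).hasDerivAt).comp α
          ((hasDerivAt_id α).sub_const 1)
      have := h1.mul_const (u ξ)
      refine this.congr_deriv ?_
      ring
  -- derivative of 1/Γ
  have hΓd : DifferentiableAt ℝ Real.Gamma 1 :=
    Real.differentiableAt_Gamma (by
      intro n h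
      have h2 : (0:ℝ) ≤ (n:ℝ) := Nat.cast_nonneg n
      linarith)
  have hΓ : HasDerivAt Real.Gamma (deriv Real.Gamma 1) 1 := hΓd.hasDerivAt
  have hΓ1 : Real.Gamma 1 = 1 := Real.Gamma_one
  have hinv : HasDerivAt (fun α : ℝ => 1 / Real.Gamma α)
      (-(deriv Real.Gamma 1)) 1 := by
    have := hΓ.inv (by rw [hΓ1]; norm_num)
    simp only [one_div]
    refine this.congr_deriv ?_
    rw [hΓ1]; ring
  have := hinv.mul key
  refine this.congr_deriv ?_
  rw [hΓ1]
  have e1 : (∫ ξ in Set.Ioc (0:ℝ) x, (x - ξ) ^ ((1:ℝ) - 1) * u ξ)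
      = ∫ ξ in Set.Ioc (0:ℝ) x, u ξ := by
    apply setIntegral_congr_ae measurableSet_Ioc
    filter_upwards with ξ hξ
    rw [show (1:ℝ) - 1 = 0 by norm_num, Real.rpow_zero, one_mul]
  have e2 : (∫ ξ in Set.Ioc (0:ℝ) x, Real.log (x - ξ) * ((x - ξ) ^ ((1:ℝ) - 1) * u ξ))
      = ∫ ξ in Set.Ioc (0:ℝ) x, Real.log (x - ξ) * u ξ := by
    apply setIntegral_congr_ae measurableSet_Ioc
    filter_upwards with ξ hξ
    rw [show (1:ℝ) - 1 = 0 by norm_num, Real.rpow_zero, one_mul]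
  rw [e1, e2]
  ring
end

section
/- Differentiability of the logarithmic Volterra transform (Section 5): Fix 0 < c < 1 and κ > 1, let u(ξ) = (−log(cξ))^{−κ} for ξ ∈ (0,1] with u(0) = 0, and let u'(ξ) = κ (−log(cξ))^{−κ−1} / ξ. Then the function F(x) = ∫₀^x log(x−ξ) u(ξ) dξ is differentiable at every x ∈ (0,1], with F'(x) = ∫₀^x log(x−ξ) u'(ξ) dξ (and this latter integral exists as a Lebesgue integral for every x ∈ (0,1]). -/
open MeasureTheory Set Filter intervalIntegral

noncomputable section
namespace Stmt16Aux



/-- Truncated logarithm kernel. -/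
def kk (r : ℝ) : ℝ := Real.log (max r 0)

/-- Antiderivative of `kk`. -/
def GG (s : ℝ) : ℝ := max s 0 * Real.log (max s 0) - max s 0

lemma kk_of_nonneg {r : ℝ} (h : 0 ≤ r) : kk r = Real.log r := by
  simp [kk, max_eq_left h]

lemma kk_of_nonpos {r : ℝ} (h : r ≤ 0) : kk r = 0 := by
  simp [kk, max_eq_right h]

lemma measurable_kk : Measurable kk :=
  Real.measurable_log.comp (measurable_id.max measurable_const)

lemma continuous_GG : Continuous GG := by
  have h : Continuous fun s : ℝ => max s 0 := continuous_id.max continuous_const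
  exact (Real.continuous_mul_log.comp h).sub h

lemma GG_of_nonpos {s : ℝ} (h : s ≤ 0) : GG s = 0 := by
  simp [GG, max_eq_right h]

lemma GG_hasDerivAt {s : ℝ} (hs : s ≠ 0) : HasDerivAt GG (kk s) s := by
  rcases lt_or_gt_of_ne hs with h | h
  · have he : GG =ᶠ[nhds s] fun _ => (0:ℝ) := by
      filter_upwards [Iio_mem_nhds h] with r hr
      exact GG_of_nonpos (le_of_lt hr)
    have := (hasDerivAt_const s (0:ℝ)).congr_of_eventuallyEq he
    simpa [kk_of_nonpos h.le] using this
  · have he : GG =ᶠ[nhds s] fun r => r * Real.log r - r := by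
      filter_upwards [Ioi_mem_nhds h] with r hr
      simp [GG, max_eq_left (le_of_lt (mem_Ioi.mp hr))]
    have h1 : HasDerivAt (fun r : ℝ => r * Real.log r - r) (Real.log s) s := by
      have h2 := ((hasDerivAt_id s).mul (Real.hasDerivAt_log (ne_of_gt h))).sub (hasDerivAt_id s)
      refine h2.congr_deriv ?_
      simp only [id_eq, one_mul]; rw [mul_inv_cancel₀ (ne_of_gt h)]; ring
    have := h1.congr_of_eventuallyEq he
    simpa [kk_of_nonneg h.le] using this


lemma GG_zero : GG 0 = 0 := GG_of_nonpos le_rfl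

lemma integrableOn_log_Ioc01 : IntegrableOn Real.log (Ioc (0:ℝ) 1) := by
  have h := intervalIntegral.integrableOn_deriv_of_nonneg
    (g := fun s : ℝ => s - s * Real.log s) (g' := fun s => -Real.log s) (a := 0) (b := 1)
    ((continuous_id.sub Real.continuous_mul_log).continuousOn) ?_ ?_
  · have h2 : IntegrableOn (fun s : ℝ => -(-Real.log s)) (Ioc (0:ℝ) 1) := h.neg
    refine IntegrableOn.congr_fun h2 ?_ measurableSet_Ioc
    intro r _; simp
  · intro s hs
    have h2 := (hasDerivAt_id s).sub ((hasDerivAt_id s).mul (Real.hasDerivAt_log (ne_of_gt hs.1)))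
    refine h2.congr_deriv ?_
    simp only [id_eq, one_mul]
    rw [mul_inv_cancel₀ (ne_of_gt hs.1)]
    ring
  · intro s hs
    simp only [neg_nonneg]
    exact Real.log_nonpos hs.1.le hs.2.le

lemma integrableOn_log_Ioc (q : ℝ) : IntegrableOn Real.log (Ioc 0 q) := by
  rcases le_or_gt q 1 with h | h
  · exact integrableOn_log_Ioc01.mono_set (Ioc_subset_Ioc_right h)
  · rw [← Ioc_union_Ioc_eq_Ioc zero_le_one h.le]
    refine integrableOn_log_Ioc01.union ?_
    have hc : ContinuousOn Real.log (Icc 1 q) := fun r hr =>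
      (Real.continuousAt_log (by nlinarith [hr.1] : r ≠ 0)).continuousWithinAt
    exact (hc.integrableOn_Icc).mono_set Ioc_subset_Icc_self

lemma integrableOn_kk_Ioc {p q : ℝ} : IntegrableOn kk (Ioc p q) := by
  have h1 : IntegrableOn kk (Ioc p q ∩ Iic 0) :=
    (integrableOn_zero).congr_fun (fun r hr => (kk_of_nonpos hr.2).symm)
      (measurableSet_Ioc.inter measurableSet_Iic)
  have h2 : IntegrableOn kk (Ioc p q ∩ Ioi 0) := by
    have : IntegrableOn kk (Ioc 0 q) :=
      (integrableOn_log_Ioc q).congr_fun (fun r hr => (kk_of_nonneg hr.1.le).symm)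
        measurableSet_Ioc
    exact this.mono_set (fun r hr => ⟨hr.2, hr.1.2⟩)
  have hu : Ioc p q = (Ioc p q ∩ Iic 0) ∪ (Ioc p q ∩ Ioi 0) := by
    rw [← inter_union_distrib_left, Iic_union_Ioi, inter_univ]
  rw [hu]
  exact h1.union h2

lemma intervalIntegrable_kk (p q : ℝ) : IntervalIntegrable kk volume p q := by
  have main : ∀ p q : ℝ, p ≤ q → IntervalIntegrable kk volume p q := by
    intro p q hpq
    rw [intervalIntegrable_iff_integrableOn_Ioc_of_le hpq]
    exact integrableOn_kk_Ioc
  rcases le_total p q with h | h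
  · exact main p q h
  · exact (main q p h).symm

lemma intervalIntegrable_kk_sub_right (t p q : ℝ) :
    IntervalIntegrable (fun s => kk (s - t)) volume p q := by
  have := (intervalIntegrable_kk (p - t) (q - t)).comp_sub_right t
  simpa using this

lemma intervalIntegrable_kk_sub_left (y p q : ℝ) :
    IntervalIntegrable (fun ξ => kk (y - ξ)) volume p q := by
  have := (intervalIntegrable_kk (y - p) (y - q)).comp_sub_left y
  simpa using this

lemma integral_kk (p q : ℝ) : ∫ r in p..q, kk r = GG q - GG p := by
  have main : ∀ p q : ℝ, 0 ≤ p → p ≤ q → ∫ r in p..q, kk r = GG q - GG p := by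
    intro p q h0 hpq
    refine integral_eq_sub_of_hasDeriv_right_of_le hpq continuous_GG.continuousOn ?_
      (intervalIntegrable_kk p q)
    intro r hr
    exact (GG_hasDerivAt (ne_of_gt (lt_of_le_of_lt h0 hr.1))).hasDerivWithinAt
  have zero : ∀ p q : ℝ, p ≤ q → q ≤ 0 → ∫ r in p..q, kk r = GG q - GG p := by
    intro p q hpq hq0
    rw [GG_of_nonpos hq0, GG_of_nonpos (hpq.trans hq0)]
    rw [intervalIntegral.integral_congr (g := fun _ => (0:ℝ)) ?_]
    · simp
    · intro r hr
      rw [uIcc_of_le hpq] at hr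
      exact kk_of_nonpos (hr.2.trans hq0)
  have ordered : ∀ p q : ℝ, p ≤ q → ∫ r in p..q, kk r = GG q - GG p := by
    intro p q hpq
    rcases le_or_gt q 0 with hq | hq
    · exact zero p q hpq hq
    · rcases le_or_gt 0 p with hp | hp
      · exact main p q hp hpq
      · have h1 := zero p 0 hp.le le_rfl
        have h2 := main 0 q le_rfl hq.le
        rw [← integral_add_adjacent_intervals (intervalIntegrable_kk p 0)
          (intervalIntegrable_kk 0 q), h1, h2, GG_zero]
        ring
  rcases le_total p q with h | h
  · exact ordered p q h
  · rw [integral_symm, ordered q p h]; ring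

lemma integral_kk_sub_right (t p q : ℝ) :
    ∫ s in p..q, kk (s - t) = GG (q - t) - GG (p - t) := by
  rw [intervalIntegral.integral_comp_sub_right (fun r => kk r) t, integral_kk]

lemma integral_kk_sub_left (y p q : ℝ) :
    ∫ ξ in p..q, kk (y - ξ) = GG (y - p) - GG (y - q) := by
  rw [intervalIntegral.integral_comp_sub_left (fun r => kk r) y, integral_kk]

lemma neg_log_le_two_div_sqrt {r : ℝ} (h : 0 < r) : -Real.log r ≤ 2 / Real.sqrt r := by
  have hs : 0 < Real.sqrt r := Real.sqrt_pos.2 h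
  have h2 : Real.log (Real.sqrt r)⁻¹ ≤ (Real.sqrt r)⁻¹ - 1 :=
    Real.log_le_sub_one_of_pos (inv_pos.2 hs)
  rw [Real.log_inv] at h2
  have hlog : Real.log r = 2 * Real.log (Real.sqrt r) := by
    rw [Real.log_sqrt h.le]; ring
  have hd : 2 / Real.sqrt r = 2 * (Real.sqrt r)⁻¹ := by rw [div_eq_mul_inv]
  rw [hlog, hd]
  nlinarith


lemma abs_log_sub_log_le {w r1 r2 : ℝ} (hw : 0 < w) (h1 : w ≤ r1) (h2 : w ≤ r2) :
    |Real.log r1 - Real.log r2| ≤ |r1 - r2| / w := by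
  have main : ∀ r1 r2 : ℝ, w ≤ r1 → w ≤ r2 → r2 ≤ r1 →
      |Real.log r1 - Real.log r2| ≤ |r1 - r2| / w := by
    intro r1 r2 h1 h2 h21
    have hr2 : 0 < r2 := lt_of_lt_of_le hw h2
    have hr1 : 0 < r1 := lt_of_lt_of_le hw h1
    have hmono : Real.log r2 ≤ Real.log r1 := Real.log_le_log hr2 h21
    rw [abs_of_nonneg (by linarith), abs_of_nonneg (by linarith : (0:ℝ) ≤ r1 - r2)]
    have hdiv : Real.log r1 - Real.log r2 = Real.log (r1 / r2) := (Real.log_div hr1.ne' hr2.ne').symm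
    rw [hdiv]
    have h3 : Real.log (r1 / r2) ≤ r1 / r2 - 1 :=
      Real.log_le_sub_one_of_pos (div_pos hr1 hr2)
    have h4 : r1 / r2 - 1 = (r1 - r2) / r2 := by field_simp
    have h5 : (r1 - r2) / r2 ≤ (r1 - r2) / w :=
      div_le_div_of_nonneg_left (by linarith) hw h2
    linarith
  rcases le_total r2 r1 with h | h
  · exact main r1 r2 h1 h2 h
  · rw [abs_sub_comm (Real.log r1), abs_sub_comm r1]
    exact main r2 r1 h2 h1 h

lemma integral_abs_kk_le {l r : ℝ} (hr1 : r ≤ 1) :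
    ∫ t in Ioc l r, |kk t| ≤ 4 * Real.sqrt (max r 0) := by
  have hint : ∀ p q : ℝ, IntegrableOn (fun t => |kk t|) (Ioc p q) :=
    fun p q => integrableOn_kk_Ioc.abs
  have main : ∀ r : ℝ, 0 < r → r ≤ 1 → ∫ t in Ioc 0 r, |kk t| ≤ 4 * Real.sqrt r := by
    intro r hr0 hr1
    have hrpow : IntegrableOn (fun t : ℝ => 2 * t ^ (-(1/2) : ℝ)) (Ioc 0 r) := by
      have := (intervalIntegrable_rpow' (a := 0) (b := r) (by norm_num : (-1:ℝ) < -(1/2)))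
      rw [intervalIntegrable_iff_integrableOn_Ioc_of_le hr0.le] at this
      exact this.const_mul 2
    have hmono : ∫ t in Ioc 0 r, |kk t| ≤ ∫ t in Ioc 0 r, 2 * t ^ (-(1/2) : ℝ) := by
      refine setIntegral_mono_on (hint 0 r) hrpow measurableSet_Ioc ?_
      intro t ht
      have ht0 : 0 < t := ht.1
      have hlog : |kk t| = -Real.log t := by
        rw [kk_of_nonneg ht0.le, abs_of_nonpos (Real.log_nonpos ht0.le (ht.2.trans hr1))]
      rw [hlog]
      have hb := neg_log_le_two_div_sqrt ht0
      have hrw : t ^ (-(1/2) : ℝ) = (Real.sqrt t)⁻¹ := by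
        rw [Real.rpow_neg ht0.le, Real.sqrt_eq_rpow]
      rw [hrw]
      rw [div_eq_mul_inv] at hb
      exact hb
    have hval : ∫ t in Ioc 0 r, 2 * t ^ (-(1/2) : ℝ) = 4 * Real.sqrt r := by
      rw [← intervalIntegral.integral_of_le hr0.le]
      rw [intervalIntegral.integral_const_mul]
      rw [integral_rpow (Or.inl (by norm_num : (-1:ℝ) < -(1/2)))]
      rw [Real.zero_rpow (by norm_num : (-(1/2) : ℝ) + 1 ≠ 0)]
      rw [Real.sqrt_eq_rpow]
      norm_num
      ring
    linarith
  rcases le_or_gt r 0 with hr0 | hr0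
  · have hz : ∫ t in Ioc l r, |kk t| = 0 := by
      rw [setIntegral_congr_fun measurableSet_Ioc (g := fun _ => (0:ℝ))
        (fun t ht => by rw [kk_of_nonpos (ht.2.trans hr0), abs_zero])]
      simp
    rw [hz]
    positivity
  · rw [max_eq_left hr0.le]
    have habs : ∀ᵐ t ∂(volume.restrict (Ioc (0:ℝ) r)), 0 ≤ |kk t| :=
      ae_of_all _ fun t => abs_nonneg _
    rcases le_or_gt 0 l with hl | hl
    · have hsub : ∫ t in Ioc l r, |kk t| ≤ ∫ t in Ioc 0 r, |kk t| :=
        setIntegral_mono_set (hint 0 r) habs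
          (HasSubset.Subset.eventuallyLE (Ioc_subset_Ioc_left hl))
      linarith [main r hr0 hr1]
    · have hsplit : Ioc l r = Ioc l 0 ∪ Ioc 0 r := (Ioc_union_Ioc_eq_Ioc hl.le hr0.le).symm
      rw [hsplit, setIntegral_union ((Ioc_disjoint_Ioc_of_le le_rfl)) measurableSet_Ioc
        (hint l 0) (hint 0 r)]
      have hz : ∫ t in Ioc l 0, |kk t| = 0 := by
        rw [setIntegral_congr_fun measurableSet_Ioc (g := fun _ => (0:ℝ))
          (fun t ht => by rw [kk_of_nonpos ht.2, abs_zero])]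
        simp
      rw [hz]
      linarith [main r hr0 hr1]



def vf (c κ : ℝ) (ξ : ℝ) : ℝ := if 0 < ξ then (-Real.log (c*ξ)) ^ (-κ) else 0
def vf' (c κ : ℝ) (ξ : ℝ) : ℝ := if 0 < ξ then κ * (-Real.log (c*ξ)) ^ (-κ-1) / ξ else 0

lemma measurable_vf (c κ : ℝ) : Measurable (vf c κ) := by
  unfold vf
  apply Measurable.ite (measurableSet_lt measurable_const measurable_id)
  · exact ((Real.measurable_log.comp (measurable_const.mul measurable_id)).neg).pow
      measurable_const
  · exact measurable_const

lemma measurable_vf' (c κ : ℝ) : Measurable (vf' c κ) := by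
  unfold vf'
  apply Measurable.ite (measurableSet_lt measurable_const measurable_id)
  · exact (measurable_const.mul
      (((Real.measurable_log.comp (measurable_const.mul measurable_id)).neg).pow measurable_const)).div
      measurable_id
  · exact measurable_const

variable {c κ a : ℝ}

lemma hasDerivAt_vf (hc0 : 0 < c) {ξ : ℝ} (hξ0 : 0 < ξ) (hξc : c * ξ < 1) :
    HasDerivAt (vf c κ) (vf' c κ ξ) ξ := by
  have hcξ : 0 < c * ξ := mul_pos hc0 hξ0
  have hL : 0 < -Real.log (c * ξ) := neg_pos.2 (Real.log_neg hcξ hξc)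
  have hlog : HasDerivAt (fun x : ℝ => -Real.log (c * x)) (-ξ⁻¹) ξ := by
    have h1 : HasDerivAt (fun x : ℝ => c * x) c ξ := by
      simpa using (hasDerivAt_id ξ).const_mul c
    have h2 := (Real.hasDerivAt_log hcξ.ne').comp ξ h1
    have h3 : (c*ξ)⁻¹ * c = ξ⁻¹ := by field_simp
    have := h2.neg
    rw [h3] at this
    exact this
  have houter := Real.hasDerivAt_rpow_const (x := -Real.log (c * ξ)) (p := -κ) (Or.inl hL.ne')
  have hcomp := houter.comp ξ hlog
  have heq : vf c κ =ᶠ[nhds ξ] fun x => (-Real.log (c * x)) ^ (-κ) := by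
    filter_upwards [Ioi_mem_nhds hξ0] with x hx
    simp [vf, show (0:ℝ) < x from hx]
  have hval : -κ * (-Real.log (c * ξ)) ^ (-κ - 1) * -ξ⁻¹ = vf' c κ ξ := by
    rw [vf', if_pos hξ0, div_eq_mul_inv]
    ring
  rw [hval] at hcomp
  exact hcomp.congr_of_eventuallyEq heq

lemma continuousOn_vf (hc0 : 0 < c) (hκ0 : 0 < κ) (hca : c * a < 1) :
    ContinuousOn (vf c κ) (Icc 0 a) := by
  intro t ht
  rcases eq_or_lt_of_le ht.1 with h0 | h0
  · -- t = 0
    have hv0 : vf c κ 0 = 0 := by simp [vf]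
    rw [← h0]
    unfold ContinuousWithinAt
    rw [hv0]
    have hsub : Icc (0:ℝ) a ⊆ insert 0 (Ioi 0) := by
      intro z hz
      rcases eq_or_lt_of_le hz.1 with h | h
      · exact Or.inl h.symm
      · exact Or.inr h
    refine Filter.Tendsto.mono_left ?_ (nhdsWithin_mono 0 hsub)
    rw [nhdsWithin_insert]
    refine Filter.Tendsto.sup ?_ ?_
    · simpa [hv0] using tendsto_pure_nhds (vf c κ) 0
    · have h1 : Tendsto (fun x : ℝ => c * x) (nhdsWithin 0 (Ioi 0)) (nhdsWithin 0 (Ioi 0)) := by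
        rw [tendsto_nhdsWithin_iff]
        constructor
        · have := (continuous_mul_left c).tendsto 0
          simpa using this.mono_left nhdsWithin_le_nhds
        · filter_upwards [self_mem_nhdsWithin] with x hx
          exact mul_pos hc0 hx
      have h2 : Tendsto (fun x : ℝ => -Real.log (c * x)) (nhdsWithin 0 (Ioi 0)) atTop := by
        have := Real.tendsto_log_nhdsGT_zero.comp h1
        exact tendsto_neg_atBot_atTop.comp this
      have h3 : Tendsto (fun x : ℝ => (-Real.log (c * x)) ^ (-κ)) (nhdsWithin 0 (Ioi 0)) (nhds 0) :=
        (tendsto_rpow_neg_atTop hκ0).comp h2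
      refine h3.congr' ?_
      filter_upwards [self_mem_nhdsWithin] with x hx
      simp [vf, show (0:ℝ) < x from hx]
  · -- 0 < t
    have htc : c * t < 1 := lt_of_le_of_lt
      (mul_le_mul_of_nonneg_left ht.2 hc0.le) hca
    have hct : 0 < c * t := mul_pos hc0 h0
    have hL : 0 < -Real.log (c * t) := neg_pos.2 (Real.log_neg hct htc)
    have hca' : ContinuousAt (vf c κ) t := by
      have hfa : ContinuousAt (fun x : ℝ => (-Real.log (c * x)) ^ (-κ)) t := by
        refine ContinuousAt.rpow_const ?_ (Or.inl hL.ne')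
        exact ((Real.continuousAt_log hct.ne').comp
          ((continuous_const.mul continuous_id).continuousAt)).neg
      refine hfa.congr ?_
      filter_upwards [Ioi_mem_nhds h0] with x hx
      simp [vf, show (0:ℝ) < x from hx]
    exact hca'.continuousWithinAt

lemma vf'_nonneg (hc0 : 0 < c) (hκ0 : 0 < κ) (hca : c * a < 1) :
    ∀ t ∈ Ioc 0 a, 0 ≤ vf' c κ t := by
  intro t ht
  have htc : c * t < 1 := lt_of_le_of_lt (mul_le_mul_of_nonneg_left ht.2 hc0.le) hca
  have hL : 0 < -Real.log (c * t) := neg_pos.2 (Real.log_neg (mul_pos hc0 ht.1) htc)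
  rw [vf', if_pos ht.1]
  exact div_nonneg (mul_nonneg hκ0.le (Real.rpow_nonneg hL.le _)) ht.1.le

lemma integrableOn_vf' (hc0 : 0 < c) (hκ0 : 0 < κ) (ha0 : 0 < a) (hca : c * a < 1) :
    IntegrableOn (vf' c κ) (Ioc 0 a) := by
  refine intervalIntegral.integrableOn_deriv_of_nonneg
    (continuousOn_vf hc0 hκ0 hca) ?_ ?_
  · intro t ht
    exact hasDerivAt_vf hc0 ht.1
      (lt_of_le_of_lt (mul_le_mul_of_nonneg_left ht.2.le hc0.le) hca)
  · intro t ht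
    exact vf'_nonneg hc0 hκ0 hca t ⟨ht.1, ht.2.le⟩

lemma vf_eq_integral (hc0 : 0 < c) (hκ0 : 0 < κ) (ha0 : 0 < a) (hca : c * a < 1) :
    ∀ ξ ∈ Ioc 0 a, vf c κ ξ = ∫ t in Ioc 0 ξ, vf' c κ t := by
  intro ξ hξ
  have hint : IntervalIntegrable (vf' c κ) volume 0 ξ := by
    rw [intervalIntegrable_iff_integrableOn_Ioc_of_le hξ.1.le]
    exact (integrableOn_vf' hc0 hκ0 ha0 hca).mono_set (Ioc_subset_Ioc_right hξ.2)
  have h := integral_eq_sub_of_hasDeriv_right_of_le hξ.1.le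
    ((continuousOn_vf hc0 hκ0 hca).mono (Icc_subset_Icc_right hξ.2)) ?_ hint
  · rw [intervalIntegral.integral_of_le hξ.1.le] at h
    rw [h]
    simp [vf]
  · intro t ht
    exact (hasDerivAt_vf hc0 ht.1
      (lt_of_le_of_lt (mul_le_mul_of_nonneg_left (ht.2.le.trans hξ.2) hc0.le) hca)).hasDerivWithinAt

lemma continuousOn_vf' (hc0 : 0 < c) {b : ℝ} (hb : 0 < b) (hca : c * a < 1) :
    ContinuousOn (vf' c κ) (Icc b a) := by
  intro t ht
  have ht0 : 0 < t := lt_of_lt_of_le hb ht.1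
  have htc : c * t < 1 := lt_of_le_of_lt (mul_le_mul_of_nonneg_left ht.2 hc0.le) hca
  have hct : 0 < c * t := mul_pos hc0 ht0
  have hL : 0 < -Real.log (c * t) := neg_pos.2 (Real.log_neg hct htc)
  have hca' : ContinuousAt (vf' c κ) t := by
    have hfa : ContinuousAt (fun x : ℝ => κ * (-Real.log (c * x)) ^ (-κ-1) / x) t := by
      refine ContinuousAt.div ?_ continuousAt_id ht0.ne'
      refine continuousAt_const.mul ?_
      refine ContinuousAt.rpow_const ?_ (Or.inl hL.ne')
      exact ((Real.continuousAt_log hct.ne').comp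
        ((continuous_const.mul continuous_id).continuousAt)).neg
    refine hfa.congr ?_
    filter_upwards [Ioi_mem_nhds ht0] with x hx
    simp [vf', show (0:ℝ) < x from hx]
  exact hca'.continuousWithinAt


end Stmt16Aux

end

open MeasureTheory Stmt16Aux Set Filter intervalIntegral

set_option maxHeartbeats 2000000 in
/-- Differentiability of the logarithmic Volterra transform (Section 5). -/
theorem stmt16 (c κ : ℝ) (hc : c ∈ Set.Ioo (0:ℝ) 1) (hκ : 1 < κ)
    (u u' : ℝ → ℝ)
    (hu : ∀ ξ : ℝ, 0 < ξ → u ξ = (-Real.log (c * ξ)) ^ (-κ)) (hu0 : u 0 = 0)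
    (hu' : ∀ ξ : ℝ, 0 < ξ → u' ξ = κ * (-Real.log (c * ξ)) ^ (-κ - 1) / ξ) :
    ∀ x ∈ Set.Ioc (0:ℝ) 1,
      IntegrableOn (fun ξ : ℝ => Real.log (x - ξ) * u' ξ) (Set.Ioc 0 x) ∧
      HasDerivAt (fun y : ℝ => ∫ ξ in Set.Ioc (0:ℝ) y, Real.log (y - ξ) * u ξ)
        (∫ ξ in Set.Ioc (0:ℝ) x, Real.log (x - ξ) * u' ξ) x := by
  obtain ⟨hc0, hc1⟩ := hc
  intro x hx
  obtain ⟨hx0, hx1⟩ := hx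
  have hκ0 : 0 < κ := lt_trans one_pos hκ
  set a : ℝ := (1 + c⁻¹)/2 with ha_def
  have hinv : 1 < c⁻¹ := by
    have hcc : c * c⁻¹ = 1 := mul_inv_cancel₀ hc0.ne'
    have hipos : (0:ℝ) < c⁻¹ := inv_pos.2 hc0
    nlinarith
  have ha1 : 1 < a := by rw [ha_def]; linarith
  have ha0 : 0 < a := lt_trans one_pos ha1
  have hac : a < c⁻¹ := by rw [ha_def]; linarith
  have hca : c * a < 1 := by
    have h2 := mul_lt_mul_of_pos_left hac hc0
    rwa [mul_inv_cancel₀ hc0.ne'] at h2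
  have hxa : x < a := lt_of_le_of_lt hx1 ha1
  set v : ℝ → ℝ := vf c κ with hv_def
  set v' : ℝ → ℝ := vf' c κ with hv'_def
  set D : ℝ → ℝ := fun s => ∫ t in Ioc (0:ℝ) a, v' t * kk (s - t) with hD_def
  set H : ℝ → ℝ := fun y => ∫ t in Ioc (0:ℝ) a, v' t * GG (y - t) with hH_def
  have hv'm : Measurable v' := measurable_vf' c κ
  have hv'i : IntegrableOn v' (Ioc 0 a) := integrableOn_vf' hc0 hκ0 ha0 hca
  have hv'nn : ∀ t ∈ Ioc (0:ℝ) a, 0 ≤ v' t := vf'_nonneg hc0 hκ0 hca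
  have hv'ae : 0 ≤ᵐ[volume.restrict (Ioc (0:ℝ) a)] v' :=
    (ae_restrict_iff' measurableSet_Ioc).2 (ae_of_all _ hv'nn)
  have hvftc : ∀ ξ ∈ Ioc (0:ℝ) a, v ξ = ∫ t in Ioc 0 ξ, v' t :=
    vf_eq_integral hc0 hκ0 ha0 hca
  have hu'v : ∀ t : ℝ, 0 < t → u' t = v' t := fun t ht => by
    rw [hu' t ht, hv'_def, vf', if_pos ht]
  have huv : ∀ t : ℝ, 0 < t → u t = v t := fun t ht => by
    rw [hu t ht, hv_def, vf, if_pos ht]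
  have hkkIL : ∀ y : ℝ, IntegrableOn (fun ξ => kk (y - ξ)) (Ioc 0 a) := by
    intro y
    have h2 := intervalIntegrable_kk_sub_left y 0 a
    rwa [intervalIntegrable_iff_integrableOn_Ioc_of_le ha0.le] at h2
  obtain ⟨BG, hBG⟩ : ∃ BG : ℝ, ∀ s ∈ Icc (-a) a, ‖GG s‖ ≤ BG :=
    (isCompact_Icc (a := -a) (b := a)).exists_bound_of_continuousOn continuous_GG.continuousOn
  have hHi : ∀ y ∈ Ioc (0:ℝ) a, Integrable (fun t => v' t * GG (y - t))
      (volume.restrict (Ioc (0:ℝ) a)) := by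
    intro y hy
    refine Integrable.mono' (hv'i.abs.mul_const BG) ?_ ?_
    · exact (hv'm.mul (continuous_GG.measurable.comp
        (measurable_const.sub measurable_id))).aestronglyMeasurable
    · refine (ae_restrict_iff' measurableSet_Ioc).2 (ae_of_all _ fun t ht => ?_)
      rw [Real.norm_eq_abs, abs_mul]
      refine mul_le_mul_of_nonneg_left ?_ (abs_nonneg _)
      have := hBG (y - t) ⟨by linarith [ht.2, hy.1], by linarith [ht.1, hy.2]⟩
      rwa [Real.norm_eq_abs] at this
  have hvk : ∀ s ∈ Ioc (0:ℝ) a, IntegrableOn (fun t => v' t * kk (s - t)) (Ioc 0 a) := by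
    intro s hs
    obtain ⟨C1, hC1⟩ : ∃ C1 : ℝ, ∀ r ∈ Icc (s/2) s, ‖Real.log r‖ ≤ C1 :=
      (isCompact_Icc (a := s/2) (b := s)).exists_bound_of_continuousOn
        (fun r hr => (Real.continuousAt_log
          (by nlinarith [hr.1, hs.1] : r ≠ 0)).continuousWithinAt)
    obtain ⟨C2, hC2⟩ : ∃ C2 : ℝ, ∀ t ∈ Icc (s/2) a, ‖v' t‖ ≤ C2 :=
      (isCompact_Icc (a := s/2) (b := a)).exists_bound_of_continuousOn
        (continuousOn_vf' hc0 (by linarith [hs.1]) hca)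
    have hp1 : IntegrableOn (fun t => v' t * kk (s - t)) (Ioc 0 (s/2)) := by
      refine Integrable.mono'
        ((hv'i.mono_set (Ioc_subset_Ioc_right (by linarith [hs.1, hs.2]))).abs.mul_const C1)
        ((hv'm.mul (measurable_kk.comp
          (measurable_const.sub measurable_id))).aestronglyMeasurable) ?_
      refine (ae_restrict_iff' measurableSet_Ioc).2 (ae_of_all _ fun t ht => ?_)
      rw [Real.norm_eq_abs, abs_mul]
      refine mul_le_mul_of_nonneg_left ?_ (abs_nonneg _)
      have hst : s - t ∈ Icc (s/2) s := ⟨by linarith [ht.2], by linarith [ht.1]⟩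
      rw [kk_of_nonneg (by linarith [hst.1, hs.1] : (0:ℝ) ≤ s - t), ← Real.norm_eq_abs]
      exact hC1 _ hst
    have hp2 : IntegrableOn (fun t => v' t * kk (s - t)) (Ioc (s/2) a) := by
      have hk : IntegrableOn (fun t => kk (s - t)) (Ioc (s/2) a) := by
        have h2 := intervalIntegrable_kk_sub_left s (s/2) a
        rwa [intervalIntegrable_iff_integrableOn_Ioc_of_le (by linarith [hs.1, hs.2])] at h2
      refine Integrable.mono' (hk.abs.const_mul C2)
        ((hv'm.mul (measurable_kk.comp
          (measurable_const.sub measurable_id))).aestronglyMeasurable) ?_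
      refine (ae_restrict_iff' measurableSet_Ioc).2 (ae_of_all _ fun t ht => ?_)
      rw [Real.norm_eq_abs, abs_mul]
      refine mul_le_mul_of_nonneg_right ?_ (abs_nonneg _)
      rw [← Real.norm_eq_abs]
      exact hC2 t ⟨ht.1.le, ht.2⟩
    have hsp : Ioc (0:ℝ) a = Ioc 0 (s/2) ∪ Ioc (s/2) a :=
      (Ioc_union_Ioc_eq_Ioc (by linarith [hs.1]) (by linarith [hs.1, hs.2])).symm
    rw [hsp]
    exact hp1.union hp2
  have hFub1 : ∀ y ∈ Ioc (0:ℝ) a, (∫ ξ in Ioc (0:ℝ) a, kk (y - ξ) * v ξ) = H y := by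
    intro y hy
    set f : ℝ → ℝ → ℝ := fun t ξ => if t ≤ ξ then v' t * kk (y - ξ) else 0 with hf_def
    have hfmeas : AEStronglyMeasurable (Function.uncurry f)
        ((volume.restrict (Ioc (0:ℝ) a)).prod (volume.restrict (Ioc (0:ℝ) a))) := by
      apply Measurable.aestronglyMeasurable
      apply Measurable.ite (measurableSet_le measurable_fst measurable_snd)
      · exact (hv'm.comp measurable_fst).mul
          (measurable_kk.comp (measurable_const.sub measurable_snd))
      · exact measurable_const
    have hfint1 : ∀ t : ℝ, Integrable (f t) (volume.restrict (Ioc (0:ℝ) a)) := by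
      intro t
      have heq : f t = (Ici t).indicator (fun ξ => v' t * kk (y - ξ)) := by
        funext ξ; by_cases h : t ≤ ξ <;> simp [hf_def, Set.indicator_apply, mem_Ici, h]
      rw [heq]
      exact ((hkkIL y).const_mul (v' t)).indicator measurableSet_Ici
    set Cy : ℝ := ∫ ξ in Ioc (0:ℝ) a, |kk (y - ξ)| with hCy_def
    have hfint : Integrable (Function.uncurry f)
        ((volume.restrict (Ioc (0:ℝ) a)).prod (volume.restrict (Ioc (0:ℝ) a))) := by
      rw [integrable_prod_iff hfmeas]
      constructor
      · exact ae_of_all _ hfint1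
      · refine Integrable.mono' (hv'i.abs.mul_const Cy) hfmeas.norm.integral_prod_right' ?_
        refine ae_of_all _ fun t => ?_
        have hnn : 0 ≤ ∫ ξ in Ioc (0:ℝ) a, ‖f t ξ‖ :=
          integral_nonneg fun _ => norm_nonneg _
        simp only [Function.uncurry_apply_pair]
        rw [Real.norm_eq_abs, abs_of_nonneg hnn]
        have hle : ∀ ξ : ℝ, ‖f t ξ‖ ≤ |v' t| * |kk (y - ξ)| := by
          intro ξ
          by_cases h : t ≤ ξ
          · rw [hf_def]; simp only [h, if_true, Real.norm_eq_abs, abs_mul]; exact le_rfl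
          · rw [hf_def]; simp only [h, if_false]
            rw [norm_zero]
            positivity
        calc (∫ ξ in Ioc (0:ℝ) a, ‖f t ξ‖)
            ≤ ∫ ξ in Ioc (0:ℝ) a, |v' t| * |kk (y - ξ)| :=
              integral_mono (hfint1 t).norm ((hkkIL y).abs.const_mul _) hle
          _ = |v' t| * Cy := by rw [hCy_def, MeasureTheory.integral_const_mul]
    have hswap := integral_integral_swap hfint
    have hL : (∫ ξ in Ioc (0:ℝ) a, ∫ t in Ioc (0:ℝ) a, f t ξ)
        = ∫ ξ in Ioc (0:ℝ) a, kk (y - ξ) * v ξ := by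
      refine setIntegral_congr_fun measurableSet_Ioc fun ξ hξ => ?_
      have h1 : (fun t => f t ξ) = fun t => (Iic ξ).indicator v' t * kk (y - ξ) := by
        funext t; by_cases h : t ≤ ξ <;> simp [hf_def, Set.indicator_apply, mem_Iic, h]
      rw [h1, MeasureTheory.integral_mul_const, setIntegral_indicator measurableSet_Iic,
        Ioc_inter_Iic, min_eq_right hξ.2, ← hvftc ξ hξ, mul_comm]
    have hR : (∫ t in Ioc (0:ℝ) a, ∫ ξ in Ioc (0:ℝ) a, f t ξ) = H y := by
      refine setIntegral_congr_fun measurableSet_Ioc fun t ht => ?_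
      have h1 : f t = (Ici t).indicator (fun ξ => v' t * kk (y - ξ)) := by
        funext ξ; by_cases h : t ≤ ξ <;> simp [hf_def, Set.indicator_apply, mem_Ici, h]
      rw [h1, setIntegral_indicator measurableSet_Ici]
      have h2 : Ioc (0:ℝ) a ∩ Ici t = Icc t a := by
        ext z
        simp only [mem_inter_iff, mem_Ioc, mem_Ici, mem_Icc]
        constructor
        · rintro ⟨⟨_, h2⟩, h3⟩; exact ⟨h3, h2⟩
        · rintro ⟨h3, h2⟩; exact ⟨⟨lt_of_lt_of_le ht.1 h3, h2⟩, h3⟩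
      rw [h2, integral_Icc_eq_integral_Ioc, ← intervalIntegral.integral_of_le ht.2,
        intervalIntegral.integral_const_mul, integral_kk_sub_left,
        GG_of_nonpos (by linarith [hy.2] : y - a ≤ 0), sub_zero]
    rw [← hL, ← hswap]
    exact hR
  have hFub2 : ∀ p q : ℝ, 0 < p → p ≤ q → q ≤ a →
      H q - H p = ∫ s in Ioc p q, D s := by
    intro p q hp hpq hqa
    set f : ℝ → ℝ → ℝ := fun t s => v' t * kk (s - t) with hf_def
    have hfmeas : AEStronglyMeasurable (Function.uncurry f)
        ((volume.restrict (Ioc (0:ℝ) a)).prod (volume.restrict (Ioc p q))) :=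
      ((hv'm.comp measurable_fst).mul
        (measurable_kk.comp (measurable_snd.sub measurable_fst))).aestronglyMeasurable
    have hkint : ∀ t : ℝ, IntegrableOn (fun s => kk (s - t)) (Ioc p q) := by
      intro t
      have h2 := intervalIntegrable_kk_sub_right t p q
      rwa [intervalIntegrable_iff_integrableOn_Ioc_of_le hpq] at h2
    set CK : ℝ := ∫ r in Ioc (p - a) q, |kk r| with hCK_def
    have hfint : Integrable (Function.uncurry f)
        ((volume.restrict (Ioc (0:ℝ) a)).prod (volume.restrict (Ioc p q))) := by
      rw [integrable_prod_iff hfmeas]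
      constructor
      · exact ae_of_all _ fun t => (hkint t).const_mul (v' t)
      · refine Integrable.mono' (hv'i.abs.mul_const CK) hfmeas.norm.integral_prod_right'
          ((ae_restrict_iff' measurableSet_Ioc).2 (ae_of_all _ fun t ht => ?_))
        have hnn : 0 ≤ ∫ s in Ioc p q, ‖f t s‖ := integral_nonneg fun _ => norm_nonneg _
        simp only [Function.uncurry_apply_pair]
        rw [Real.norm_eq_abs, abs_of_nonneg hnn]
        have h1 : (∫ s in Ioc p q, ‖f t s‖) = |v' t| * ∫ s in Ioc p q, |kk (s - t)| := by
          simp_rw [hf_def, Real.norm_eq_abs, abs_mul]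
          rw [MeasureTheory.integral_const_mul]
        have h2 : (∫ s in Ioc p q, |kk (s - t)|) = ∫ r in Ioc (p - t) (q - t), |kk r| := by
          rw [← intervalIntegral.integral_of_le hpq,
            intervalIntegral.integral_comp_sub_right (fun r => |kk r|) t,
            intervalIntegral.integral_of_le (by linarith)]
        have h3 : (∫ r in Ioc (p - t) (q - t), |kk r|) ≤ CK := by
          refine setIntegral_mono_set integrableOn_kk_Ioc.abs
            (ae_of_all _ fun r => abs_nonneg _)
            (HasSubset.Subset.eventuallyLE
              (Ioc_subset_Ioc (by linarith [ht.2]) (by linarith [ht.1])))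
        rw [h1, h2]
        exact mul_le_mul_of_nonneg_left h3 (abs_nonneg _)
    have hswap := integral_integral_swap hfint
    have hL : (∫ t in Ioc (0:ℝ) a, ∫ s in Ioc p q, f t s)
        = ∫ t in Ioc (0:ℝ) a, v' t * (GG (q - t) - GG (p - t)) := by
      refine setIntegral_congr_fun measurableSet_Ioc fun t _ => ?_
      rw [← intervalIntegral.integral_of_le hpq]
      show (∫ s in p..q, v' t * kk (s - t)) = _
      rw [intervalIntegral.integral_const_mul, integral_kk_sub_right]
    have hsub : H q - H p = ∫ t in Ioc (0:ℝ) a, v' t * (GG (q - t) - GG (p - t)) := by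
      rw [hH_def]
      simp only []
      rw [← integral_sub (hHi q ⟨lt_of_lt_of_le hp hpq, hqa⟩) (hHi p ⟨hp, hpq.trans hqa⟩)]
      refine setIntegral_congr_fun measurableSet_Ioc fun t _ => ?_
      ring
    rw [hsub, ← hL, hswap]
  have hDcont : ∀ x' ∈ Ioo (0:ℝ) a, ContinuousAt D x' := by
    intro x' hx'
    obtain ⟨hx'0, hx'a⟩ := hx'
    obtain ⟨M, hM⟩ : ∃ M : ℝ, ∀ t ∈ Icc (x'/2) a, ‖v' t‖ ≤ M :=
      (isCompact_Icc (a := x'/2) (b := a)).exists_bound_of_continuousOn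
        (continuousOn_vf' hc0 (by linarith) hca)
    have hM0 : 0 ≤ M := le_trans (norm_nonneg (v' (x'/2))) (hM _ ⟨le_refl _, by linarith⟩)
    set I : ℝ := ∫ t in Ioc (0:ℝ) a, v' t with hI_def
    have hI0 : 0 ≤ I := setIntegral_nonneg measurableSet_Ioc hv'nn
    set g : ℝ → ℝ := fun h => 2 * I * Real.sqrt h + 8 * M * Real.sqrt (3 * Real.sqrt h / 2)
      with hg_def
    set δ₀ : ℝ := min (min (1/4) ((x'/2)^2)) (min ((2/3)^2) ((a - x')/2)) with hδ₀_def
    have hδ₀pos : 0 < δ₀ := by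
      refine lt_min (lt_min (by norm_num) (by positivity)) (lt_min (by norm_num) (by linarith))
    have hkey : ∀ s : ℝ, s ≠ x' → |s - x'| ≤ δ₀ → |D s - D x'| ≤ g (|s - x'|) := by
      intro s hsne hsle
      set h : ℝ := |s - x'| with hh_def
      have hhpos : 0 < h := abs_pos.2 (sub_ne_zero.2 hsne)
      set δ : ℝ := Real.sqrt h with hδ_def
      have hδpos : 0 < δ := Real.sqrt_pos.2 hhpos
      have hc1' : h ≤ 1/4 := le_trans hsle (le_trans (min_le_left _ _) (min_le_left _ _))
      have hc2' : h ≤ (x'/2)^2 := le_trans hsle (le_trans (min_le_left _ _) (min_le_right _ _))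
      have hc3' : h ≤ (2/3)^2 := le_trans hsle (le_trans (min_le_right _ _) (min_le_left _ _))
      have hc4' : h ≤ (a - x')/2 := le_trans hsle (le_trans (min_le_right _ _) (min_le_right _ _))
      have hδx : δ ≤ x'/2 := by
        rw [hδ_def]
        calc Real.sqrt h ≤ Real.sqrt ((x'/2)^2) := Real.sqrt_le_sqrt hc2'
          _ = x'/2 := Real.sqrt_sq (by linarith)
      have hδ23 : δ ≤ 2/3 := by
        rw [hδ_def]
        calc Real.sqrt h ≤ Real.sqrt ((2/3)^2) := Real.sqrt_le_sqrt hc3'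
          _ = 2/3 := Real.sqrt_sq (by norm_num)
      have hhδ : h ≤ δ/2 := by
        have h1 : Real.sqrt h ≤ 1/2 := by
          calc Real.sqrt h ≤ Real.sqrt ((1/2)^2) := Real.sqrt_le_sqrt (by nlinarith)
            _ = 1/2 := Real.sqrt_sq (by norm_num)
        have h2 : Real.sqrt h * Real.sqrt h = h := Real.mul_self_sqrt hhpos.le
        nlinarith [Real.sqrt_nonneg h]
      have habs := abs_le.1 (le_of_eq hh_def.symm : |s - x'| ≤ h)
      have hs1 : x' - δ/2 ≤ s := by
        have := habs.1; linarith [hhδ]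
      have hs2 : s ≤ x' + δ/2 := by
        have := habs.2; linarith [hhδ]
      set m : ℝ := x' - δ with hm_def
      have hm0 : 0 < m := by rw [hm_def]; linarith
      have hms : m < s := by rw [hm_def]; linarith
      have hsh : s ≤ x' + h := by linarith [habs.2]
      have hsa : s ≤ a := by linarith
      have hs0 : 0 < s := by linarith
      have hma : m ≤ a := by rw [hm_def]; linarith
      have hDiff : D s - D x' = ∫ t in Ioc (0:ℝ) a, v' t * (kk (s - t) - kk (x' - t)) := by
        rw [hD_def]
        simp only []
        rw [← integral_sub (hvk s ⟨hs0, hsa⟩) (hvk x' ⟨hx'0, hx'a.le⟩)]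
        refine setIntegral_congr_fun measurableSet_Ioc fun t _ => ?_
        ring
      have hIntF : IntegrableOn (fun t => v' t * (kk (s - t) - kk (x' - t))) (Ioc 0 a) := by
        have h2 : IntegrableOn (fun t => v' t * kk (s - t) - v' t * kk (x' - t)) (Ioc 0 a) :=
          (hvk s ⟨hs0, hsa⟩).sub (hvk x' ⟨hx'0, hx'a.le⟩)
        exact h2.congr_fun (fun t _ => by ring) measurableSet_Ioc
      have hsplitset : Ioc (0:ℝ) a = Ioc 0 m ∪ Ioc m a :=
        (Ioc_union_Ioc_eq_Ioc hm0.le hma).symm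
      have hA : |∫ t in Ioc (0:ℝ) m, v' t * (kk (s - t) - kk (x' - t))|
          ≤ 2 * I * Real.sqrt h := by
        have hsubm : Ioc (0:ℝ) m ⊆ Ioc (0:ℝ) a := Ioc_subset_Ioc_right hma
        have hptw : ∀ t ∈ Ioc (0:ℝ) m, |v' t * (kk (s - t) - kk (x' - t))|
            ≤ v' t * (2 * h / δ) := by
          intro t ht
          have hst : δ/2 ≤ s - t := by have := ht.2; rw [hm_def] at this; linarith
          have hxt : δ/2 ≤ x' - t := by have := ht.2; rw [hm_def] at this; linarith
          have hks : kk (s - t) = Real.log (s - t) := kk_of_nonneg (by linarith)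
          have hkx : kk (x' - t) = Real.log (x' - t) := kk_of_nonneg (by linarith)
          have hvnn := hv'nn t (hsubm ht)
          rw [abs_mul, hks, hkx, abs_of_nonneg hvnn]
          refine mul_le_mul_of_nonneg_left ?_ hvnn
          have hlb := abs_log_sub_log_le (show (0:ℝ) < δ/2 by linarith) hst hxt
          have harg : |s - t - (x' - t)| = h := by
            rw [show s - t - (x' - t) = s - x' by ring, ← hh_def]
          rw [harg] at hlb
          calc |Real.log (s - t) - Real.log (x' - t)| ≤ h / (δ/2) := hlb
            _ = 2 * h / δ := by field_simp
        calc |∫ t in Ioc (0:ℝ) m, v' t * (kk (s - t) - kk (x' - t))|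
            ≤ ∫ t in Ioc (0:ℝ) m, |v' t * (kk (s - t) - kk (x' - t))| := by
              simpa only [Real.norm_eq_abs] using
                norm_integral_le_integral_norm (μ := volume.restrict (Ioc (0:ℝ) m))
                  (fun t => v' t * (kk (s - t) - kk (x' - t)))
          _ ≤ ∫ t in Ioc (0:ℝ) m, v' t * (2 * h / δ) :=
              setIntegral_mono_on (hIntF.mono_set hsubm).abs
                ((hv'i.mono_set hsubm).mul_const _) measurableSet_Ioc hptw
          _ = (∫ t in Ioc (0:ℝ) m, v' t) * (2 * h / δ) := MeasureTheory.integral_mul_const _ _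
          _ ≤ I * (2 * h / δ) := by
              refine mul_le_mul_of_nonneg_right ?_ (by positivity)
              exact setIntegral_mono_set hv'i hv'ae
                (HasSubset.Subset.eventuallyLE hsubm)
          _ = 2 * I * Real.sqrt h := by
              rw [show 2 * h / δ = 2 * Real.sqrt h from by
                rw [hδ_def, mul_div_assoc, Real.div_sqrt]]
              ring
      have hB : |∫ t in Ioc m a, v' t * (kk (s - t) - kk (x' - t))|
          ≤ 8 * M * Real.sqrt (3 * δ / 2) := by
        have hIk1 : IntegrableOn (fun t => kk (s - t)) (Ioc m a) := by
          have h2 := intervalIntegrable_kk_sub_left s m a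
          rwa [intervalIntegrable_iff_integrableOn_Ioc_of_le hma] at h2
        have hIk2 : IntegrableOn (fun t => kk (x' - t)) (Ioc m a) := by
          have h2 := intervalIntegrable_kk_sub_left x' m a
          rwa [intervalIntegrable_iff_integrableOn_Ioc_of_le hma] at h2
        have hImA : ∀ z : ℝ, m < z → z - m ≤ 3*δ/2 →
            (∫ t in Ioc m a, |kk (z - t)|) ≤ 4 * Real.sqrt (3*δ/2) := by
          intro z hz1 hz2
          have hcv : (∫ t in Ioc m a, |kk (z - t)|) = ∫ r in Ioc (z - a) (z - m), |kk r| := by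
            rw [← intervalIntegral.integral_of_le hma,
              intervalIntegral.integral_comp_sub_left (fun r => |kk r|) z,
              intervalIntegral.integral_of_le (by linarith : z - a ≤ z - m)]
          rw [hcv]
          have h1 := integral_abs_kk_le (l := z - a) (r := z - m)
            (by nlinarith : z - m ≤ 1)
          have h2 : Real.sqrt (max (z - m) 0) ≤ Real.sqrt (3*δ/2) :=
            Real.sqrt_le_sqrt (max_le hz2 (by positivity))
          linarith
        have hptw : ∀ t ∈ Ioc m a, |v' t * (kk (s - t) - kk (x' - t))|
            ≤ M * (|kk (s - t)| + |kk (x' - t)|) := by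
          intro t ht
          rw [abs_mul]
          have h1 : |v' t| ≤ M := by
            rw [← Real.norm_eq_abs]
            refine hM t ⟨?_, ht.2⟩
            have := ht.1; rw [hm_def] at this; linarith
          have h2 : |kk (s - t) - kk (x' - t)| ≤ |kk (s - t)| + |kk (x' - t)| := by
            simpa [Real.norm_eq_abs] using norm_sub_le (kk (s - t)) (kk (x' - t))
          exact mul_le_mul h1 h2 (abs_nonneg _) hM0
        have hsubm2 : Ioc m a ⊆ Ioc (0:ℝ) a := Ioc_subset_Ioc_left hm0.le
        calc |∫ t in Ioc m a, v' t * (kk (s - t) - kk (x' - t))|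
            ≤ ∫ t in Ioc m a, |v' t * (kk (s - t) - kk (x' - t))| := by
              simpa only [Real.norm_eq_abs] using
                norm_integral_le_integral_norm (μ := volume.restrict (Ioc m a))
                  (fun t => v' t * (kk (s - t) - kk (x' - t)))
          _ ≤ ∫ t in Ioc m a, M * (|kk (s - t)| + |kk (x' - t)|) :=
              setIntegral_mono_on (hIntF.mono_set hsubm2).abs
                ((hIk1.abs.add hIk2.abs).const_mul M) measurableSet_Ioc hptw
          _ = M * ((∫ t in Ioc m a, |kk (s - t)|) + ∫ t in Ioc m a, |kk (x' - t)|) := by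
              rw [MeasureTheory.integral_const_mul, integral_add hIk1.abs hIk2.abs]
          _ ≤ M * (4 * Real.sqrt (3*δ/2) + 4 * Real.sqrt (3*δ/2)) := by
              have e1 := hImA s hms (by linarith)
              have e2 := hImA x' (by rw [hm_def]; linarith) (by rw [hm_def]; linarith)
              exact mul_le_mul_of_nonneg_left (add_le_add e1 e2) hM0
          _ = 8 * M * Real.sqrt (3 * δ / 2) := by ring
      rw [hDiff, hsplitset, setIntegral_union (Ioc_disjoint_Ioc_of_le le_rfl) measurableSet_Ioc
        (hIntF.mono_set (Ioc_subset_Ioc_right hma))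
        (hIntF.mono_set (Ioc_subset_Ioc_left hm0.le))]
      calc |(∫ t in Ioc (0:ℝ) m, v' t * (kk (s - t) - kk (x' - t)))
            + ∫ t in Ioc m a, v' t * (kk (s - t) - kk (x' - t))|
          ≤ |∫ t in Ioc (0:ℝ) m, v' t * (kk (s - t) - kk (x' - t))|
            + |∫ t in Ioc m a, v' t * (kk (s - t) - kk (x' - t))| := abs_add_le _ _
        _ ≤ 2 * I * Real.sqrt h + 8 * M * Real.sqrt (3 * δ / 2) := add_le_add hA hB
        _ = g h := by rw [hg_def, hδ_def]
    have hgt : Tendsto (fun s => g (|s - x'|)) (nhds x') (nhds 0) := by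
      have hgc : Continuous g := by
        rw [hg_def]
        refine ((continuous_const.mul Real.continuous_sqrt).add
          (continuous_const.mul (Real.continuous_sqrt.comp ?_)))
        exact (continuous_const.mul Real.continuous_sqrt).div_const 2
      have habs : Tendsto (fun s : ℝ => |s - x'|) (nhds x') (nhds 0) := by
        have hc : Continuous fun s : ℝ => |s - x'| := (continuous_id.sub continuous_const).abs
        have := hc.tendsto x'
        simpa using this
      have := (hgc.tendsto 0).comp habs
      have hg0 : g 0 = 0 := by simp [hg_def]
      rw [hg0] at this
      exact this
    have hsq : Tendsto (fun s => |D s - D x'|) (nhds x') (nhds 0) := by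
      refine squeeze_zero' (Filter.Eventually.of_forall fun s => abs_nonneg _) ?_ hgt
      filter_upwards [Metric.closedBall_mem_nhds x' hδ₀pos] with s hs
      rcases eq_or_ne s x' with rfl | hne
      · simp [hg_def]
      · exact hkey s hne (by rwa [Metric.mem_closedBall, Real.dist_eq] at hs)
    rw [ContinuousAt]
    rw [tendsto_iff_dist_tendsto_zero]
    simpa [Real.dist_eq] using hsq
  have hxmem : x ∈ Ioo (0:ℝ) a := ⟨hx0, hxa⟩
  have hIx : IntegrableOn (fun ξ => v' ξ * kk (x - ξ)) (Ioc 0 x) :=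
    (hvk x ⟨hx0, hxa.le⟩).mono_set (Ioc_subset_Ioc_right hxa.le)
  have hEqOn : ∀ ξ ∈ Ioc (0:ℝ) x, v' ξ * kk (x - ξ) = Real.log (x - ξ) * u' ξ := by
    intro ξ hξ
    rw [kk_of_nonneg (by linarith [hξ.2] : (0:ℝ) ≤ x - ξ), hu'v ξ hξ.1, mul_comm]
  have hgoal1 : IntegrableOn (fun ξ : ℝ => Real.log (x - ξ) * u' ξ) (Ioc 0 x) :=
    hIx.congr_fun hEqOn measurableSet_Ioc
  have hDx : D x = ∫ ξ in Ioc (0:ℝ) x, Real.log (x - ξ) * u' ξ := by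
    have hz : (∫ ξ in Ioc x a, v' ξ * kk (x - ξ)) = 0 := by
      rw [setIntegral_congr_fun measurableSet_Ioc (g := fun _ => (0:ℝ))
        (fun ξ hξ => by rw [kk_of_nonpos (by linarith [hξ.1] : x - ξ ≤ 0), mul_zero])]
      simp
    have hsplit : Ioc (0:ℝ) a = Ioc 0 x ∪ Ioc x a :=
      (Ioc_union_Ioc_eq_Ioc hx0.le hxa.le).symm
    have hstep : D x = ∫ ξ in Ioc (0:ℝ) x, v' ξ * kk (x - ξ) := by
      rw [hD_def]
      simp only []
      rw [hsplit, setIntegral_union (Ioc_disjoint_Ioc_of_le le_rfl) measurableSet_Ioc hIx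
        ((hvk x ⟨hx0, hxa.le⟩).mono_set (Ioc_subset_Ioc_left hx0.le)), hz, add_zero]
    rw [hstep]
    exact setIntegral_congr_fun measurableSet_Ioc hEqOn
  refine ⟨hgoal1, ?_⟩
  rw [← hDx]
  have hDsm : StronglyMeasurableAtFilter D (nhds x) volume :=
    ContinuousOn.stronglyMeasurableAtFilter isOpen_Ioo
      (fun s hs => (hDcont s hs).continuousWithinAt) x hxmem
  have hDii : IntervalIntegrable D volume x x := by
    rw [intervalIntegrable_iff]
    rw [show Set.uIoc x x = (∅ : Set ℝ) from by simp [Set.uIoc, Set.Ioc_self]]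
    exact integrableOn_empty
  have hderivI : HasDerivAt (fun y => ∫ s in x..y, D s) (D x) x :=
    intervalIntegral.integral_hasDerivAt_right hDii hDsm (hDcont x hxmem)
  have hg : HasDerivAt (fun y => H x + ∫ s in x..y, D s) (D x) x := hderivI.const_add (H x)
  obtain ⟨Cv, hCv⟩ : ∃ Cv : ℝ, ∀ ξ ∈ Icc (0:ℝ) a, ‖v ξ‖ ≤ Cv :=
    isCompact_Icc.exists_bound_of_continuousOn (continuousOn_vf hc0 hκ0 hca)
  refine hg.congr_of_eventuallyEq ?_
  filter_upwards [Ioo_mem_nhds hx0 hxa] with y hy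
  obtain ⟨hy0, hya⟩ := hy
  have step1 : (∫ ξ in Ioc (0:ℝ) y, Real.log (y - ξ) * u ξ)
      = ∫ ξ in Ioc (0:ℝ) y, kk (y - ξ) * v ξ := by
    refine setIntegral_congr_fun measurableSet_Ioc fun ξ hξ => ?_
    rw [kk_of_nonneg (by linarith [hξ.2] : (0:ℝ) ≤ y - ξ), huv ξ hξ.1, mul_comm]
  have hInt1 : IntegrableOn (fun ξ => kk (y - ξ) * v ξ) (Ioc 0 y) := by
    refine Integrable.mono' (((hkkIL y).mono_set
      (Ioc_subset_Ioc_right hya.le)).abs.mul_const Cv) ?_ ?_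
    · exact ((measurable_kk.comp (measurable_const.sub measurable_id)).mul
        (measurable_vf c κ)).aestronglyMeasurable
    · refine (ae_restrict_iff' measurableSet_Ioc).2 (ae_of_all _ fun ξ hξ => ?_)
      rw [Real.norm_eq_abs, abs_mul]
      refine mul_le_mul_of_nonneg_left ?_ (abs_nonneg _)
      have := hCv ξ ⟨hξ.1.le, hξ.2.trans hya.le⟩
      rwa [Real.norm_eq_abs] at this
  have hIntz : IntegrableOn (fun ξ => kk (y - ξ) * v ξ) (Ioc y a) := by
    refine (integrableOn_zero).congr_fun (fun ξ hξ => ?_) measurableSet_Ioc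
    rw [kk_of_nonpos (by linarith [hξ.1] : y - ξ ≤ 0), zero_mul]
  have hzz : (∫ ξ in Ioc y a, kk (y - ξ) * v ξ) = 0 := by
    rw [setIntegral_congr_fun measurableSet_Ioc (g := fun _ => (0:ℝ))
      (fun ξ hξ => by rw [kk_of_nonpos (by linarith [hξ.1] : y - ξ ≤ 0), zero_mul])]
    simp
  have step2 : (∫ ξ in Ioc (0:ℝ) y, kk (y - ξ) * v ξ)
      = ∫ ξ in Ioc (0:ℝ) a, kk (y - ξ) * v ξ := by
    rw [show Ioc (0:ℝ) a = Ioc 0 y ∪ Ioc y a from (Ioc_union_Ioc_eq_Ioc hy0.le hya.le).symm,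
      setIntegral_union (Ioc_disjoint_Ioc_of_le le_rfl) measurableSet_Ioc hInt1 hIntz, hzz, add_zero]
  have step3 := hFub1 y ⟨hy0, hya.le⟩
  have step4 : H y = H x + ∫ s in x..y, D s := by
    rcases le_total x y with hle | hle
    · have h2 := hFub2 x y hx0 hle hya.le
      rw [intervalIntegral.integral_of_le hle]
      linarith
    · have h2 := hFub2 y x hy0 hle hxa.le
      rw [intervalIntegral.integral_symm, intervalIntegral.integral_of_le hle]
      linarith
  rw [step1, step2, step3, step4]
end

section
/- Vanishing derivative at the origin for the logarithmic Volterra transform (Section 5): Fix 0 < c < 1 and κ > 1, let u(ξ) = (−log(cξ))^{−κ} for ξ ∈ (0,1] with u(0) = 0, and let u'(ξ) = κ (−log(cξ))^{−κ−1} / ξ. Then (i) w(x) := ∫₀^x log(x−ξ) u'(ξ) dξ → 0 as x → 0⁺, and (ii) F(x)/x → 0 as x → 0⁺, where F(x) = ∫₀^x log(x−ξ) u(ξ) dξ; in particular F, extended by F(0) = 0, has right derivative 0 at x = 0. -/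
open MeasureTheory Filter Set

lemma aux_tendsto (p A : ℝ) (hp : 1 < p) :
    Tendsto (fun t : ℝ => t ^ (-p) * (A + t)) atTop (nhds 0) := by
  have h1 : Tendsto (fun t : ℝ => A * t ^ (-p) + t ^ (-(p - 1))) atTop (nhds 0) := by
    have hA := (tendsto_rpow_neg_atTop (by linarith : (0:ℝ) < p)).const_mul A
    have h2 := tendsto_rpow_neg_atTop (by linarith : (0:ℝ) < p - 1)
    simpa using hA.add h2
  refine h1.congr' ?_
  filter_upwards [eventually_gt_atTop (0:ℝ)] with t ht
  have h3 := Real.rpow_add ht (-p) 1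
  rw [Real.rpow_one] at h3
  rw [show -(p - 1) = -p + 1 by ring, h3]; ring

lemma aux_comp (c : ℝ) (hc0 : 0 < c) :
    Tendsto (fun x : ℝ => -Real.log (c * x)) (nhdsWithin 0 (Set.Ioi 0)) atTop := by
  have h1 : Tendsto (fun x : ℝ => -(Real.log c + Real.log x)) (nhdsWithin 0 (Set.Ioi 0)) atTop := by
    have h2 : Tendsto (fun x : ℝ => -Real.log x) (nhdsWithin 0 (Set.Ioi 0)) atTop :=
      tendsto_neg_atBot_atTop.comp Real.tendsto_log_nhdsGT_zero
    have := tendsto_atTop_add_const_left _ (-Real.log c) h2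
    refine this.congr fun x => by ring
  refine h1.congr' ?_
  filter_upwards [self_mem_nhdsWithin] with x hx
  rw [Real.log_mul hc0.ne' (ne_of_gt hx)]

/-- integral of `-log (x - ξ)` over `(0, x]`. -/
lemma aux_log_int {x : ℝ} (hx0 : 0 < x) (hx1 : x < 1) :
    IntegrableOn (fun ξ => -Real.log (x - ξ)) (Set.Ioc 0 x) ∧
    ∫ ξ in Set.Ioc 0 x, -Real.log (x - ξ) = x - x * Real.log x := by
  set G : ℝ → ℝ := fun ξ => (x - ξ) * Real.log (x - ξ) - (x - ξ) with hG
  have hder : ∀ ξ ∈ Set.Ioo 0 x, HasDerivAt G (-Real.log (x - ξ)) ξ := by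
    intro ξ hξ
    have h1 : HasDerivAt (fun ξ : ℝ => x - ξ) (-1) ξ := by
      simpa using (hasDerivAt_id ξ).const_sub x
    have h2 := (Real.hasDerivAt_mul_log (show x - ξ ≠ 0 by
      have := hξ.2; intro h; linarith [sub_pos.mpr hξ.2])).comp ξ h1
    have h3 := h2.sub h1
    have h4 : (Real.log (x - ξ) + 1) * -1 - -1 = -Real.log (x - ξ) := by ring
    rw [h4] at h3
    simpa [Function.comp_def, Pi.sub_def] using h3
  have hcont : Continuous G := by
    have : Continuous fun ξ : ℝ => x - ξ := continuous_const.sub continuous_id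
    exact (Real.continuous_mul_log.comp this).sub this
  have hpos : ∀ ξ ∈ Set.Ioo 0 x, 0 ≤ -Real.log (x - ξ) := by
    intro ξ hξ
    have : Real.log (x - ξ) ≤ 0 :=
      Real.log_nonpos (by linarith [hξ.2]) (by linarith [hξ.1])
    linarith
  have hint : IntegrableOn (fun ξ => -Real.log (x - ξ)) (Set.Ioc 0 x) :=
    intervalIntegral.integrableOn_deriv_of_nonneg hcont.continuousOn hder hpos
  refine ⟨hint, ?_⟩
  have hii : IntervalIntegrable (fun ξ => -Real.log (x - ξ)) volume 0 x := by
    rw [intervalIntegrable_iff, Set.uIoc_of_le hx0.le]; exact hint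
  have heq := intervalIntegral.integral_eq_sub_of_hasDeriv_right_of_le hx0.le
    hcont.continuousOn (fun ξ hξ => (hder ξ hξ).hasDerivWithinAt) hii
  rw [intervalIntegral.integral_of_le hx0.le] at heq
  have hGx : G x = 0 := by simp [hG]
  have hG0 : G 0 = x * Real.log x - x := by simp [hG]
  rw [heq, hGx, hG0]; ring


/-- Vanishing derivative at the origin for the logarithmic Volterra transform
(Section 5). -/
theorem stmt17 (c κ : ℝ) (hc : c ∈ Set.Ioo (0:ℝ) 1) (hκ : 1 < κ)
    (u u' : ℝ → ℝ)
    (hu : ∀ ξ : ℝ, 0 < ξ → u ξ = (-Real.log (c * ξ)) ^ (-κ)) (hu0 : u 0 = 0)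
    (hu' : ∀ ξ : ℝ, 0 < ξ → u' ξ = κ * (-Real.log (c * ξ)) ^ (-κ - 1) / ξ) :
    Filter.Tendsto (fun x : ℝ => ∫ ξ in Set.Ioc (0:ℝ) x, Real.log (x - ξ) * u' ξ)
      (nhdsWithin 0 (Set.Ioi 0)) (nhds 0) ∧
    Filter.Tendsto
      (fun x : ℝ => (∫ ξ in Set.Ioc (0:ℝ) x, Real.log (x - ξ) * u ξ) / x)
      (nhdsWithin 0 (Set.Ioi 0)) (nhds 0) ∧
    HasDerivWithinAt (fun x : ℝ => ∫ ξ in Set.Ioc (0:ℝ) x, Real.log (x - ξ) * u ξ)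
      0 (Set.Ici 0) 0 := by
  obtain ⟨hc0, hc1⟩ := hc
  have hκ0 : 0 < κ := by linarith
  -- positivity of -log(cξ)
  have hlogpos : ∀ ξ : ℝ, 0 < ξ → ξ < 1 → 0 < -Real.log (c * ξ) := by
    intro ξ h0 h1
    have hlt : c * ξ < 1 := by nlinarith
    have := Real.log_neg (by positivity) hlt
    linarith
  -- derivative of u
  have huderiv : ∀ ξ : ℝ, 0 < ξ → ξ < 1 → HasDerivAt u (u' ξ) ξ := by
    intro ξ h0 h1
    have hlog := hlogpos ξ h0 h1
    have hinner : HasDerivAt (fun t : ℝ => -Real.log (c * t)) (-ξ⁻¹) ξ := by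
      have h1' : HasDerivAt (fun t : ℝ => c * t) c ξ := by
        simpa using (hasDerivAt_id ξ).const_mul c
      have h2 := (Real.hasDerivAt_log (by positivity : c * ξ ≠ 0)).comp ξ h1'
      have h3 := h2.neg
      have h4 : -((c * ξ)⁻¹ * c) = -ξ⁻¹ := by field_simp
      rw [h4] at h3
      simpa [Function.comp_def, Pi.neg_def] using h3
    have houter := Real.hasDerivAt_rpow_const (p := -κ) (Or.inl (ne_of_gt hlog))
    have hcomp := houter.comp ξ hinner
    have heq : -κ * (-Real.log (c * ξ)) ^ (-κ - 1) * -ξ⁻¹ = u' ξ := by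
      rw [hu' ξ h0]; field_simp
    rw [heq] at hcomp
    refine hcomp.congr_of_eventuallyEq ?_
    filter_upwards [Ioi_mem_nhds h0] with t ht
    exact hu t ht
  -- nonnegativity of u'
  have hu'nonneg : ∀ ξ : ℝ, 0 < ξ → ξ < 1 → 0 ≤ u' ξ := by
    intro ξ h0 h1
    rw [hu' ξ h0]
    have := hlogpos ξ h0 h1
    exact div_nonneg (mul_nonneg hκ0.le (Real.rpow_nonneg this.le _)) h0.le
  -- u tends to 0 at 0+
  have hutend : Tendsto u (nhdsWithin 0 (Set.Ioi 0)) (nhds 0) := by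
    have h1 := (tendsto_rpow_neg_atTop hκ0).comp (aux_comp c hc0)
    refine h1.congr' ?_
    filter_upwards [self_mem_nhdsWithin] with t ht
    exact (hu t ht).symm
  -- continuity of u on [0, x]
  have hucont : ∀ x : ℝ, 0 < x → x < 1 → ContinuousOn u (Set.Icc 0 x) := by
    intro x hx0 hx1 ξ hξ
    rcases eq_or_lt_of_le hξ.1 with h | h
    · subst h
      rw [ContinuousWithinAt, hu0]
      have hpure : Tendsto u (pure (0:ℝ)) (nhds 0) := by
        rw [tendsto_pure_left]
        intro s hs
        simpa [hu0] using mem_of_mem_nhds hs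
      have hIci : Tendsto u (nhdsWithin 0 (Set.Ici 0)) (nhds 0) := by
        rw [show Set.Ici (0:ℝ) = insert 0 (Set.Ioi 0) by
          rw [Set.Ioi_insert], nhdsWithin_insert]
        exact hpure.sup hutend
      exact hIci.mono_left (nhdsWithin_mono _ (Set.Icc_subset_Ici_self))
    · have hlog := hlogpos ξ h (lt_of_le_of_lt hξ.2 hx1)
      have hca : ContinuousAt (fun t : ℝ => (-Real.log (c * t)) ^ (-κ)) ξ := by
        have hbase : ContinuousAt (fun t : ℝ => -Real.log (c * t)) ξ := by
          have := (Real.continuousAt_log (by positivity : c * ξ ≠ 0)).comp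
            ((continuous_const.mul continuous_id).continuousAt (x := ξ))
          exact this.neg
        exact hbase.rpow_const (Or.inl (ne_of_gt hlog))
      have : ContinuousAt u ξ := by
        refine hca.congr ?_
        filter_upwards [Ioi_mem_nhds h] with t ht
        exact (hu t ht).symm
      exact this.continuousWithinAt
  -- integrability of u' on (0, x]
  have hu'int : ∀ x : ℝ, 0 < x → x < 1 → IntegrableOn u' (Set.Ioc 0 x) := by
    intro x hx0 hx1
    exact intervalIntegral.integrableOn_deriv_of_nonneg (hucont x hx0 hx1)
      (fun ξ hξ => huderiv ξ hξ.1 (hξ.2.trans hx1))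
      (fun ξ hξ => hu'nonneg ξ hξ.1 (hξ.2.trans hx1))
  -- FTC for u'
  have hu'FTC : ∀ x : ℝ, 0 < x → x < 1 → ∫ ξ in Set.Ioc 0 x, u' ξ = u x := by
    intro x hx0 hx1
    have hii : IntervalIntegrable u' volume 0 x := by
      rw [intervalIntegrable_iff, Set.uIoc_of_le hx0.le]; exact hu'int x hx0 hx1
    have heq := intervalIntegral.integral_eq_sub_of_hasDeriv_right_of_le hx0.le
      (hucont x hx0 hx1)
      (fun ξ hξ => (huderiv ξ hξ.1 (hξ.2.trans hx1)).hasDerivWithinAt) hii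
    rw [intervalIntegral.integral_of_le hx0.le] at heq
    rw [heq, hu0, sub_zero]
  -- monotonicity of u
  have humono : ∀ x : ℝ, 0 < x → x < 1 → ∀ ξ ∈ Set.Ioc (0:ℝ) x, 0 ≤ u ξ ∧ u ξ ≤ u x := by
    intro x hx0 hx1 ξ hξ
    have hlξ := hlogpos ξ hξ.1 (lt_of_le_of_lt hξ.2 hx1)
    have hlx := hlogpos x hx0 hx1
    rw [hu ξ hξ.1, hu x hx0]
    constructor
    · exact Real.rpow_nonneg hlξ.le _
    · apply Real.rpow_le_rpow_of_nonpos hlx ?_ (by linarith)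
      have : Real.log (c * ξ) ≤ Real.log (c * x) :=
        Real.log_le_log (mul_pos hc0 hξ.1) (by nlinarith [hξ.2])
      linarith
  -- Part (ii)
  have part2 : Filter.Tendsto
      (fun x : ℝ => (∫ ξ in Set.Ioc (0:ℝ) x, Real.log (x - ξ) * u ξ) / x)
      (nhdsWithin 0 (Set.Ioi 0)) (nhds 0) := by
    have hψ : Tendsto (fun x : ℝ => (-Real.log (c * x)) ^ (-κ) *
        ((1 + Real.log c) + (-Real.log (c * x)))) (nhdsWithin 0 (Set.Ioi 0)) (nhds 0) :=
      (aux_tendsto κ _ hκ).comp (aux_comp c hc0)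
    refine squeeze_zero_norm' ?_ hψ
    filter_upwards [self_mem_nhdsWithin, nhdsWithin_le_nhds (Iio_mem_nhds one_pos)]
      with x hx0' hx1'
    have hx0 : (0:ℝ) < x := hx0'
    have hx1 : x < 1 := hx1'
    have hlx := hlogpos x hx0 hx1
    obtain ⟨hlint, hlval⟩ := aux_log_int hx0 hx1
    have hpt : ∀ ξ ∈ Set.Ioc (0:ℝ) x,
        ‖Real.log (x - ξ) * u ξ‖ ≤ u x * (-Real.log (x - ξ)) := by
      intro ξ hξ
      obtain ⟨hunn, hum⟩ := humono x hx0 hx1 ξ hξ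
      have hlnp : Real.log (x - ξ) ≤ 0 :=
        Real.log_nonpos (by linarith [hξ.2]) (by linarith [hξ.1])
      rw [Real.norm_eq_abs, abs_mul, abs_of_nonpos hlnp, abs_of_nonneg hunn]
      calc -Real.log (x - ξ) * u ξ ≤ -Real.log (x - ξ) * u x :=
            mul_le_mul_of_nonneg_left hum (by linarith)
        _ = u x * (-Real.log (x - ξ)) := by ring
    have hFb : ‖∫ ξ in Set.Ioc (0:ℝ) x, Real.log (x - ξ) * u ξ‖
        ≤ u x * (x - x * Real.log x) := by
      calc ‖∫ ξ in Set.Ioc (0:ℝ) x, Real.log (x - ξ) * u ξ‖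
          ≤ ∫ ξ in Set.Ioc (0:ℝ) x, ‖Real.log (x - ξ) * u ξ‖ :=
            norm_integral_le_integral_norm _
        _ ≤ ∫ ξ in Set.Ioc (0:ℝ) x, u x * (-Real.log (x - ξ)) := by
            refine integral_mono_of_nonneg
              (Filter.Eventually.of_forall fun ξ => norm_nonneg _)
              (hlint.const_mul (u x)) ?_
            exact (ae_restrict_iff' measurableSet_Ioc).mpr (Filter.Eventually.of_forall hpt)
        _ = u x * (x - x * Real.log x) := by rw [integral_const_mul, hlval]
    have hnorm : ‖(∫ ξ in Set.Ioc (0:ℝ) x, Real.log (x - ξ) * u ξ) / x‖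
        = ‖∫ ξ in Set.Ioc (0:ℝ) x, Real.log (x - ξ) * u ξ‖ / x := by
      rw [norm_div, Real.norm_of_nonneg hx0.le]
    rw [hnorm]
    have hstep : ‖∫ ξ in Set.Ioc (0:ℝ) x, Real.log (x - ξ) * u ξ‖ / x
        ≤ u x * (x - x * Real.log x) / x := by gcongr
    refine hstep.trans (le_of_eq ?_)
    rw [hu x hx0, Real.log_mul hc0.ne' hx0.ne']
    field_simp
    ring
  -- Part (i)
  have part1 : Filter.Tendsto
      (fun x : ℝ => ∫ ξ in Set.Ioc (0:ℝ) x, Real.log (x - ξ) * u' ξ)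
      (nhdsWithin 0 (Set.Ioi 0)) (nhds 0) := by
    have hψ1 : Tendsto (fun x : ℝ => 2 * κ * ((-Real.log (c * x)) ^ (-(κ + 1)) *
        ((1 + Real.log c) + (-Real.log (c * x))))) (nhdsWithin 0 (Set.Ioi 0)) (nhds 0) := by
      have := ((aux_tendsto (κ + 1) (1 + Real.log c) (by linarith)).comp
        (aux_comp c hc0)).const_mul (2 * κ)
      simpa [mul_comm] using this
    have hψ2 : Tendsto (fun x : ℝ => (-Real.log (c * x)) ^ (-κ) *
        ((Real.log 2 + Real.log c) + (-Real.log (c * x)))) (nhdsWithin 0 (Set.Ioi 0)) (nhds 0) :=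
      (aux_tendsto κ _ hκ).comp (aux_comp c hc0)
    have hψ := hψ1.add hψ2
    rw [add_zero] at hψ
    refine squeeze_zero_norm' ?_ hψ
    filter_upwards [self_mem_nhdsWithin, nhdsWithin_le_nhds (Iio_mem_nhds one_pos)]
      with x hx0' hx1'
    have hx0 : (0:ℝ) < x := hx0'
    have hx1 : x < 1 := hx1'
    have hlx := hlogpos x hx0 hx1
    obtain ⟨hlint, hlval⟩ := aux_log_int hx0 hx1
    set M : ℝ := κ * (-Real.log (c * x)) ^ (-κ - 1) * (2 / x) with hM
    set L : ℝ := Real.log 2 - Real.log x with hL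
    have hM0 : 0 ≤ M := by
      apply mul_nonneg (mul_nonneg hκ0.le (Real.rpow_nonneg hlx.le _))
      positivity
    have hlogx : Real.log x < 0 := Real.log_neg hx0 hx1
    have hL0 : 0 ≤ L := by
      have h2 : (0:ℝ) ≤ Real.log 2 := Real.log_nonneg one_le_two
      rw [hL]; linarith
    have hgint : IntegrableOn (fun ξ => M * (-Real.log (x - ξ)) + L * u' ξ) (Set.Ioc 0 x) :=
      (hlint.const_mul M).add ((hu'int x hx0 hx1).const_mul L)
    have hpt : ∀ ξ ∈ Set.Ioc (0:ℝ) x,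
        ‖Real.log (x - ξ) * u' ξ‖ ≤ M * (-Real.log (x - ξ)) + L * u' ξ := by
      intro ξ hξ
      have hξ1 : ξ < 1 := lt_of_le_of_lt hξ.2 hx1
      have hu'nn := hu'nonneg ξ hξ.1 hξ1
      have hlnp : Real.log (x - ξ) ≤ 0 :=
        Real.log_nonpos (by linarith [hξ.2]) (by linarith [hξ.1])
      rw [Real.norm_eq_abs, abs_mul, abs_of_nonpos hlnp, abs_of_nonneg hu'nn]
      rcases le_or_gt ξ (x / 2) with hhalf | hhalf
      · have h1 : -Real.log (x - ξ) ≤ L := by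
          have h3 : Real.log (x / 2) ≤ Real.log (x - ξ) :=
            Real.log_le_log (by linarith) (by linarith)
          have h2 : Real.log (x / 2) = Real.log x - Real.log 2 :=
            Real.log_div hx0.ne' two_ne_zero
          rw [hL]; linarith
        nlinarith [mul_le_mul_of_nonneg_right h1 hu'nn,
          mul_nonneg hM0 (neg_nonneg.mpr hlnp)]
      · have h1 : u' ξ ≤ M := by
          rw [hu' ξ hξ.1, hM]
          have hle : (-Real.log (c * ξ)) ^ (-κ - 1) ≤ (-Real.log (c * x)) ^ (-κ - 1) := by
            apply Real.rpow_le_rpow_of_nonpos hlx ?_ (by linarith)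
            have := Real.log_le_log (mul_pos hc0 hξ.1) (by nlinarith [hξ.2] :
              c * ξ ≤ c * x)
            linarith
          have hinv : ξ⁻¹ ≤ 2 / x := by
            have h4 : ξ⁻¹ ≤ (x / 2)⁻¹ :=
              inv_anti₀ (by linarith) (by linarith)
            rwa [inv_div] at h4
          rw [div_eq_mul_inv]
          apply mul_le_mul (mul_le_mul_of_nonneg_left hle hκ0.le) hinv
            (inv_nonneg.mpr hξ.1.le)
            (mul_nonneg hκ0.le (Real.rpow_nonneg hlx.le _))
        nlinarith [mul_le_mul_of_nonneg_left h1 (neg_nonneg.mpr hlnp),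
          mul_nonneg hL0 hu'nn]
    have hWb : ‖∫ ξ in Set.Ioc (0:ℝ) x, Real.log (x - ξ) * u' ξ‖
        ≤ M * (x - x * Real.log x) + L * u x := by
      calc ‖∫ ξ in Set.Ioc (0:ℝ) x, Real.log (x - ξ) * u' ξ‖
          ≤ ∫ ξ in Set.Ioc (0:ℝ) x, ‖Real.log (x - ξ) * u' ξ‖ :=
            norm_integral_le_integral_norm _
        _ ≤ ∫ ξ in Set.Ioc (0:ℝ) x, (M * (-Real.log (x - ξ)) + L * u' ξ) := by
            refine integral_mono_of_nonneg
              (Filter.Eventually.of_forall fun ξ => norm_nonneg _) hgint ?_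
            exact (ae_restrict_iff' measurableSet_Ioc).mpr (Filter.Eventually.of_forall hpt)
        _ = M * (x - x * Real.log x) + L * u x := by
            rw [integral_add (hlint.const_mul M) ((hu'int x hx0 hx1).const_mul L),
              integral_const_mul, integral_const_mul, hlval, hu'FTC x hx0 hx1]
    refine hWb.trans (le_of_eq ?_)
    rw [hM, hL, hu x hx0, show -(κ + 1) = -κ - 1 by ring,
      Real.log_mul hc0.ne' hx0.ne']
    field_simp
    ring
  -- Part (iii)
  have hF0 : (∫ ξ in Set.Ioc (0:ℝ) (0:ℝ), Real.log (0 - ξ) * u ξ) = 0 := by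
    simp [Set.Ioc_self]
  refine ⟨part1, part2, ?_⟩
  rw [hasDerivWithinAt_iff_tendsto_slope]
  have hset : Set.Ici (0:ℝ) \ {0} = Set.Ioi 0 := by
    ext t
    simp only [Set.mem_diff, Set.mem_Ici, Set.mem_singleton_iff, Set.mem_Ioi]
    constructor
    · rintro ⟨h1, h2⟩; exact lt_of_le_of_ne h1 (Ne.symm h2)
    · intro h; exact ⟨h.le, h.ne'⟩
  rw [hset]
  refine part2.congr' ?_
  filter_upwards [self_mem_nhdsWithin] with t ht
  rw [slope_def_field]
  simp [hF0]
end

section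
/- The integration operator is of positive type on continuous functions (Example 2.1 (b), quantitative form): For every α > 0 and every continuous function f : [0,1] → ℝ, there exists a unique continuous function u : [0,1] → ℝ satisfying α u(x) + ∫₀^x u(ξ) dξ = f(x) for all x ∈ [0,1]; moreover, this solution satisfies sup_{x∈[0,1]} |u(x)| ≤ (2/α) sup_{x∈[0,1]} |f(x)|. -/
open MeasureTheory

open intervalIntegral in
lemma stmt19_aux_exists (α : ℝ) (hα : 0 < α) (g : ℝ → ℝ) (hg : Continuous g)
    (M : ℝ) (hM : ∀ y ∈ Set.Icc (0:ℝ) 1, |g y| ≤ M) :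
    ∃ u : ℝ → ℝ, Continuous u ∧ (∀ x : ℝ, α * u x + ∫ t in (0:ℝ)..x, u t = g x) ∧
      ∀ x ∈ Set.Icc (0:ℝ) 1, |u x| ≤ (2 / α) * M := by
  have hM0 : 0 ≤ M := (abs_nonneg _).trans (hM 0 (by norm_num))
  set H : ℝ → ℝ := fun x => ∫ t in (0:ℝ)..x, Real.exp (t/α) * g t with hHdef
  have hcont : Continuous fun t => Real.exp (t/α) * g t :=
    (Real.continuous_exp.comp (continuous_id.div_const α)).mul hg
  have hH : ∀ x, HasDerivAt H (Real.exp (x/α) * g x) x := fun x =>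
    (hcont.integral_hasStrictDerivAt 0 x).hasDerivAt
  have hHcont : Continuous H :=
    continuous_iff_continuousAt.2 fun x => (hH x).continuousAt
  set F : ℝ → ℝ := fun x => (Real.exp (-x/α) * H x) / α with hFdef
  have hFcont : Continuous F :=
    (((Real.continuous_exp.comp ((continuous_id.neg).div_const α)).mul hHcont).div_const α)
  set u : ℝ → ℝ := fun x => (g x - F x) / α with hudef
  have hucont : Continuous u := (hg.sub hFcont).div_const α
  have key : ∀ x : ℝ, Real.exp (-x/α) * Real.exp (x/α) = 1 := fun x => by
    rw [← Real.exp_add, neg_div, neg_add_cancel, Real.exp_zero]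
  have hF : ∀ x, HasDerivAt F (u x) x := by
    intro x
    have h1 : HasDerivAt (fun x : ℝ => Real.exp (-x/α)) (Real.exp (-x/α) * (-1/α)) x := by
      have hx : HasDerivAt (fun x : ℝ => -x/α) (-1/α) x := ((hasDerivAt_id x).neg).div_const α
      exact (Real.hasDerivAt_exp _).comp x hx
    have h2 := (h1.mul (hH x)).div_const α
    refine h2.congr_deriv ?_
    have key' : Real.exp (-x/α) * (Real.exp (x/α) * g x) = g x := by
      rw [← mul_assoc, key, one_mul]
    simp only [hudef, hFdef]
    rw [key']
    field_simp
    ring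
  have hF0 : F 0 = 0 := by simp [hFdef, hHdef]
  have hint : ∀ x : ℝ, ∫ t in (0:ℝ)..x, u t = F x := by
    intro x
    rw [integral_eq_sub_of_hasDerivAt (fun t _ => hF t) (hucont.intervalIntegrable 0 x), hF0,
      sub_zero]
  refine ⟨u, hucont, fun x => ?_, fun x hx => ?_⟩
  · rw [hint]
    simp only [hudef]
    field_simp
    ring
  · -- the bound
    have hx0 : (0:ℝ) ≤ x := hx.1
    have hHb : |H x| ≤ α * (Real.exp (x/α) - 1) * M := by
      have h1 : |H x| ≤ ∫ t in (0:ℝ)..x, |Real.exp (t/α) * g t| :=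
        abs_integral_le_integral_abs hx0
      have h2 : (∫ t in (0:ℝ)..x, |Real.exp (t/α) * g t|) ≤
          ∫ t in (0:ℝ)..x, Real.exp (t/α) * M := by
        apply integral_mono_on hx0 (hcont.abs.intervalIntegrable 0 x)
          (((Real.continuous_exp.comp (continuous_id.div_const α)).mul
            continuous_const).intervalIntegrable 0 x)
        intro t ht
        rw [abs_mul, abs_of_pos (Real.exp_pos _)]
        exact mul_le_mul_of_nonneg_left
          (hM t ⟨ht.1, ht.2.trans hx.2⟩) (Real.exp_pos _).le
      have h3 : (∫ t in (0:ℝ)..x, Real.exp (t/α) * M) = α * (Real.exp (x/α) - 1) * M := by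
        have hP : ∀ t : ℝ, HasDerivAt (fun t : ℝ => α * Real.exp (t/α) * M)
            (Real.exp (t/α) * M) t := by
          intro t
          have h4 : HasDerivAt (fun t : ℝ => Real.exp (t/α)) (Real.exp (t/α) * (1/α)) t :=
            (Real.hasDerivAt_exp _).comp t ((hasDerivAt_id t).div_const α)
          have := (h4.const_mul α).mul_const M
          refine this.congr_deriv ?_
          rw [mul_comm (Real.exp (t/α)) (1/α), ← mul_assoc, mul_one_div_cancel hα.ne', one_mul]
        rw [integral_eq_sub_of_hasDerivAt (fun t _ => hP t)
          (((Real.continuous_exp.comp (continuous_id.div_const α)).mul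
            continuous_const).intervalIntegrable 0 x)]
        simp only [zero_div, Real.exp_zero]
        ring
      calc |H x| ≤ _ := h1
        _ ≤ _ := h2
        _ = _ := h3
    have hFb : |F x| ≤ M := by
      have hexp : (0:ℝ) < Real.exp (-x/α) := Real.exp_pos _
      have : |F x| = Real.exp (-x/α) * |H x| / α := by
        rw [hFdef]; rw [abs_div, abs_mul, abs_of_pos hexp, abs_of_pos hα]
      rw [this]
      have h5 : Real.exp (-x/α) * |H x| / α ≤
          Real.exp (-x/α) * (α * (Real.exp (x/α) - 1) * M) / α := by
        gcongr
      refine h5.trans ?_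
      have h6 : Real.exp (-x/α) * (α * (Real.exp (x/α) - 1) * M) / α
          = (1 - Real.exp (-x/α)) * M := by
        calc _ = (Real.exp (-x/α) * Real.exp (x/α) - Real.exp (-x/α)) * M * (α / α) := by ring
          _ = _ := by rw [key, div_self hα.ne', mul_one]
      rw [h6]
      nlinarith [(Real.exp_pos (-x/α)).le, hM0]
    have hub : |u x| ≤ (|g x| + |F x|) / α := by
      rw [hudef]
      simp only
      rw [abs_div, abs_of_pos hα]
      gcongr
      exact abs_sub _ _
    refine hub.trans ?_
    have : (|g x| + |F x|) / α ≤ (M + M) / α := by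
      gcongr
      exact hM x hx
    refine this.trans (le_of_eq ?_)
    field_simp
    ring

open intervalIntegral in
lemma stmt19_aux_unique (α : ℝ) (hα : 0 < α) (w : ℝ → ℝ) (hw : Continuous w)
    (heq : ∀ x ∈ Set.Icc (0:ℝ) 1, α * w x + ∫ t in (0:ℝ)..x, w t = 0) :
    ∀ x ∈ Set.Icc (0:ℝ) 1, w x = 0 := by
  set W : ℝ → ℝ := fun x => ∫ t in (0:ℝ)..x, w t with hWdef
  have hW : ∀ x, HasDerivAt W (w x) x := fun x =>
    (hw.integral_hasStrictDerivAt 0 x).hasDerivAt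
  have hWcont : Continuous W := continuous_iff_continuousAt.2 fun x => (hW x).continuousAt
  set G : ℝ → ℝ := fun x => Real.exp (x/α) * W x with hGdef
  have hGcont : Continuous G :=
    (Real.continuous_exp.comp (continuous_id.div_const α)).mul hWcont
  have hG : ∀ x ∈ Set.Icc (0:ℝ) 1, HasDerivAt G 0 x := by
    intro x hx
    have h1 : HasDerivAt (fun x : ℝ => Real.exp (x/α)) (Real.exp (x/α) * (1/α)) x :=
      (Real.hasDerivAt_exp _).comp x ((hasDerivAt_id x).div_const α)
    have h2 := h1.mul (hW x)
    refine h2.congr_deriv ?_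
    have h3 := heq x hx
    have hWx : W x = -(α * w x) := by rw [hWdef]; linarith
    rw [hWx]
    field_simp
    ring
  have hconst := constant_of_has_deriv_right_zero (f := G) (a := 0) (b := 1)
    hGcont.continuousOn
    (fun x hx => (hG x ⟨hx.1, hx.2.le⟩).hasDerivWithinAt)
  intro x hx
  have hG0 : G 0 = 0 := by simp [hGdef, hWdef]
  have hGx : G x = 0 := (hconst x hx).trans hG0
  have hWx : W x = 0 := by
    have hexp : Real.exp (x/α) ≠ 0 := (Real.exp_pos _).ne'
    have := hGx
    rw [hGdef] at this
    exact (mul_eq_zero.1 this).resolve_left hexp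
  have h3 : α * w x + W x = 0 := heq x hx
  rw [hWx] at h3
  have : α * w x = 0 := by linarith
  exact (mul_eq_zero.1 this).resolve_left hα.ne'

/-- The integration operator is of positive type on continuous functions
(Example 2.1 (b), quantitative form). -/
theorem stmt19 (α : ℝ) (hα : 0 < α) (f : ℝ → ℝ)
    (hf : ContinuousOn f (Set.Icc 0 1)) :
    ∃ u : ℝ → ℝ, ContinuousOn u (Set.Icc 0 1) ∧
      (∀ x ∈ Set.Icc (0:ℝ) 1, α * u x + ∫ ξ in Set.Ioc (0:ℝ) x, u ξ = f x) ∧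
      (∀ v : ℝ → ℝ, ContinuousOn v (Set.Icc 0 1) →
        (∀ x ∈ Set.Icc (0:ℝ) 1, α * v x + ∫ ξ in Set.Ioc (0:ℝ) x, v ξ = f x) →
        ∀ x ∈ Set.Icc (0:ℝ) 1, v x = u x) ∧
      ∀ x ∈ Set.Icc (0:ℝ) 1,
        |u x| ≤ (2 / α) * sSup ((fun y => |f y|) '' Set.Icc (0:ℝ) 1) := by
  have h01 : (0:ℝ) ≤ 1 := zero_le_one
  set g : ℝ → ℝ := Set.IccExtend h01 ((Set.Icc (0:ℝ) 1).restrict f) with hgdef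
  have hgcont : Continuous g := hf.restrict.Icc_extend'
  have hgeq : ∀ x ∈ Set.Icc (0:ℝ) 1, g x = f x := fun x hx => by
    rw [hgdef, Set.IccExtend_of_mem h01 _ hx]; rfl
  set M : ℝ := sSup ((fun y => |f y|) '' Set.Icc (0:ℝ) 1) with hMdef
  have hbdd : BddAbove ((fun y => |f y|) '' Set.Icc (0:ℝ) 1) :=
    (isCompact_Icc.image_of_continuousOn hf.abs).bddAbove
  have hMle : ∀ y ∈ Set.Icc (0:ℝ) 1, |f y| ≤ M := fun y hy =>
    le_csSup hbdd ⟨y, hy, rfl⟩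
  have hgM : ∀ y ∈ Set.Icc (0:ℝ) 1, |g y| ≤ M := fun y hy => by
    rw [hgeq y hy]; exact hMle y hy
  obtain ⟨u, hucont, hueq, hub⟩ := stmt19_aux_exists α hα g hgcont M hgM
  have hint_eq : ∀ (h : ℝ → ℝ), ∀ x ∈ Set.Icc (0:ℝ) 1,
      (∫ ξ in Set.Ioc (0:ℝ) x, h ξ) = ∫ t in (0:ℝ)..x, h t := fun h x hx =>
    (intervalIntegral.integral_of_le hx.1).symm
  refine ⟨u, hucont.continuousOn, fun x hx => ?_, fun v hv hveq x hx => ?_, hub⟩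
  · rw [hint_eq u x hx, hueq x, hgeq x hx]
  · -- uniqueness
    set v' : ℝ → ℝ := Set.IccExtend h01 ((Set.Icc (0:ℝ) 1).restrict v) with hv'def
    have hv'cont : Continuous v' := hv.restrict.Icc_extend'
    have hv'eq : ∀ y ∈ Set.Icc (0:ℝ) 1, v' y = v y := fun y hy => by
      rw [hv'def, Set.IccExtend_of_mem h01 _ hy]; rfl
    set w : ℝ → ℝ := fun y => v' y - u y with hwdef
    have hwcont : Continuous w := hv'cont.sub hucont
    have hweq : ∀ y ∈ Set.Icc (0:ℝ) 1, α * w y + ∫ t in (0:ℝ)..y, w t = 0 := by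
      intro y hy
      have hsub : (∫ t in (0:ℝ)..y, w t) =
          (∫ t in (0:ℝ)..y, v' t) - ∫ t in (0:ℝ)..y, u t :=
        intervalIntegral.integral_sub (hv'cont.intervalIntegrable 0 y)
          (hucont.intervalIntegrable 0 y)
      have hvv' : (∫ t in (0:ℝ)..y, v' t) = ∫ ξ in Set.Ioc (0:ℝ) y, v ξ := by
        rw [intervalIntegral.integral_of_le hy.1]
        apply setIntegral_congr_fun measurableSet_Ioc
        intro t ht
        exact hv'eq t ⟨ht.1.le, ht.2.trans hy.2⟩
      have hwy : w y = v y - u y := by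
        rw [hwdef]; simp only; rw [hv'eq y hy]
      have h3 : (∫ t in (0:ℝ)..y, u t) = f y - α * u y := by
        rw [← hgeq y hy]; linarith [hueq y]
      rw [hsub, hvv', hwy, h3]
      linarith [hveq y hy]
    have := stmt19_aux_unique α hα w hwcont hweq x hx
    have h4 : v' x - u x = 0 := this
    have h5 := hv'eq x hx
    linarith
end
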